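/- arXiv:1912.04553 — 3 statements merged into one kernel-verified Lean document; each statement's English description precedes it below -/
import Mathlib

section
/- Let G ≤ Homeo+(S^1), L a G-invariant lamination system, and P an ideal polygon of L that is not a leaf. If g ∈ G is such that three distinct elements I_1, I_2, I_3 of P each have closure containing a fixed point of g, then g fixes every vertex of P (P is g-fixed). -/
open Set Topology

noncomputable section

/-- Stereographic projection from `1 ∈ S¹`. -/
def sproj (z : Circle) : ℝ := (z : ℂ).im / ((z : ℂ).re - 1)

/-- `(a,b,c)` is a positively oriented triple on `S¹`. -/
def posOri (a b c : Circle) : Prop :=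
  a ≠ b ∧ b ≠ c ∧ c ≠ a ∧ sproj (a⁻¹ * b) < sproj (a⁻¹ * c)

/-- The nondegenerate open interval `(u,v)` on `S¹`. -/
def oInt (u v : Circle) : Set Circle := {p | posOri u p v}

/-- `I` is a nondegenerate open interval on `S¹`. -/
def IsND (I : Set Circle) : Prop := ∃ u v : Circle, u ≠ v ∧ I = oInt u v

/-- The dual interval `I* = (v,u)` of `I = (u,v)`, i.e. the interior of the complement. -/
def dual (I : Set Circle) : Set Circle := interior Iᶜ

/-- The leaf `{I, I*}` lies on `J`. -/
def LiesOn (I J : Set Circle) : Prop := I ⊆ J ∨ dual I ⊆ J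

/-- A lamination system on `S¹`. -/
structure LamSys (L : Set (Set Circle)) : Prop where
  nonempty : L.Nonempty
  nd : ∀ I ∈ L, IsND I
  dualMem : ∀ I ∈ L, dual I ∈ L
  unlinked : ∀ I ∈ L, ∀ J ∈ L, LiesOn I J ∨ LiesOn I (dual J)
  chainUnion : ∀ f : ℕ → Set Circle, (∀ n, f n ∈ L) → (∀ n, f n ⊆ f (n + 1)) →
    IsND (⋃ n, f n) → (⋃ n, f n) ∈ L

/-- The leaf associated to an interval. -/
def leafOf (I : Set Circle) : Set (Set Circle) := {I, dual I}

/-- `liminf` of a sequence of sets. -/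
def sLiminf (f : ℕ → Set Circle) : Set Circle := ⋃ k, ⋂ n, ⋂ (_ : k ≤ n), f n

/-- `limsup` of a sequence of sets. -/
def sLimsup (f : ℕ → Set Circle) : Set Circle := ⋂ k, ⋃ n, ⋃ (_ : k ≤ n), f n

/-- The sequence of intervals converges to `J`. -/
def ConvTo (f : ℕ → Set Circle) (J : Set Circle) : Prop :=
  J ⊆ sLiminf f ∧ sLiminf f ⊆ sLimsup f ∧ sLimsup f ⊆ closure J

/-- A gap of a lamination system. -/
def IsGap (L G : Set (Set Circle)) : Prop :=
  G ⊆ L ∧ (∀ I ∈ G, ∀ J ∈ G, I ≠ J → I ∩ J = ∅) ∧ ∀ I ∈ L, ∃ J ∈ G, LiesOn I J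

/-- A gap which is a leaf. -/
def IsLeafGap (G : Set (Set Circle)) : Prop := ∃ I, G = leafOf I

/-- The vertex (endpoint) set of a gap. -/
def vset (G : Set (Set Circle)) : Set Circle := (⋃₀ G)ᶜ

/-- A very full lamination system: every gap is an ideal polygon (finite vertex set). -/
def VeryFull (L : Set (Set Circle)) : Prop := ∀ G, IsGap L G → (vset G).Finite

/-- The set of endpoints of leaves of `L`. -/
def ELset (L : Set (Set Circle)) : Set Circle := ⋃ I ∈ L, frontier I

/-- A rainbow at `p`. -/
def Rainbow (L : Set (Set Circle)) (p : Circle) (f : ℕ → Set Circle) : Prop :=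
  (∀ n, f n ∈ L) ∧ (∀ n, f (n + 1) ⊆ f n) ∧ (⋂ n, f n) = {p}

/-- An `I`-side sequence of leaves. -/
def SideSeq (L : Set (Set Circle)) (I : Set Circle) (f : ℕ → Set Circle) : Prop :=
  (∀ n, f n ∈ L) ∧ (∀ n, I ∉ leafOf (f n)) ∧ (∀ n, LiesOn (f n) I) ∧ ConvTo f I

/-- `I` is isolated in `L`. -/
def IsolatedInt (L : Set (Set Circle)) (I : Set Circle) : Prop := ∀ f, ¬ SideSeq L I f

/-- `C_p^I`. -/
def Cset (L : Set (Set Circle)) (p : Circle) (I : Set Circle) : Set (Set Circle) :=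
  {J ∈ L | p ∈ J ∧ J ⊆ I}

/-- The group of self-homeomorphisms of the circle (composition as multiplication). -/
instance : Group (Circle ≃ₜ Circle) where
  mul g h := h.trans g
  one := Homeomorph.refl _
  inv := Homeomorph.symm
  mul_assoc _ _ _ := Homeomorph.ext fun _ => rfl
  one_mul _ := Homeomorph.ext fun _ => rfl
  mul_one _ := Homeomorph.ext fun _ => rfl
  inv_mul_cancel g := Homeomorph.ext fun x => g.symm_apply_apply x

/-- An orientation-preserving homeomorphism of the circle. -/
def OrientPres (g : Circle ≃ₜ Circle) : Prop :=
  ∀ a b c, posOri a b c → posOri (g a) (g b) (g c)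

/-- `L` is invariant under a subgroup `G` of homeomorphisms. -/
def GInv (G : Subgroup (Circle ≃ₜ Circle)) (L : Set (Set Circle)) : Prop :=
  ∀ g ∈ G, ∀ I ∈ L, (⇑g) '' I ∈ L

/-- The image of a gap under a homeomorphism. -/
def gapIm (g : Circle ≃ₜ Circle) (P : Set (Set Circle)) : Set (Set Circle) :=
  (fun I => (⇑g) '' I) '' P

/-- `v_G(P)`, the union of the vertex sets of the `G`-orbit of the gap `P`. -/
def vOrb (G : Subgroup (Circle ≃ₜ Circle)) (P : Set (Set Circle)) : Set Circle :=
  ⋃ g ∈ G, vset (gapIm g P)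

/-- A loose lamination system: distinct non-leaf gaps have disjoint vertex sets. -/
def Loose (L : Set (Set Circle)) : Prop :=
  ∀ P Q, IsGap L P → IsGap L Q → ¬ IsLeafGap P → ¬ IsLeafGap Q → P ≠ Q →
    vset P ∩ vset Q = ∅

/-- A pseudo-fibered triple `(L₁, L₂, G)`. -/
structure PFib (L₁ L₂ : Set (Set Circle)) (G : Subgroup (Circle ≃ₜ Circle)) : Prop where
  orient : ∀ g ∈ G, OrientPres g
  fg : G.FG
  lam₁ : LamSys L₁
  lam₂ : LamSys L₂
  inv₁ : GInv G L₁
  inv₂ : GInv G L₂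
  veryFull₁ : VeryFull L₁
  veryFull₂ : VeryFull L₂
  loose₁ : Loose L₁
  loose₂ : Loose L₂
  disjEnds : ELset L₁ ∩ ELset L₂ = ∅

end
noncomputable section Aux

open Real

namespace S14

noncomputable def psi (z : Circle) : ℝ :=
  if 0 < Complex.arg z then Complex.arg z else Complex.arg z + 2 * π

lemma exp_psi (z : Circle) : Circle.exp (psi z) = z := by
  unfold psi
  split_ifs
  · exact Circle.exp_arg z
  · rw [Circle.exp_add_two_pi]; exact Circle.exp_arg z

lemma psi_inj : Function.Injective psi := fun z w h => by
  rw [← exp_psi z, ← exp_psi w, h]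

lemma arg_circle_one : Complex.arg ((1 : Circle) : ℂ) = 0 := by
  simp

lemma psi_one : psi 1 = 2 * π := by
  unfold psi
  rw [arg_circle_one]
  simp

lemma psi_mem {z : Circle} (hz : z ≠ 1) : psi z ∈ Set.Ioo 0 (2 * π) := by
  have harg : Complex.arg z ≠ 0 := by
    intro h
    refine hz (Circle.injective_arg ?_)
    show Complex.arg ((z : Circle) : ℂ) = Complex.arg ((1 : Circle) : ℂ)
    rw [h, arg_circle_one]
  have h1 : -π < Complex.arg z := Complex.neg_pi_lt_arg _
  have h2 : Complex.arg z ≤ π := Complex.arg_le_pi _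
  have hpi := Real.pi_pos
  unfold psi
  split_ifs with h
  · constructor <;> linarith
  · push_neg at h
    have : Complex.arg z < 0 := lt_of_le_of_ne h harg
    constructor <;> linarith

lemma psi_exp {t : ℝ} (ht : t ∈ Set.Ioo 0 (2 * π)) : psi (Circle.exp t) = t := by
  obtain ⟨ht0, ht2⟩ := ht
  have hpi := Real.pi_pos
  rcases le_or_gt t π with h | h
  · have : Complex.arg (Circle.exp t) = t := Circle.arg_exp (by linarith) h
    unfold psi
    rw [this]
    simp [ht0]
  · have he : Circle.exp t = Circle.exp (t - 2 * π) := (Circle.exp_sub_two_pi t).symm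
    have : Complex.arg (Circle.exp t) = t - 2 * π := by
      rw [he]; exact Circle.arg_exp (by linarith) (by linarith)
    unfold psi
    rw [this]
    have : ¬ (0 < t - 2 * π) := by linarith
    simp only [this, if_false]
    ring

lemma exp_ne_one {t : ℝ} (ht : t ∈ Set.Ioo 0 (2 * π)) : Circle.exp t ≠ 1 := by
  intro h
  have := psi_exp ht
  rw [h, psi_one] at this
  exact absurd this.symm (ne_of_lt ht.2)

lemma circle_re_eq_one {z : Circle} (h : (z : ℂ).re = 1) : z = 1 := by
  have habs : ‖(z : ℂ)‖ = 1 := Circle.norm_coe z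
  have h2 : (z : ℂ).re * (z : ℂ).re + (z : ℂ).im * (z : ℂ).im = 1 := by
    have := Complex.sq_norm (z : ℂ)
    rw [habs] at this
    simpa [Complex.normSq_apply, sq] using this.symm
  have him : (z : ℂ).im = 0 := by nlinarith
  have hc : (z : ℂ) = 1 := by
    apply Complex.ext <;> simp [h, him]
  exact Subtype.ext (by simpa using hc)

lemma sproj_exp {t : ℝ} (ht : t ∈ Set.Ioo 0 (2 * π)) :
    sproj (Circle.exp t) = Real.tan (t / 2 - π / 2) := by
  obtain ⟨ht0, ht2⟩ := ht
  have hpi := Real.pi_pos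
  have hs : Real.sin (t / 2) > 0 := Real.sin_pos_of_pos_of_lt_pi (by linarith) (by linarith)
  have hre : ((Circle.exp t : Circle) : ℂ).re = Real.cos t := by
    rw [Circle.coe_exp]
    exact Complex.exp_ofReal_mul_I_re t
  have him : ((Circle.exp t : Circle) : ℂ).im = Real.sin t := by
    rw [Circle.coe_exp]
    exact Complex.exp_ofReal_mul_I_im t
  have hsin : Real.sin t = 2 * Real.sin (t / 2) * Real.cos (t / 2) := by
    have := Real.sin_two_mul (t / 2)
    rw [show 2 * (t / 2) = t by ring] at this
    linarith
  have hcos : Real.cos t = 1 - 2 * Real.sin (t / 2) ^ 2 := by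
    have h1 := Real.cos_two_mul' (t / 2)
    rw [show 2 * (t / 2) = t by ring] at h1
    nlinarith [Real.sin_sq_add_cos_sq (t / 2)]
  rw [sproj, hre, him, Real.tan_eq_sin_div_cos, Real.sin_sub_pi_div_two,
    Real.cos_sub_pi_div_two, hsin, hcos]
  have h2 : Real.sin (t / 2) ≠ 0 := ne_of_gt hs
  field_simp
  ring

lemma sproj_lt_iff {z w : Circle} (hz : z ≠ 1) (hw : w ≠ 1) :
    sproj z < sproj w ↔ psi z < psi w := by
  have hmz := psi_mem hz
  have hmw := psi_mem hw
  have hpi := Real.pi_pos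
  have ez : sproj z = Real.tan (psi z / 2 - π / 2) := by
    rw [← sproj_exp hmz, exp_psi]
  have ew : sproj w = Real.tan (psi w / 2 - π / 2) := by
    rw [← sproj_exp hmw, exp_psi]
  rw [ez, ew]
  have m1 : psi z / 2 - π / 2 ∈ Set.Ioo (-(π / 2)) (π / 2) := by
    constructor <;> [linarith [hmz.1]; linarith [hmz.2]]
  have m2 : psi w / 2 - π / 2 ∈ Set.Ioo (-(π / 2)) (π / 2) := by
    constructor <;> [linarith [hmw.1]; linarith [hmw.2]]
  constructor
  · intro h
    by_contra hc
    push_neg at hc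
    rcases eq_or_lt_of_le hc with he | hlt
    · rw [he] at h; exact lt_irrefl _ h
    · exact absurd (Real.strictMonoOn_tan m2 m1 (by linarith)) (by linarith)
  · intro h
    exact Real.strictMonoOn_tan m1 m2 (by linarith)


/-! ### Chart machinery -/

noncomputable def cc (x p : Circle) : ℝ := psi (x⁻¹ * p)

noncomputable def dd (s t : ℝ) : ℝ := if s < t then t - s else t - s + 2 * π

lemma inv_mul_ne_one {x p : Circle} (h : p ≠ x) : x⁻¹ * p ≠ 1 := by
  intro hc
  exact h (inv_mul_eq_one.mp hc).symm

lemma cc_mem {x p : Circle} (h : p ≠ x) : cc x p ∈ Set.Ioo 0 (2 * π) :=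
  psi_mem (inv_mul_ne_one h)

lemma cc_inj {x p q : Circle} (h : cc x p = cc x q) : p = q := by
  have := psi_inj h
  exact mul_left_cancel this

lemma exp_cc (x p : Circle) : x * Circle.exp (cc x p) = p := by
  rw [cc, exp_psi]
  group

lemma cc_exp {x : Circle} {t : ℝ} (ht : t ∈ Set.Ioo 0 (2 * π)) :
    cc x (x * Circle.exp t) = t := by
  rw [cc, show x⁻¹ * (x * Circle.exp t) = Circle.exp t by group]
  exact psi_exp ht

lemma mul_exp_ne {x : Circle} {t : ℝ} (ht : t ∈ Set.Ioo 0 (2 * π)) :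
    x * Circle.exp t ≠ x := by
  intro h
  exact exp_ne_one ht (mul_left_cancel (h.trans (mul_one x).symm))

lemma psi_inv {z : Circle} (hz : z ≠ 1) : psi z⁻¹ = 2 * π - psi z := by
  have hm := psi_mem hz
  have h1 : z⁻¹ = Circle.exp (2 * π - psi z) := by
    rw [show 2 * π - psi z = -(psi z) + 2 * π by ring, Circle.exp_add_two_pi,
      Circle.exp_neg, exp_psi]
  rw [h1]
  exact psi_exp ⟨by linarith [hm.2], by linarith [hm.1]⟩

lemma psi_sub {z w : Circle} (hz : z ≠ 1) (hw : w ≠ 1) (hzw : z ≠ w) :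
    psi (z⁻¹ * w) = dd (psi z) (psi w) := by
  have hmz := psi_mem hz
  have hmw := psi_mem hw
  have hne : psi z ≠ psi w := fun h => hzw (psi_inj h)
  have h1 : z⁻¹ * w = Circle.exp (psi w - psi z) := by
    rw [Circle.exp_sub, exp_psi, exp_psi, div_eq_mul_inv, mul_comm]
  rw [h1, dd]
  split_ifs with h
  · refine psi_exp ⟨?_, ?_⟩ <;> linarith [hmw.2, hmz.1, hmw.1, hmz.2]
  · have hlt : psi w < psi z := lt_of_le_of_ne (not_lt.mp h) (Ne.symm hne)
    rw [show Circle.exp (psi w - psi z) = Circle.exp (psi w - psi z + 2 * π) from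
      (Circle.exp_add_two_pi _).symm]
    refine psi_exp ⟨?_, ?_⟩ <;> linarith [hmw.2, hmz.1, hmw.1, hmz.2]

lemma cc_sub {x u p : Circle} (hu : u ≠ x) (hp : p ≠ x) (hup : u ≠ p) :
    psi (u⁻¹ * p) = dd (cc x u) (cc x p) := by
  have h1 : u⁻¹ * p = (x⁻¹ * u)⁻¹ * (x⁻¹ * p) := by group
  rw [h1]
  exact psi_sub (inv_mul_ne_one hu) (inv_mul_ne_one hp)
    (fun h => hup (mul_left_cancel h))

lemma posOri_iff {a b c : Circle} :
    posOri a b c ↔ a ≠ b ∧ b ≠ c ∧ c ≠ a ∧ psi (a⁻¹ * b) < psi (a⁻¹ * c) := by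
  unfold posOri
  constructor
  · rintro ⟨h1, h2, h3, h4⟩
    refine ⟨h1, h2, h3, ?_⟩
    rwa [sproj_lt_iff (inv_mul_ne_one (Ne.symm h1)) (inv_mul_ne_one h3)] at h4
  · rintro ⟨h1, h2, h3, h4⟩
    refine ⟨h1, h2, h3, ?_⟩
    rwa [sproj_lt_iff (inv_mul_ne_one (Ne.symm h1)) (inv_mul_ne_one h3)]

lemma posOri_base {x p q : Circle} (hp : p ≠ x) (hq : q ≠ x) (hpq : p ≠ q) :
    posOri x p q ↔ cc x p < cc x q := by
  rw [posOri_iff]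
  exact ⟨fun h => h.2.2.2, fun h => ⟨Ne.symm hp, hpq, hq, h⟩⟩

lemma posOri_dd {x u p v : Circle} (hu : u ≠ x) (hp : p ≠ x) (hv : v ≠ x)
    (h1 : u ≠ p) (h2 : p ≠ v) (h3 : v ≠ u) :
    posOri u p v ↔ dd (cc x u) (cc x p) < dd (cc x u) (cc x v) := by
  rw [posOri_iff, cc_sub hu hp h1, cc_sub hu hv (Ne.symm h3)]
  exact ⟨fun h => h.2.2.2, fun h => ⟨h1, h2, h3, h⟩⟩

lemma posOri_wrap_iff {x a b : Circle} (ha : a ≠ x) (hb : b ≠ x) (hab : a ≠ b) :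
    posOri a x b ↔ cc x b < cc x a := by
  have hma := cc_mem ha
  have hmb := cc_mem hb
  have hne : cc x a ≠ cc x b := fun h => hab (cc_inj h)
  have h1 : psi (a⁻¹ * x) = 2 * π - cc x a := by
    rw [show a⁻¹ * x = (x⁻¹ * a)⁻¹ by group]
    exact psi_inv (inv_mul_ne_one ha)
  rw [posOri_iff, h1, cc_sub ha hb hab, dd]
  split_ifs with h
  · constructor
    · rintro ⟨-, -, -, hlt⟩; linarith [hmb.2]
    · intro hlt; linarith
  · push_neg at h
    constructor
    · intro; exact lt_of_le_of_ne h (Ne.symm hne)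
    · intro hlt
      exact ⟨ha, fun hh => hb hh.symm, Ne.symm hab, by linarith [hmb.1]⟩


/-! ### Arc membership forms -/

lemma oInt_self (u : Circle) : oInt u u = ∅ := by
  ext p
  simp only [oInt, Set.mem_setOf_eq, Set.mem_empty_iff_false, iff_false]
  intro h
  exact h.2.2.1 rfl

lemma not_mem_left (u v : Circle) : u ∉ oInt u v := fun h => h.1 rfl

lemma not_mem_right (u v : Circle) : v ∉ oInt u v := fun h => h.2.1 rfl

lemma mem_oInt {u v p : Circle} : p ∈ oInt u v ↔ posOri u p v := Iff.rfl

lemma mem_low {x b p : Circle} (hb : b ≠ x) :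
    p ∈ oInt x b ↔ p ≠ x ∧ p ≠ b ∧ cc x p < cc x b := by
  rw [mem_oInt, posOri_iff]
  exact ⟨fun ⟨h1, h2, _, h4⟩ => ⟨Ne.symm h1, h2, h4⟩,
    fun ⟨h1, h2, h3⟩ => ⟨Ne.symm h1, h2, hb, h3⟩⟩

lemma psi_inv_base {x a : Circle} (ha : a ≠ x) : psi (a⁻¹ * x) = 2 * π - cc x a := by
  rw [show a⁻¹ * x = (x⁻¹ * a)⁻¹ by group]
  exact psi_inv (inv_mul_ne_one ha)

lemma mem_high {x a p : Circle} (ha : a ≠ x) :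
    p ∈ oInt a x ↔ p ≠ x ∧ p ≠ a ∧ cc x a < cc x p := by
  have hma := cc_mem ha
  rw [mem_oInt, posOri_iff, psi_inv_base ha]
  constructor
  · rintro ⟨h1, h2, -, h4⟩
    have hmp := cc_mem h2
    rw [cc_sub ha h2 h1] at h4
    refine ⟨h2, Ne.symm h1, ?_⟩
    rw [dd] at h4
    split_ifs at h4 with h
    · exact h
    · linarith [hmp.1]
  · rintro ⟨h1, h2, h3⟩
    have hmp := cc_mem h1
    refine ⟨Ne.symm h2, h1, Ne.symm ha, ?_⟩
    rw [cc_sub ha h1 (Ne.symm h2), dd, if_pos h3]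
    linarith [hmp.2]

lemma mem_mid {x a b p : Circle} (ha : a ≠ x) (hb : b ≠ x) (hab : cc x a < cc x b) :
    p ∈ oInt a b ↔ p ≠ x ∧ cc x a < cc x p ∧ cc x p < cc x b := by
  have hma := cc_mem ha
  have hmb := cc_mem hb
  have hane : a ≠ b := fun h => absurd (congrArg (cc x) h) (ne_of_lt hab)
  by_cases hpx : p = x
  · constructor
    · intro h
      rw [hpx] at h
      have := (posOri_wrap_iff ha hb hane).mp h
      linarith
    · rintro ⟨h1, -, -⟩; exact absurd hpx h1
  by_cases hpa : p = a
  · subst hpa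
    simp only [not_mem_left, false_iff]
    rintro ⟨-, h1, -⟩
    exact lt_irrefl _ h1
  by_cases hpb : p = b
  · subst hpb
    simp only [not_mem_right, false_iff]
    rintro ⟨-, -, h2⟩
    exact lt_irrefl _ h2
  have hmp := cc_mem hpx
  rw [mem_oInt, posOri_dd ha hpx hb (fun h => hpa h.symm) hpb (Ne.symm hane)]
  have e2 : dd (cc x a) (cc x b) = cc x b - cc x a := by rw [dd, if_pos hab]
  rcases lt_or_ge (cc x a) (cc x p) with h | h
  · have e1 : dd (cc x a) (cc x p) = cc x p - cc x a := by rw [dd, if_pos h]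
    rw [e1, e2]
    constructor
    · intro h4; exact ⟨hpx, h, by linarith⟩
    · rintro ⟨-, -, h5⟩; linarith
  · have e1 : dd (cc x a) (cc x p) = cc x p - cc x a + 2 * π := by
      rw [dd, if_neg (not_lt.mpr h)]
    rw [e1, e2]
    constructor
    · intro h4; exfalso; linarith [hmb.2, hmp.1]
    · rintro ⟨-, h5, -⟩; linarith

lemma mem_wrap {x a b p : Circle} (ha : a ≠ x) (hb : b ≠ x) (hba : cc x b < cc x a) :
    p ∈ oInt a b ↔ p = x ∨ (p ≠ x ∧ (cc x a < cc x p ∨ cc x p < cc x b)) := by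
  have hma := cc_mem ha
  have hmb := cc_mem hb
  have hane : a ≠ b := fun h => absurd (congrArg (cc x) h) (ne_of_gt hba)
  by_cases hpx : p = x
  · constructor
    · intro h; exact Or.inl hpx
    · intro h
      rw [hpx]
      exact (posOri_wrap_iff ha hb hane).mpr hba
  by_cases hpa : p = a
  · subst hpa
    simp only [not_mem_left, false_iff]
    rintro (h | ⟨-, h1 | h2⟩)
    · exact hpx h
    · exact lt_irrefl _ h1
    · linarith
  by_cases hpb : p = b
  · subst hpb
    simp only [not_mem_right, false_iff]
    rintro (h | ⟨-, h1 | h2⟩)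
    · exact hpx h
    · linarith
    · exact lt_irrefl _ h2
  have hmp := cc_mem hpx
  rw [mem_oInt, posOri_dd ha hpx hb (fun h => hpa h.symm) hpb (Ne.symm hane)]
  have e2 : dd (cc x a) (cc x b) = cc x b - cc x a + 2 * π := by
    rw [dd, if_neg (not_lt.mpr (le_of_lt hba))]
  rcases lt_or_ge (cc x a) (cc x p) with h | h
  · have e1 : dd (cc x a) (cc x p) = cc x p - cc x a := by rw [dd, if_pos h]
    rw [e1, e2]
    constructor
    · intro h4; exact Or.inr ⟨hpx, Or.inl h⟩
    · intro h4; linarith [hmp.2, hmb.1]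
  · have h' : cc x p < cc x a := lt_of_le_of_ne h (fun hh => hpa (cc_inj hh))
    have e1 : dd (cc x a) (cc x p) = cc x p - cc x a + 2 * π := by
      rw [dd, if_neg (not_lt.mpr h)]
    rw [e1, e2]
    constructor
    · intro h4; exact Or.inr ⟨hpx, Or.inr (by linarith)⟩
    · rintro (hh | ⟨-, h1 | h2⟩)
      · exact absurd hh hpx
      · linarith
      · linarith

lemma posOri_total {u p v : Circle} (h1 : u ≠ p) (h2 : p ≠ v) (h3 : v ≠ u) :
    posOri u p v ∨ posOri v p u := by
  have hp : p ≠ u := Ne.symm h1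
  have hne : cc u p ≠ cc u v := fun h => h2 (cc_inj h)
  rcases lt_or_gt_of_ne hne with h | h
  · exact Or.inl ((posOri_base hp h3 h2).mpr h)
  · exact Or.inr ((mem_high (x := u) h3).mpr ⟨hp, h2, h⟩)

lemma posOri_asymm {u p v : Circle} (h1 : posOri u p v) (h2 : posOri v p u) : False := by
  have ha := (posOri_base (Ne.symm h1.1) h1.2.2.1 h1.2.1).mp h1
  have hb := ((mem_high (x := u) h1.2.2.1).mp h2).2.2
  linarith

lemma compl_oInt {u v : Circle} (h : u ≠ v) : (oInt u v)ᶜ = oInt v u ∪ {u, v} := by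
  ext p
  simp only [Set.mem_compl_iff, Set.mem_union, Set.mem_insert_iff, Set.mem_singleton_iff]
  constructor
  · intro hp
    by_cases hpu : p = u
    · exact Or.inr (Or.inl hpu)
    by_cases hpv : p = v
    · exact Or.inr (Or.inr hpv)
    rcases posOri_total (Ne.symm hpu) hpv (Ne.symm h) with hh | hh
    · exact absurd hh hp
    · exact Or.inl hh
  · rintro (hp | hp | hp)
    · exact fun hc => posOri_asymm hc hp
    · subst hp; exact not_mem_left _ _
    · subst hp; exact not_mem_right _ _


/-! ### Topology of arcs -/

lemma continuousOn_sproj_aux (u : Circle) :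
    ContinuousOn (fun p : Circle => sproj (u⁻¹ * p)) {p | p ≠ u} := by
  intro p hp
  apply ContinuousAt.continuousWithinAt
  have hcoe : Continuous fun q : Circle => ((u⁻¹ * q : Circle) : ℂ) :=
    continuous_subtype_val.comp (continuous_const.mul continuous_id)
  have hden : ((u⁻¹ * p : Circle) : ℂ).re - 1 ≠ 0 := by
    intro h
    have : ((u⁻¹ * p : Circle) : ℂ).re = 1 := by linarith
    have h2 : u⁻¹ * p = 1 := circle_re_eq_one this
    exact (inv_mul_ne_one hp) h2
  exact ((Complex.continuous_im.comp hcoe).continuousAt).div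
    (((Complex.continuous_re.comp hcoe).continuousAt).sub continuousAt_const) hden

lemma isOpen_oInt (u v : Circle) : IsOpen (oInt u v) := by
  by_cases huv : u = v
  · rw [huv, oInt_self]; exact isOpen_empty
  have he : oInt u v = {p | p ≠ u} ∩ (fun p : Circle => sproj (u⁻¹ * p)) ⁻¹'
      Set.Iio (sproj (u⁻¹ * v)) := by
    ext p
    simp only [Set.mem_inter_iff, Set.mem_setOf_eq, Set.mem_preimage, Set.mem_Iio, mem_oInt]
    constructor
    · intro h; exact ⟨Ne.symm h.1, h.2.2.2⟩
    · rintro ⟨h1, h2⟩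
      refine ⟨Ne.symm h1, ?_, Ne.symm huv, h2⟩
      intro hpv
      rw [hpv] at h2
      exact lt_irrefl _ h2
  rw [he]
  exact (continuousOn_sproj_aux u).isOpen_inter_preimage isOpen_compl_singleton isOpen_Iio

lemma tendsto_mul_exp (x : Circle) {t₀ : ℝ} :
    Filter.Tendsto (fun t => x * Circle.exp t) (nhds t₀) (nhds (x * Circle.exp t₀)) :=
  ((continuous_const.mul (map_continuous Circle.exp))).tendsto t₀

lemma mem_closure_left {u v : Circle} (h : u ≠ v) : u ∈ closure (oInt u v) := by
  have hvu : v ≠ u := Ne.symm h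
  have hm := cc_mem hvu
  have htend : Filter.Tendsto (fun t => u * Circle.exp t) (nhdsWithin 0 (Set.Ioi 0)) (nhds u) := by
    have := tendsto_mul_exp u (t₀ := 0)
    rw [Circle.exp_zero, mul_one] at this
    exact this.mono_left nhdsWithin_le_nhds
  refine mem_closure_of_tendsto htend ?_
  filter_upwards [Ioo_mem_nhdsGT_of_mem (Set.mem_Ico.mpr ⟨le_refl 0, hm.1⟩)] with t ht
  have ht2 : t ∈ Set.Ioo 0 (2 * π) := ⟨ht.1, lt_trans ht.2 hm.2⟩
  refine (mem_low (x := u) hvu).mpr ⟨mul_exp_ne ht2, ?_, ?_⟩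
  · intro hc
    have := cc_exp (x := u) ht2
    rw [hc] at this
    exact absurd this (ne_of_gt ht.2)
  · rw [cc_exp ht2]; exact ht.2

lemma mem_closure_right {u v : Circle} (h : u ≠ v) : v ∈ closure (oInt u v) := by
  have hvu : v ≠ u := Ne.symm h
  have hm := cc_mem hvu
  have htend : Filter.Tendsto (fun t => u * Circle.exp t)
      (nhdsWithin (cc u v) (Set.Iio (cc u v))) (nhds v) := by
    have := tendsto_mul_exp u (t₀ := cc u v)
    rw [exp_cc] at this
    exact this.mono_left nhdsWithin_le_nhds
  refine mem_closure_of_tendsto htend ?_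
  filter_upwards [Ioo_mem_nhdsLT_of_mem (Set.mem_Ioc.mpr ⟨hm.1, le_refl _⟩)] with t ht
  have ht2 : t ∈ Set.Ioo 0 (2 * π) := ⟨ht.1, lt_trans ht.2 hm.2⟩
  refine (mem_low (x := u) hvu).mpr ⟨mul_exp_ne ht2, ?_, ?_⟩
  · intro hc
    have := cc_exp (x := u) ht2
    rw [hc] at this
    exact absurd this (ne_of_gt ht.2)
  · rw [cc_exp ht2]; exact ht.2

lemma closure_oInt {u v : Circle} (h : u ≠ v) :
    closure (oInt u v) = oInt u v ∪ {u, v} := by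
  apply Set.Subset.antisymm
  · have hc : IsClosed ((oInt v u)ᶜ) := (isOpen_oInt v u).isClosed_compl
    have hsub : oInt u v ⊆ (oInt v u)ᶜ := fun p hp hq => posOri_asymm hp hq
    have := closure_minimal hsub hc
    rwa [compl_oInt (Ne.symm h), Set.pair_comm] at this
  · refine Set.union_subset subset_closure ?_
    rintro p (hp | hp)
    · rw [hp]; exact mem_closure_left h
    · rw [Set.mem_singleton_iff] at hp
      rw [hp]; exact mem_closure_right h

lemma dual_oInt {u v : Circle} (h : u ≠ v) : dual (oInt u v) = oInt v u := by
  rw [dual, interior_compl, closure_oInt h, Set.compl_union, compl_oInt h]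
  ext p
  simp only [Set.mem_inter_iff, Set.mem_union, Set.mem_compl_iff, Set.mem_insert_iff,
    Set.mem_singleton_iff]
  constructor
  · rintro ⟨hp | hp, hn⟩
    · exact hp
    · exact absurd hp hn
  · intro hp
    refine ⟨Or.inl hp, ?_⟩
    rintro (hh | hh)
    · rw [hh] at hp; exact not_mem_right _ _ hp
    · rw [hh] at hp; exact not_mem_left _ _ hp

lemma oInt_nonempty {u v : Circle} (h : u ≠ v) : (oInt u v).Nonempty := by
  have hm := cc_mem (Ne.symm h)
  have hpi := Real.pi_pos
  have ht2 : cc u v / 2 ∈ Set.Ioo 0 (2 * π) := ⟨by linarith [hm.1], by linarith [hm.2]⟩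
  refine ⟨u * Circle.exp (cc u v / 2), (mem_low (x := u) (Ne.symm h)).mpr
    ⟨mul_exp_ne ht2, ?_, ?_⟩⟩
  · intro hc
    have := cc_exp (x := u) ht2
    rw [hc] at this
    linarith [hm.1]
  · rw [cc_exp ht2]; linarith [hm.1]

lemma oInt_eq_endpoints {u v u' v' : Circle} (h : u ≠ v) (h' : u' ≠ v')
    (he : oInt u v = oInt u' v') : u = u' ∧ v = v' := by
  have hc : oInt u v ∪ {u, v} = oInt u' v' ∪ {u', v'} := by
    rw [← closure_oInt h, ← closure_oInt h', he]
  have hu : u ∈ ({u', v'} : Set Circle) := by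
    have : u ∈ oInt u' v' ∪ {u', v'} := hc ▸ Set.mem_union_right _ (Set.mem_insert u {v})
    rcases this with hh | hh
    · rw [← he] at hh; exact absurd hh (not_mem_left _ _)
    · exact hh
  have hv : v ∈ ({u', v'} : Set Circle) := by
    have : v ∈ oInt u' v' ∪ {u', v'} := hc ▸ Set.mem_union_right _
      (Set.mem_insert_of_mem _ rfl)
    rcases this with hh | hh
    · rw [← he] at hh; exact absurd hh (not_mem_right _ _)
    · exact hh
  simp only [Set.mem_insert_iff, Set.mem_singleton_iff] at hu hv
  rcases hu with hu | hu
  · rcases hv with hv | hv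
    · exact absurd (hu.trans hv.symm) h
    · exact ⟨hu, hv⟩
  · rcases hv with hv | hv
    · exfalso
      obtain ⟨p, hp⟩ := oInt_nonempty h
      have hp' : p ∈ oInt u' v' := he ▸ hp
      rw [← hv, ← hu] at hp'
      exact posOri_asymm hp hp'
    · exact absurd (hu.trans hv.symm) h

/-! ### Orientation-preserving maps -/


lemma apply_inv_apply (g : Circle ≃ₜ Circle) (x : Circle) : g (g⁻¹ x) = x :=
  g.apply_symm_apply x

lemma inv_apply_apply (g : Circle ≃ₜ Circle) (x : Circle) : g⁻¹ (g x) = x :=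
  g.symm_apply_apply x

lemma orientPres_inv {g : Circle ≃ₜ Circle} (hg : OrientPres g) : OrientPres g⁻¹ := by
  intro a b c habc
  have hab : a ≠ b := habc.1
  have hbc : b ≠ c := habc.2.1
  have hca : c ≠ a := habc.2.2.1
  have h1 : g⁻¹ a ≠ g⁻¹ b := fun h => hab (g.symm.injective h)
  have h2 : g⁻¹ b ≠ g⁻¹ c := fun h => hbc (g.symm.injective h)
  have h3 : g⁻¹ c ≠ g⁻¹ a := fun h => hca (g.symm.injective h)
  rcases posOri_total h1 h2 h3 with h | h
  · exact h
  · exfalso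
    have := hg _ _ _ h
    have e1 := apply_inv_apply g c
    have e2 := apply_inv_apply g b
    have e3 := apply_inv_apply g a
    rw [e1, e2, e3] at this
    exact posOri_asymm habc this

lemma image_oInt {g : Circle ≃ₜ Circle} (hg : OrientPres g) (u v : Circle) :
    ⇑g '' oInt u v = oInt (g u) (g v) := by
  by_cases huv : u = v
  · rw [huv, oInt_self, oInt_self, Set.image_empty]
  ext q
  constructor
  · rintro ⟨p, hp, rfl⟩
    exact hg _ _ _ hp
  · intro hq
    refine ⟨g⁻¹ q, ?_, g.apply_symm_apply q⟩
    have hqu : q ≠ g u := Ne.symm hq.1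
    have hqv : q ≠ g v := hq.2.1
    have h1 : u ≠ g⁻¹ q := fun h => hqu (by rw [h, apply_inv_apply])
    have h2 : g⁻¹ q ≠ v := fun h => hqv (by rw [← h, apply_inv_apply])
    rcases posOri_total h1 h2 (Ne.symm huv) with h | h
    · exact h
    · exfalso
      have := hg _ _ _ h
      rw [apply_inv_apply] at this
      exact posOri_asymm hq this


/-! ### Group instance helpers -/

lemma mul_apply (g h : Circle ≃ₜ Circle) (x : Circle) : (g * h) x = g (h x) := rfl

lemma one_apply (x : Circle) : (1 : Circle ≃ₜ Circle) x = x := rfl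

lemma pow_succ_apply (g : Circle ≃ₜ Circle) (n : ℕ) (x : Circle) :
    (g ^ (n + 1)) x = (g ^ n) (g x) := by
  rw [pow_succ]; rfl

lemma orientPres_mul {g h : Circle ≃ₜ Circle} (hg : OrientPres g) (hh : OrientPres h) :
    OrientPres (g * h) := by
  intro a b c habc
  have := hg _ _ _ (hh _ _ _ habc)
  simpa [mul_apply] using this

lemma orientPres_one : OrientPres (1 : Circle ≃ₜ Circle) := fun a b c h => h

lemma orientPres_pow {g : Circle ≃ₜ Circle} (hg : OrientPres g) (n : ℕ) :
    OrientPres (g ^ n) := by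
  induction n with
  | zero => rw [pow_zero]; exact orientPres_one
  | succ n ih => rw [pow_succ]; exact orientPres_mul ih hg

/-! ### Gap lemmas -/

section Gap

variable {L P : Set (Set Circle)}

lemma side_nd (hL : LamSys L) (hP : IsGap L P) {I : Set Circle} (hI : I ∈ P) : ∃ u v, u ≠ v ∧ I = oInt u v := by
  obtain ⟨u, v, huv, he⟩ := hL.nd I (hP.1 hI)
  exact ⟨u, v, huv, he⟩

lemma side_open (hL : LamSys L) (hP : IsGap L P) {I : Set Circle} (hI : I ∈ P) : IsOpen I := by
  obtain ⟨u, v, -, rfl⟩ := side_nd hL hP hI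
  exact isOpen_oInt u v

lemma side_nonempty (hL : LamSys L) (hP : IsGap L P) {I : Set Circle} (hI : I ∈ P) : I.Nonempty := by
  obtain ⟨u, v, huv, rfl⟩ := side_nd hL hP hI
  exact oInt_nonempty huv

lemma sides_eq_of_inter (hP : IsGap L P) {I J : Set Circle} (hI : I ∈ P) (hJ : J ∈ P)
    (hne : (I ∩ J).Nonempty) : I = J := by
  by_contra h
  rw [hP.2.1 I hI J hJ h] at hne
  exact Set.not_nonempty_empty hne

lemma side_eq_of_subset (hL : LamSys L) (hP : IsGap L P) {I J : Set Circle} (hI : I ∈ P) (hJ : J ∈ P)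
    (hsub : I ⊆ J) : I = J := by
  apply sides_eq_of_inter hP hI hJ
  obtain ⟨p, hp⟩ := side_nonempty hL hP hI
  exact ⟨p, hp, hsub hp⟩

lemma side_eq_of_mem_closure (hL : LamSys L) (hP : IsGap L P) {I J : Set Circle} (hI : I ∈ P) (hJ : J ∈ P)
    {z : Circle} (hz : z ∈ closure I) (hzJ : z ∈ J) : I = J := by
  have hne := _root_.mem_closure_iff.mp hz J (side_open hL hP hJ) hzJ
  exact (sides_eq_of_inter hP hJ hI hne).symm

lemma endpoint_mem_vset (hL : LamSys L) (hP : IsGap L P) {I : Set Circle} {u v : Circle} (hI : I ∈ P) (huv : u ≠ v)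
    (hIe : I = oInt u v) : u ∈ vset P ∧ v ∈ vset P := by
  constructor
  · intro hu
    obtain ⟨S, hS, huS⟩ := hu
    have : I = S := side_eq_of_mem_closure hL hP hI hS
      (by rw [hIe]; exact mem_closure_left huv) huS
    rw [← this, hIe] at huS
    exact not_mem_left _ _ huS
  · intro hv
    obtain ⟨S, hS, hvS⟩ := hv
    have : I = S := side_eq_of_mem_closure hL hP hI hS
      (by rw [hIe]; exact mem_closure_right huv) hvS
    rw [← this, hIe] at hvS
    exact not_mem_right _ _ hvS

lemma gap_finite (hL : LamSys L) (hP : IsGap L P) (hfin : (vset P).Finite) : P.Finite := by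
  have hsub : P ⊆ Set.image2 oInt (vset P) (vset P) := by
    intro I hI
    obtain ⟨u, v, huv, hIe⟩ := side_nd hL hP hI
    obtain ⟨hu, hv⟩ := endpoint_mem_vset hL hP hI huv hIe
    rw [hIe]
    exact Set.mem_image2_of_mem hu hv
  exact (hfin.image2 _ hfin).subset hsub

lemma open_infinite {U : Set Circle} (hU : IsOpen U) (hne : U.Nonempty) : U.Infinite := by
  obtain ⟨z, hz⟩ := hne
  have hpi := Real.pi_pos
  have hcont : Continuous fun t : ℝ => z * Circle.exp t :=
    continuous_const.mul (map_continuous Circle.exp)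
  have hmem : (fun t : ℝ => z * Circle.exp t) ⁻¹' U ∈ nhds (0 : ℝ) := by
    apply hcont.continuousAt.preimage_mem_nhds
    rw [Circle.exp_zero, mul_one]
    exact hU.mem_nhds hz
  obtain ⟨l, u, hlu, hsub⟩ := mem_nhds_iff_exists_Ioo_subset.mp hmem
  set b := min u (2 * π) with hb
  have h0b : (0 : ℝ) < b := lt_min hlu.2 (by linarith)
  have hIsub : Set.Ioo 0 b ⊆ (fun t : ℝ => z * Circle.exp t) ⁻¹' U := by
    intro t ht
    exact hsub ⟨lt_trans hlu.1 ht.1, lt_of_lt_of_le ht.2 (min_le_left _ _)⟩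
  have hinj : Set.InjOn (fun t : ℝ => z * Circle.exp t) (Set.Ioo 0 b) := by
    intro s hs t ht hst
    have hs2 : s ∈ Set.Ioo 0 (2 * π) := ⟨hs.1, lt_of_lt_of_le hs.2 (min_le_right _ _)⟩
    have ht2 : t ∈ Set.Ioo 0 (2 * π) := ⟨ht.1, lt_of_lt_of_le ht.2 (min_le_right _ _)⟩
    have := congrArg (cc z) hst
    rwa [cc_exp hs2, cc_exp ht2] at this
  have : ((fun t : ℝ => z * Circle.exp t) '' Set.Ioo 0 b).Infinite :=
    (Set.Ioo_infinite h0b).image hinj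
  apply Set.Infinite.mono _ this
  rintro q ⟨t, ht, rfl⟩
  exact hIsub ht

lemma vertex_mem_closure_side (hL : LamSys L) (hP : IsGap L P) (hfin : (vset P).Finite) {z : Circle} (hz : z ∈ vset P) :
    ∃ I ∈ P, z ∈ closure I := by
  have hPfin := gap_finite hL hP hfin
  have hcl : z ∈ closure (⋃₀ P) := by
    by_contra hc
    rw [← Set.mem_compl_iff, ← interior_compl] at hc
    have hUopen : IsOpen (interior (⋃₀ P)ᶜ) := isOpen_interior
    have hsub : interior (⋃₀ P)ᶜ ⊆ vset P := interior_subset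
    have := open_infinite hUopen ⟨z, hc⟩
    exact this (hfin.subset hsub)
  rw [hPfin.closure_sUnion] at hcl
  simpa using hcl

end Gap


/-! ### Chart dynamics -/

section Chart

variable {x : Circle} {g : Circle ≃ₜ Circle}

noncomputable def Hc (x : Circle) (g : Circle ≃ₜ Circle) (t : ℝ) : ℝ :=
  cc x (g (x * Circle.exp t))

lemma Hc_cc (hgx : g x = x) {p : Circle} : Hc x g (cc x p) = cc x (g p) := by
  rw [Hc, exp_cc]

lemma g_ne_x (hgx : g x = x) {p : Circle} (hp : p ≠ x) : g p ≠ x := fun h =>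
  hp (g.injective (h.trans hgx.symm))

lemma Hc_mem (hgx : g x = x) {t : ℝ} (ht : t ∈ Set.Ioo 0 (2 * π)) :
    Hc x g t ∈ Set.Ioo 0 (2 * π) :=
  cc_mem (g_ne_x hgx (mul_exp_ne ht))

lemma inv_fix (hgx : g x = x) : g⁻¹ x = x := by
  conv_lhs => rw [← hgx]
  exact inv_apply_apply g x

lemma pow_fix (hgx : g x = x) (n : ℕ) : (g ^ n) x = x := by
  induction n with
  | zero => rw [pow_zero]; rfl
  | succ n ih => rw [pow_succ, mul_apply, hgx, ih]

lemma Hc_mono (hg : OrientPres g) (hgx : g x = x) {s t : ℝ}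
    (hs : s ∈ Set.Ioo 0 (2 * π)) (ht : t ∈ Set.Ioo 0 (2 * π)) (hst : s < t) :
    Hc x g s < Hc x g t := by
  set p := x * Circle.exp s with hp
  set q := x * Circle.exp t with hq
  have hpx : p ≠ x := mul_exp_ne hs
  have hqx : q ≠ x := mul_exp_ne ht
  have hcp : cc x p = s := cc_exp hs
  have hcq : cc x q = t := cc_exp ht
  have hpq : p ≠ q := fun h => by
    rw [h, hcq] at hcp; exact absurd hcp (ne_of_gt hst)
  have h1 : posOri x p q := (posOri_base hpx hqx hpq).mpr (by rw [hcp, hcq]; exact hst)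
  have h2 := hg _ _ _ h1
  rw [hgx] at h2
  have h3 := (posOri_base (g_ne_x hgx hpx) (g_ne_x hgx hqx)
    (fun h => hpq (g.injective h))).mp h2
  show cc x (g p) < cc x (g q)
  exact h3

lemma Hc_inv_left (hgx : g x = x) {t : ℝ} (ht : t ∈ Set.Ioo 0 (2 * π)) :
    Hc x g⁻¹ (Hc x g t) = t := by
  set p := x * Circle.exp t with hp
  have hpx : p ≠ x := mul_exp_ne ht
  have h1 : Hc x g t = cc x (g p) := rfl
  rw [h1, Hc_cc (inv_fix hgx), inv_apply_apply, cc_exp ht]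

lemma Hc_inv_right (hgx : g x = x) {t : ℝ} (ht : t ∈ Set.Ioo 0 (2 * π)) :
    Hc x g (Hc x g⁻¹ t) = t := by
  have := Hc_inv_left (g := g⁻¹) (inv_fix hgx) ht
  rwa [inv_inv] at this

lemma fix_of_pow_fix (hg : OrientPres g) (hgx : g x = x) {m : ℕ} (hm : 0 < m)
    {p : Circle} (hp : p ≠ x) (hfix : (g ^ m) p = p) : g p = p := by
  by_contra hne
  have hax : ∀ n : ℕ, (g ^ n) p ≠ x := by
    intro n
    induction n with
    | zero => rw [pow_zero]; exact hp
    | succ n ih =>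
      rw [pow_succ', mul_apply]
      exact g_ne_x hgx ih
  have hsucc : ∀ n : ℕ, (g ^ (n + 1)) p = g ((g ^ n) p) := by
    intro n; rw [pow_succ', mul_apply]
  set b : ℕ → ℝ := fun n => cc x ((g ^ n) p) with hb
  have hbmem : ∀ n, b n ∈ Set.Ioo 0 (2 * π) := fun n => cc_mem (hax n)
  have hbsucc : ∀ n, b (n + 1) = Hc x g (b n) := by
    intro n
    rw [hb]
    simp only
    rw [hsucc n, ← Hc_cc hgx]
  have hb0 : b 0 = cc x p := by rw [hb]; simp only; rw [pow_zero]; rfl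
  have hb1 : b 1 = cc x (g p) := by rw [hb]; simp only; rw [pow_one]
  have hbm : b m = cc x p := by rw [hb]; simp only; rw [hfix]
  have hne01 : b 0 ≠ b 1 := by
    rw [hb0, hb1]
    intro h
    exact hne (cc_inj h.symm)
  rcases lt_or_gt_of_ne hne01 with hlt | hlt
  · have hmono : ∀ n, b n < b (n + 1) := by
      intro n
      induction n with
      | zero => exact hlt
      | succ n ih =>
        have hstep := Hc_mono hg hgx (hbmem n) (hbmem (n + 1)) ih
        rwa [← hbsucc n, ← hbsucc (n + 1)] at hstep
    have hchain : ∀ n, b 0 < b (n + 1) := by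
      intro n
      induction n with
      | zero => exact hmono 0
      | succ n ih => exact lt_trans ih (hmono (n + 1))
    obtain ⟨k, rfl⟩ := Nat.exists_eq_succ_of_ne_zero (Nat.pos_iff_ne_zero.mp hm)
    have := hchain k
    rw [hbm, hb0] at this
    exact lt_irrefl _ this
  · have hmono : ∀ n, b (n + 1) < b n := by
      intro n
      induction n with
      | zero => exact hlt
      | succ n ih =>
        have hstep := Hc_mono hg hgx (hbmem (n + 1)) (hbmem n) ih
        rwa [← hbsucc n, ← hbsucc (n + 1)] at hstep
    have hchain : ∀ n, b (n + 1) < b 0 := by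
      intro n
      induction n with
      | zero => exact hmono 0
      | succ n ih => exact lt_trans (hmono (n + 1)) ih
    obtain ⟨k, rfl⟩ := Nat.exists_eq_succ_of_ne_zero (Nat.pos_iff_ne_zero.mp hm)
    have := hchain k
    rw [hbm, hb0] at this
    exact lt_irrefl _ this

/-! ### Arc forms and separation -/

lemma arc_form {a b : Circle} (hab : a ≠ b) {x : Circle} (hx : x ∉ oInt a b) :
    (a = x ∧ b ≠ x) ∨ (b = x ∧ a ≠ x) ∨ (a ≠ x ∧ b ≠ x ∧ cc x a < cc x b) := by
  by_cases hax : a = x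
  · exact Or.inl ⟨hax, fun h => hab (hax.trans h.symm)⟩
  by_cases hbx : b = x
  · exact Or.inr (Or.inl ⟨hbx, hax⟩)
  refine Or.inr (Or.inr ⟨hax, hbx, ?_⟩)
  have hne : cc x a ≠ cc x b := fun h => hab (cc_inj h)
  rcases lt_or_gt_of_ne hne with h | h
  · exact h
  · exact absurd ((mem_wrap hax hbx h).mpr (Or.inl rfl)) hx

lemma mem_exp_low {x b : Circle} (hb : b ≠ x) {t : ℝ} (ht : 0 < t) (htb : t < cc x b) :
    x * Circle.exp t ∈ oInt x b := by
  have ht2 : t ∈ Set.Ioo 0 (2 * π) := ⟨ht, lt_trans htb (cc_mem hb).2⟩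
  refine (mem_low hb).mpr ⟨mul_exp_ne ht2, ?_, by rw [cc_exp ht2]; exact htb⟩
  intro h
  rw [← cc_exp (x := x) ht2, h] at htb
  exact lt_irrefl _ htb

lemma mem_exp_high {x a : Circle} (ha : a ≠ x) {t : ℝ} (hta : cc x a < t) (ht2 : t < 2 * π) :
    x * Circle.exp t ∈ oInt a x := by
  have htm : t ∈ Set.Ioo 0 (2 * π) := ⟨lt_trans (cc_mem ha).1 hta, ht2⟩
  refine (mem_high ha).mpr ⟨mul_exp_ne htm, ?_, by rw [cc_exp htm]; exact hta⟩
  intro h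
  rw [← cc_exp (x := x) htm, h] at hta
  exact lt_irrefl _ hta

lemma mem_exp_mid {x a b : Circle} (ha : a ≠ x) (hb : b ≠ x) (hab : cc x a < cc x b)
    {t : ℝ} (h1 : cc x a < t) (h2 : t < cc x b) : x * Circle.exp t ∈ oInt a b := by
  have htm : t ∈ Set.Ioo 0 (2 * π) := ⟨lt_trans (cc_mem ha).1 h1, lt_trans h2 (cc_mem hb).2⟩
  exact (mem_mid ha hb hab).mpr ⟨mul_exp_ne htm, by rw [cc_exp htm]; exact h1,
    by rw [cc_exp htm]; exact h2⟩

lemma sep_mid_mid {x a b a' b' : Circle} (ha : a ≠ x) (hb : b ≠ x) (ha' : a' ≠ x)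
    (hb' : b' ≠ x) (h1 : cc x a < cc x b) (h2 : cc x a' < cc x b')
    (hd : oInt a b ∩ oInt a' b' = ∅) : cc x b ≤ cc x a' ∨ cc x b' ≤ cc x a := by
  by_contra hc
  push_neg at hc
  obtain ⟨hc1, hc2⟩ := hc
  set t := (max (cc x a) (cc x a') + min (cc x b) (cc x b')) / 2 with htdef
  have hmaxmin : max (cc x a) (cc x a') < min (cc x b) (cc x b') :=
    max_lt (lt_min h1 hc2) (lt_min hc1 h2)
  have hq1 : x * Circle.exp t ∈ oInt a b :=
    mem_exp_mid ha hb h1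
      (lt_of_le_of_lt (le_max_left _ _) (by rw [htdef]; linarith))
      (lt_of_lt_of_le (by rw [htdef]; linarith) (min_le_left _ _))
  have hq2 : x * Circle.exp t ∈ oInt a' b' :=
    mem_exp_mid ha' hb' h2
      (lt_of_le_of_lt (le_max_right _ _) (by rw [htdef]; linarith))
      (lt_of_lt_of_le (by rw [htdef]; linarith) (min_le_right _ _))
  have : x * Circle.exp t ∈ oInt a b ∩ oInt a' b' := ⟨hq1, hq2⟩
  rw [hd] at this
  exact this

lemma sep_low_mid {x b a' b' : Circle} (hb : b ≠ x) (ha' : a' ≠ x) (hb' : b' ≠ x)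
    (h2 : cc x a' < cc x b') (hd : oInt x b ∩ oInt a' b' = ∅) : cc x b ≤ cc x a' := by
  by_contra hc
  push_neg at hc
  set t := (cc x a' + min (cc x b) (cc x b')) / 2 with htdef
  have hmin : cc x a' < min (cc x b) (cc x b') := lt_min hc h2
  have hq1 : x * Circle.exp t ∈ oInt x b :=
    mem_exp_low hb (by rw [htdef]; linarith [(cc_mem ha').1])
      (lt_of_lt_of_le (by rw [htdef]; linarith) (min_le_left _ _))
  have hq2 : x * Circle.exp t ∈ oInt a' b' :=
    mem_exp_mid ha' hb' h2 (by rw [htdef]; linarith)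
      (lt_of_lt_of_le (by rw [htdef]; linarith) (min_le_right _ _))
  have : x * Circle.exp t ∈ oInt x b ∩ oInt a' b' := ⟨hq1, hq2⟩
  rw [hd] at this
  exact this

lemma sep_high_mid {x a a' b' : Circle} (ha : a ≠ x) (ha' : a' ≠ x) (hb' : b' ≠ x)
    (h2 : cc x a' < cc x b') (hd : oInt a x ∩ oInt a' b' = ∅) : cc x b' ≤ cc x a := by
  by_contra hc
  push_neg at hc
  set t := (max (cc x a) (cc x a') + cc x b') / 2 with htdef
  have hmax : max (cc x a) (cc x a') < cc x b' := max_lt hc h2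
  have hq1 : x * Circle.exp t ∈ oInt a x :=
    mem_exp_high ha (lt_of_le_of_lt (le_max_left _ _) (by rw [htdef]; linarith))
      (by rw [htdef]; linarith [(cc_mem hb').2])
  have hq2 : x * Circle.exp t ∈ oInt a' b' :=
    mem_exp_mid ha' hb' h2 (lt_of_le_of_lt (le_max_right _ _) (by rw [htdef]; linarith))
      (by rw [htdef]; linarith)
  have : x * Circle.exp t ∈ oInt a x ∩ oInt a' b' := ⟨hq1, hq2⟩
  rw [hd] at this
  exact this

lemma inter_low_low {x b b' : Circle} (hb : b ≠ x) (hb' : b' ≠ x) :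
    (oInt x b ∩ oInt x b').Nonempty := by
  set t := min (cc x b) (cc x b') / 2 with htdef
  have h1 := (cc_mem hb).1
  have h2 := (cc_mem hb').1
  have hmin : 0 < min (cc x b) (cc x b') := lt_min h1 h2
  refine ⟨x * Circle.exp t, mem_exp_low hb (by rw [htdef]; linarith) ?_,
    mem_exp_low hb' (by rw [htdef]; linarith) ?_⟩
  · exact lt_of_lt_of_le (by rw [htdef]; linarith) (min_le_left _ _)
  · exact lt_of_lt_of_le (by rw [htdef]; linarith) (min_le_right _ _)

lemma inter_high_high {x a a' : Circle} (ha : a ≠ x) (ha' : a' ≠ x) :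
    (oInt a x ∩ oInt a' x).Nonempty := by
  set t := (max (cc x a) (cc x a') + 2 * π) / 2 with htdef
  have h1 := (cc_mem ha).2
  have h2 := (cc_mem ha').2
  have hmax : max (cc x a) (cc x a') < 2 * π := max_lt h1 h2
  refine ⟨x * Circle.exp t,
    mem_exp_high ha (lt_of_le_of_lt (le_max_left _ _) (by rw [htdef]; linarith))
      (by rw [htdef]; linarith),
    mem_exp_high ha' (lt_of_le_of_lt (le_max_right _ _) (by rw [htdef]; linarith))
      (by rw [htdef]; linarith)⟩

lemma cc_closure_mid {x a b : Circle} (hab : a ≠ b) (ha : a ≠ x) (hb : b ≠ x)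
    (hlt : cc x a < cc x b) {z : Circle} (hz : z ∈ closure (oInt a b)) :
    z ≠ x ∧ cc x a ≤ cc x z ∧ cc x z ≤ cc x b := by
  rw [closure_oInt hab] at hz
  rcases hz with hz | hz | hz
  · obtain ⟨h1, h2, h3⟩ := (mem_mid ha hb hlt).mp hz
    exact ⟨h1, le_of_lt h2, le_of_lt h3⟩
  · rw [hz]; exact ⟨ha, le_refl _, le_of_lt hlt⟩
  · rw [Set.mem_singleton_iff] at hz
    rw [hz]; exact ⟨hb, le_of_lt hlt, le_refl _⟩

end Chart


/-! ### Pattern contradictions and more separation helpers -/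

section Patterns

variable {g : Circle ≃ₜ Circle} {x : Circle}

lemma patternA (hg : OrientPres g) (hgx : g x = x)
    {lo α β t : ℝ} (hlo : lo ∈ Set.Ioo 0 (2 * π)) (hα : lo ≤ α) (hβ : β ≤ Hc x g lo)
    (hαβ : α < β) (ht1 : α ≤ t) (ht2 : t ≤ β) (hfix : Hc x g t = t) : False := by
  have hHlo := Hc_mem hgx hlo
  have htm : t ∈ Set.Ioo 0 (2 * π) :=
    ⟨lt_of_lt_of_le hlo.1 (le_trans hα ht1), lt_of_le_of_lt (le_trans ht2 hβ) hHlo.2⟩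
  rcases eq_or_lt_of_le (le_trans hα ht1 : lo ≤ t) with he | hlt2
  · rw [← he] at hfix; linarith
  · have := Hc_mono hg hgx hlo htm hlt2
    rw [hfix] at this
    linarith

lemma patternB (hg : OrientPres g) (hgx : g x = x)
    {hi α β t : ℝ} (hhi : hi ∈ Set.Ioo 0 (2 * π)) (hα : Hc x g hi ≤ α) (hβ : β ≤ hi)
    (hαβ : α < β) (ht1 : α ≤ t) (ht2 : t ≤ β) (hfix : Hc x g t = t) : False := by
  have hHhi := Hc_mem hgx hhi
  have htm : t ∈ Set.Ioo 0 (2 * π) :=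
    ⟨lt_of_lt_of_le hHhi.1 (le_trans hα ht1), lt_of_le_of_lt (le_trans ht2 hβ) hhi.2⟩
  rcases eq_or_lt_of_le (le_trans ht2 hβ : t ≤ hi) with he | hlt2
  · rw [he] at hfix; linarith
  · have := Hc_mono hg hgx htm hhi hlt2
    rw [hfix] at this
    linarith

lemma sep_mid_wrap {u v a b : Circle} (hu : u ≠ x) (hv : v ≠ x) (ha : a ≠ x) (hb : b ≠ x)
    (hw : cc x v < cc x u) (hm : cc x a < cc x b) (hd : oInt a b ∩ oInt u v = ∅) :
    cc x v ≤ cc x a ∧ cc x b ≤ cc x u := by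
  constructor
  · by_contra hc
    push_neg at hc
    set t := (cc x a + min (cc x b) (cc x v)) / 2 with htdef
    have hmin : cc x a < min (cc x b) (cc x v) := lt_min hm hc
    have htT : t ∈ Set.Ioo 0 (2 * π) := by
      constructor
      · rw [htdef]; linarith [(cc_mem ha).1]
      · rw [htdef]; linarith [(cc_mem hb).2, (cc_mem hv).2, min_le_left (cc x b) (cc x v)]
    have hq1 : x * Circle.exp t ∈ oInt a b :=
      mem_exp_mid ha hb hm (by rw [htdef]; linarith)
        (lt_of_lt_of_le (by rw [htdef]; linarith) (min_le_left _ _))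
    have hq2 : x * Circle.exp t ∈ oInt u v := by
      refine (mem_wrap hu hv hw).mpr (Or.inr ⟨mul_exp_ne htT, Or.inr ?_⟩)
      rw [cc_exp htT]
      exact lt_of_lt_of_le (by rw [htdef]; linarith) (min_le_right _ _)
    have : x * Circle.exp t ∈ oInt a b ∩ oInt u v := ⟨hq1, hq2⟩
    rw [hd] at this; exact this
  · by_contra hc
    push_neg at hc
    set t := (max (cc x a) (cc x u) + cc x b) / 2 with htdef
    have hmax : max (cc x a) (cc x u) < cc x b := max_lt hm hc
    have htT : t ∈ Set.Ioo 0 (2 * π) := by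
      constructor
      · rw [htdef]; linarith [(cc_mem ha).1, le_max_left (cc x a) (cc x u)]
      · rw [htdef]; linarith [(cc_mem hb).2]
    have hq1 : x * Circle.exp t ∈ oInt a b :=
      mem_exp_mid ha hb hm
        (lt_of_le_of_lt (le_max_left _ _) (by rw [htdef]; linarith))
        (by rw [htdef]; linarith)
    have hq2 : x * Circle.exp t ∈ oInt u v := by
      refine (mem_wrap hu hv hw).mpr (Or.inr ⟨mul_exp_ne htT, Or.inl ?_⟩)
      rw [cc_exp htT]
      exact lt_of_le_of_lt (le_max_right _ _) (by rw [htdef]; linarith)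
    have : x * Circle.exp t ∈ oInt a b ∩ oInt u v := ⟨hq1, hq2⟩
    rw [hd] at this; exact this

lemma inter_low_wrap {c u v : Circle} (hc : c ≠ x) (hu : u ≠ x) (hv : v ≠ x)
    (hw : cc x v < cc x u) : (oInt x c ∩ oInt u v).Nonempty := by
  set t := min (cc x c) (cc x v) / 2 with htdef
  have hmin : 0 < min (cc x c) (cc x v) := lt_min (cc_mem hc).1 (cc_mem hv).1
  have htT : t ∈ Set.Ioo 0 (2 * π) := by
    constructor
    · rw [htdef]; linarith
    · rw [htdef]; linarith [(cc_mem hv).2, min_le_right (cc x c) (cc x v)]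
  refine ⟨x * Circle.exp t, mem_exp_low hc (by rw [htdef]; linarith)
    (lt_of_lt_of_le (by rw [htdef]; linarith) (min_le_left _ _)), ?_⟩
  refine (mem_wrap hu hv hw).mpr (Or.inr ⟨mul_exp_ne htT, Or.inr ?_⟩)
  rw [cc_exp htT]
  exact lt_of_lt_of_le (by rw [htdef]; linarith) (min_le_right _ _)

lemma inter_high_wrap {c u v : Circle} (hc : c ≠ x) (hu : u ≠ x) (hv : v ≠ x)
    (hw : cc x v < cc x u) : (oInt c x ∩ oInt u v).Nonempty := by
  set t := (max (cc x c) (cc x u) + 2 * π) / 2 with htdef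
  have hmax : max (cc x c) (cc x u) < 2 * π := max_lt (cc_mem hc).2 (cc_mem hu).2
  have htT : t ∈ Set.Ioo 0 (2 * π) := by
    constructor
    · rw [htdef]; linarith [(cc_mem hc).1, le_max_left (cc x c) (cc x u)]
    · rw [htdef]; linarith
  refine ⟨x * Circle.exp t,
    mem_exp_high hc (lt_of_le_of_lt (le_max_left _ _) (by rw [htdef]; linarith))
      (by rw [htdef]; linarith), ?_⟩
  refine (mem_wrap hu hv hw).mpr (Or.inr ⟨mul_exp_ne htT, Or.inl ?_⟩)
  rw [cc_exp htT]
  exact lt_of_le_of_lt (le_max_right _ _) (by rw [htdef]; linarith)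

lemma sep_low_high {b a : Circle} (hb : b ≠ x) (ha : a ≠ x)
    (hd : oInt x b ∩ oInt a x = ∅) : cc x b ≤ cc x a := by
  by_contra hc
  push_neg at hc
  set t := (cc x a + cc x b) / 2 with htdef
  have hq1 : x * Circle.exp t ∈ oInt x b :=
    mem_exp_low hb (by rw [htdef]; linarith [(cc_mem ha).1]) (by rw [htdef]; linarith)
  have hq2 : x * Circle.exp t ∈ oInt a x :=
    mem_exp_high ha (by rw [htdef]; linarith) (by rw [htdef]; linarith [(cc_mem hb).2])
  have : x * Circle.exp t ∈ oInt x b ∩ oInt a x := ⟨hq1, hq2⟩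
  rw [hd] at this; exact this

lemma sub_mid_mid {a b a' b' : Circle} (ha : a ≠ x) (hb : b ≠ x) (ha' : a' ≠ x) (hb' : b' ≠ x)
    (hm : cc x a < cc x b) (hm' : cc x a' < cc x b') (hsub : oInt a b ⊆ oInt a' b') :
    cc x a' ≤ cc x a ∧ cc x b ≤ cc x b' := by
  constructor
  · by_contra hc
    push_neg at hc
    set t := (cc x a + min (cc x b) (cc x a')) / 2 with htdef
    have hmin : cc x a < min (cc x b) (cc x a') := lt_min hm hc
    have hq : x * Circle.exp t ∈ oInt a b :=
      mem_exp_mid ha hb hm (by rw [htdef]; linarith)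
        (lt_of_lt_of_le (by rw [htdef]; linarith) (min_le_left _ _))
    have := ((mem_mid ha' hb' hm').mp (hsub hq)).2.1
    have htT : t ∈ Set.Ioo 0 (2 * π) :=
      ⟨by rw [htdef]; linarith [(cc_mem ha).1],
       by rw [htdef]; linarith [(cc_mem hb).2, min_le_left (cc x b) (cc x a')]⟩
    rw [cc_exp htT] at this
    have : t < cc x a' := lt_of_lt_of_le (by rw [htdef]; linarith) (min_le_right _ _)
    linarith [((mem_mid ha' hb' hm').mp (hsub hq)).2.1, cc_exp (x := x) htT]
  · by_contra hc
    push_neg at hc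
    set t := (max (cc x a) (cc x b') + cc x b) / 2 with htdef
    have hmax : max (cc x a) (cc x b') < cc x b := max_lt hm hc
    have hq : x * Circle.exp t ∈ oInt a b :=
      mem_exp_mid ha hb hm
        (lt_of_le_of_lt (le_max_left _ _) (by rw [htdef]; linarith))
        (by rw [htdef]; linarith)
    have htT : t ∈ Set.Ioo 0 (2 * π) :=
      ⟨by rw [htdef]; linarith [(cc_mem ha).1, le_max_left (cc x a) (cc x b')],
       by rw [htdef]; linarith [(cc_mem hb).2]⟩
    have h2 := ((mem_mid ha' hb' hm').mp (hsub hq)).2.2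
    rw [cc_exp htT] at h2
    have : cc x b' < t := lt_of_le_of_lt (le_max_right _ _) (by rw [htdef]; linarith)
    linarith

lemma sub_high_high {a a' : Circle} (ha : a ≠ x) (ha' : a' ≠ x)
    (hsub : oInt a x ⊆ oInt a' x) : cc x a' ≤ cc x a := by
  by_contra hc
  push_neg at hc
  set t := (cc x a + min (cc x a') (2 * π)) / 2 with htdef
  have hmin : cc x a < min (cc x a') (2 * π) := lt_min hc (cc_mem ha).2
  have hq : x * Circle.exp t ∈ oInt a x :=
    mem_exp_high ha (by rw [htdef]; linarith)
      (lt_of_lt_of_le (by rw [htdef]; linarith) (min_le_right _ _))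
  have htT : t ∈ Set.Ioo 0 (2 * π) :=
    ⟨by rw [htdef]; linarith [(cc_mem ha).1],
     by rw [htdef]; linarith [min_le_right (cc x a') (2 * π)]⟩
  have h2 := ((mem_high ha').mp (hsub hq)).2.2
  rw [cc_exp htT] at h2
  have : t < cc x a' := lt_of_lt_of_le (by rw [htdef]; linarith) (min_le_left _ _)
  linarith

lemma sub_low_low {b b' : Circle} (hb : b ≠ x) (hb' : b' ≠ x)
    (hsub : oInt x b ⊆ oInt x b') : cc x b ≤ cc x b' := by
  by_contra hc
  push_neg at hc
  set t := (max (cc x b') 0 + cc x b) / 2 with htdef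
  have hmax : max (cc x b') 0 < cc x b := max_lt hc (cc_mem hb).1
  have hq : x * Circle.exp t ∈ oInt x b :=
    mem_exp_low hb (by rw [htdef]; linarith [le_max_right (cc x b') 0]) (by rw [htdef]; linarith)
  have htT : t ∈ Set.Ioo 0 (2 * π) :=
    ⟨by rw [htdef]; linarith [le_max_right (cc x b') 0],
     by rw [htdef]; linarith [(cc_mem hb).2]⟩
  have h2 := ((mem_low hb').mp (hsub hq)).2.2
  rw [cc_exp htT] at h2
  have : cc x b' < t := lt_of_le_of_lt (le_max_left _ _) (by rw [htdef]; linarith)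
  linarith

lemma not_sub_high_low {a b : Circle} (ha : a ≠ x) (hb : b ≠ x) :
    ¬ (oInt a x ⊆ oInt x b) := by
  intro hsub
  set t := (max (cc x a) (cc x b) + 2 * π) / 2 with htdef
  have hmax : max (cc x a) (cc x b) < 2 * π := max_lt (cc_mem ha).2 (cc_mem hb).2
  have hq : x * Circle.exp t ∈ oInt a x :=
    mem_exp_high ha (lt_of_le_of_lt (le_max_left _ _) (by rw [htdef]; linarith))
      (by rw [htdef]; linarith)
  have htT : t ∈ Set.Ioo 0 (2 * π) :=
    ⟨by rw [htdef]; linarith [(cc_mem ha).1, le_max_left (cc x a) (cc x b)],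
     by rw [htdef]; linarith⟩
  have h2 := ((mem_low hb).mp (hsub hq)).2.2
  rw [cc_exp htT] at h2
  have : cc x b < t := lt_of_le_of_lt (le_max_right _ _) (by rw [htdef]; linarith)
  linarith

lemma not_sub_high_mid {a a' b' : Circle} (ha : a ≠ x) (ha' : a' ≠ x) (hb' : b' ≠ x)
    (hm' : cc x a' < cc x b') : ¬ (oInt a x ⊆ oInt a' b') := by
  intro hsub
  set t := (max (cc x a) (cc x b') + 2 * π) / 2 with htdef
  have hmax : max (cc x a) (cc x b') < 2 * π := max_lt (cc_mem ha).2 (cc_mem hb').2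
  have hq : x * Circle.exp t ∈ oInt a x :=
    mem_exp_high ha (lt_of_le_of_lt (le_max_left _ _) (by rw [htdef]; linarith))
      (by rw [htdef]; linarith)
  have htT : t ∈ Set.Ioo 0 (2 * π) :=
    ⟨by rw [htdef]; linarith [(cc_mem ha).1, le_max_left (cc x a) (cc x b')],
     by rw [htdef]; linarith⟩
  have h2 := ((mem_mid ha' hb' hm').mp (hsub hq)).2.2
  rw [cc_exp htT] at h2
  have : cc x b' < t := lt_of_le_of_lt (le_max_right _ _) (by rw [htdef]; linarith)
  linarith

lemma not_sub_low_high {b a' : Circle} (hb : b ≠ x) (ha' : a' ≠ x) :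
    ¬ (oInt x b ⊆ oInt a' x) := by
  intro hsub
  set t := min (cc x b) (cc x a') / 2 with htdef
  have hmin : 0 < min (cc x b) (cc x a') := lt_min (cc_mem hb).1 (cc_mem ha').1
  have hq : x * Circle.exp t ∈ oInt x b :=
    mem_exp_low hb (by rw [htdef]; linarith)
      (lt_of_lt_of_le (by rw [htdef]; linarith) (min_le_left _ _))
  have htT : t ∈ Set.Ioo 0 (2 * π) :=
    ⟨by rw [htdef]; linarith,
     by rw [htdef]; linarith [(cc_mem hb).2, min_le_left (cc x b) (cc x a')]⟩
  have h2 := ((mem_high ha').mp (hsub hq)).2.2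
  rw [cc_exp htT] at h2
  have : t < cc x a' := lt_of_lt_of_le (by rw [htdef]; linarith) (min_le_right _ _)
  linarith

lemma not_sub_low_mid {b a' b' : Circle} (hb : b ≠ x) (ha' : a' ≠ x) (hb' : b' ≠ x)
    (hm' : cc x a' < cc x b') : ¬ (oInt x b ⊆ oInt a' b') := by
  intro hsub
  set t := min (cc x b) (cc x a') / 2 with htdef
  have hmin : 0 < min (cc x b) (cc x a') := lt_min (cc_mem hb).1 (cc_mem ha').1
  have hq : x * Circle.exp t ∈ oInt x b :=
    mem_exp_low hb (by rw [htdef]; linarith)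
      (lt_of_lt_of_le (by rw [htdef]; linarith) (min_le_left _ _))
  have htT : t ∈ Set.Ioo 0 (2 * π) :=
    ⟨by rw [htdef]; linarith,
     by rw [htdef]; linarith [(cc_mem hb).2, min_le_left (cc x b) (cc x a')]⟩
  have h2 := ((mem_mid ha' hb' hm').mp (hsub hq)).2.1
  rw [cc_exp htT] at h2
  have : t < cc x a' := lt_of_lt_of_le (by rw [htdef]; linarith) (min_le_right _ _)
  linarith

end Patterns


/-! ### W-crunch lemmas -/

section Crunch

variable {L P : Set (Set Circle)} {g : Circle ≃ₜ Circle} {x : Circle}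

lemma wcrunch_a (hL : LamSys L) (hP : IsGap L P) (hg : OrientPres g) (hgx : g x = x)
    {I₁ : Set Circle} (h₁ : I₁ ∈ P) {W : Set Circle} (hW : W ∈ P) (hWne : W ≠ I₁)
    {y : Circle} (hyc : y ∈ closure W) (hyf : g y = y)
    {u v : Circle} (hu : u ≠ x) (hv : v ≠ x) (hwrap : cc x v < cc x u)
    (hI₁e : I₁ = oInt u v) (hxcl : x ∈ closure I₁)
    (hsep : ∀ a b : Circle, a ≠ x → b ≠ x → cc x a < cc x b → W = oInt a b →
      cc x b ≤ Hc x g (cc x v) ∨ Hc x g (cc x u) ≤ cc x a) : False := by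
  obtain ⟨a, b, hab, hWe⟩ := side_nd hL hP hW
  have hxW : x ∉ W := fun hxw => hWne (side_eq_of_mem_closure hL hP h₁ hW hxcl hxw).symm
  have hxW' : x ∉ oInt a b := by rw [← hWe]; exact hxW
  rcases arc_form hab hxW' with ⟨hax, hbx⟩ | ⟨hbx, hax⟩ | ⟨hax, hbx, hm⟩
  · have hne : (W ∩ I₁).Nonempty := by
      rw [hWe, hI₁e, hax]
      exact inter_low_wrap hbx hu hv hwrap
    exact hWne (sides_eq_of_inter hP hW h₁ hne)
  · have hne : (W ∩ I₁).Nonempty := by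
      rw [hWe, hI₁e, hbx]
      exact inter_high_wrap hax hu hv hwrap
    exact hWne (sides_eq_of_inter hP hW h₁ hne)
  · have hdisj : W ∩ I₁ = ∅ := hP.2.1 W hW I₁ h₁ hWne
    have hd : oInt a b ∩ oInt u v = ∅ := by rw [← hWe, ← hI₁e]; exact hdisj
    obtain ⟨hμα, hβγ⟩ := sep_mid_wrap hu hv hax hbx hwrap hm hd
    obtain ⟨hynx, hty1, hty2⟩ := cc_closure_mid hab hax hbx hm (by rw [← hWe]; exact hyc)
    have hfixy : Hc x g (cc x y) = cc x y := by rw [Hc_cc hgx, hyf]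
    rcases hsep a b hax hbx hm hWe with hs | hs
    · exact patternA hg hgx (cc_mem hv) hμα hs hm hty1 hty2 hfixy
    · exact patternB hg hgx (cc_mem hu) hs hβγ hm hty1 hty2 hfixy

lemma wcrunch_b (hL : LamSys L) (hP : IsGap L P) (hg : OrientPres g) (hgx : g x = x)
    {I₁ J : Set Circle} (h₁ : I₁ ∈ P) (hJ : J ∈ P) {W : Set Circle} (hW : W ∈ P)
    (hWne1 : W ≠ I₁) (hWneJ : W ≠ J)
    {y : Circle} (hyc : y ∈ closure W) (hyf : g y = y)
    {v aJ : Circle} (hv : v ≠ x) (haJ : aJ ≠ x)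
    (hI₁e : I₁ = oInt x v) (hJe : J = oInt aJ x) (hxcl : x ∈ closure I₁)
    (hαJ : cc x aJ ≤ Hc x g (cc x v)) : False := by
  obtain ⟨a, b, hab, hWe⟩ := side_nd hL hP hW
  have hxW : x ∉ W := fun hxw => hWne1 (side_eq_of_mem_closure hL hP h₁ hW hxcl hxw).symm
  have hxW' : x ∉ oInt a b := by rw [← hWe]; exact hxW
  rcases arc_form hab hxW' with ⟨hax, hbx⟩ | ⟨hbx, hax⟩ | ⟨hax, hbx, hm⟩
  · have hne : (W ∩ I₁).Nonempty := by
      rw [hWe, hI₁e, hax]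
      exact inter_low_low hbx hv
    exact hWne1 (sides_eq_of_inter hP hW h₁ hne)
  · have hne : (W ∩ J).Nonempty := by
      rw [hWe, hJe, hbx]
      exact inter_high_high hax haJ
    exact hWneJ (sides_eq_of_inter hP hW hJ hne)
  · have hd1 : oInt x v ∩ oInt a b = ∅ := by
      rw [← hWe, ← hI₁e]
      exact hP.2.1 I₁ h₁ W hW (Ne.symm hWne1)
    have hd2 : oInt aJ x ∩ oInt a b = ∅ := by
      rw [← hWe, ← hJe]
      exact hP.2.1 J hJ W hW (Ne.symm hWneJ)
    have hμα : cc x v ≤ cc x a := sep_low_mid hv hax hbx hm hd1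
    have hβ : cc x b ≤ cc x aJ := sep_high_mid haJ hax hbx hm hd2
    obtain ⟨hynx, hty1, hty2⟩ := cc_closure_mid hab hax hbx hm (by rw [← hWe]; exact hyc)
    have hfixy : Hc x g (cc x y) = cc x y := by rw [Hc_cc hgx, hyf]
    exact patternA hg hgx (cc_mem hv) hμα (le_trans hβ hαJ) hm hty1 hty2 hfixy

lemma wcrunch_c (hL : LamSys L) (hP : IsGap L P) (hg : OrientPres g) (hgx : g x = x)
    {I₁ J : Set Circle} (h₁ : I₁ ∈ P) (hJ : J ∈ P) {W : Set Circle} (hW : W ∈ P)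
    (hWne1 : W ≠ I₁) (hWneJ : W ≠ J)
    {y : Circle} (hyc : y ∈ closure W) (hyf : g y = y)
    {u bJ : Circle} (hu : u ≠ x) (hbJ : bJ ≠ x)
    (hI₁e : I₁ = oInt u x) (hJe : J = oInt x bJ) (hxcl : x ∈ closure I₁)
    (hβJ : Hc x g (cc x u) ≤ cc x bJ) : False := by
  obtain ⟨a, b, hab, hWe⟩ := side_nd hL hP hW
  have hxW : x ∉ W := fun hxw => hWne1 (side_eq_of_mem_closure hL hP h₁ hW hxcl hxw).symm
  have hxW' : x ∉ oInt a b := by rw [← hWe]; exact hxW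
  rcases arc_form hab hxW' with ⟨hax, hbx⟩ | ⟨hbx, hax⟩ | ⟨hax, hbx, hm⟩
  · have hne : (W ∩ J).Nonempty := by
      rw [hWe, hJe, hax]
      exact inter_low_low hbx hbJ
    exact hWneJ (sides_eq_of_inter hP hW hJ hne)
  · have hne : (W ∩ I₁).Nonempty := by
      rw [hWe, hI₁e, hbx]
      exact inter_high_high hax hu
    exact hWne1 (sides_eq_of_inter hP hW h₁ hne)
  · have hd1 : oInt u x ∩ oInt a b = ∅ := by
      rw [← hWe, ← hI₁e]
      exact hP.2.1 I₁ h₁ W hW (Ne.symm hWne1)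
    have hd2 : oInt x bJ ∩ oInt a b = ∅ := by
      rw [← hWe, ← hJe]
      exact hP.2.1 J hJ W hW (Ne.symm hWneJ)
    have hβγ : cc x b ≤ cc x u := sep_high_mid hu hax hbx hm hd1
    have hα : cc x bJ ≤ cc x a := sep_low_mid hbJ hax hbx hm hd2
    obtain ⟨hynx, hty1, hty2⟩ := cc_closure_mid hab hax hbx hm (by rw [← hWe]; exact hyc)
    have hfixy : Hc x g (cc x y) = cc x y := by rw [Hc_cc hgx, hyf]
    exact patternB hg hgx (cc_mem hu) (le_trans hβJ hα) hβγ hm hty1 hty2 hfixy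

end Crunch


/-! ### Main inequality lemma -/

lemma side_fix_ineq {L P : Set (Set Circle)} (hL : LamSys L) (hP : IsGap L P)
    {g : Circle ≃ₜ Circle} (hg : OrientPres g)
    {I₁ I₂ I₃ : Set Circle} (h₁ : I₁ ∈ P) (h₂ : I₂ ∈ P) (h₃ : I₃ ∈ P)
    (h12 : I₁ ≠ I₂) (h13 : I₁ ≠ I₃) (h23 : I₂ ≠ I₃)
    (hgI₁L : ⇑g '' I₁ ∈ L)
    {u v x : Circle} (huv : u ≠ v) (hI₁e : I₁ = oInt u v)
    (hgx : g x = x) (hxcl : x ∈ closure I₁)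
    {x₂ x₃ : Circle} (hx₂c : x₂ ∈ closure I₂) (hx₂f : g x₂ = x₂)
    (hx₃c : x₃ ∈ closure I₃) (hx₃f : g x₃ = x₃) :
    (x ∈ I₁ → cc x u ≤ Hc x g (cc x u) ∧ Hc x g (cc x v) ≤ cc x v) ∧
    (x = u → Hc x g (cc x v) ≤ cc x v) ∧
    (x = v → cc x u ≤ Hc x g (cc x u)) := by
  obtain ⟨J, hJ, hli⟩ := hP.2.2 (⇑g '' I₁) hgI₁L
  have pickW : ∃ W, W ∈ P ∧ W ≠ I₁ ∧ W ≠ J ∧ ∃ y, y ∈ closure W ∧ g y = y := by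
    by_cases hJ2 : J = I₂
    · exact ⟨I₃, h₃, Ne.symm h13, fun h => h23 (h.trans hJ2).symm, x₃, hx₃c, hx₃f⟩
    · exact ⟨I₂, h₂, Ne.symm h12, fun h => hJ2 h.symm, x₂, hx₂c, hx₂f⟩
  refine ⟨?_, ?_, ?_⟩
  -- Config (a): x in the interior of I₁
  · intro hxin
    have hxoi : x ∈ oInt u v := by rw [← hI₁e]; exact hxin
    have hxu : u ≠ x := hxoi.1
    have hxv : v ≠ x := Ne.symm hxoi.2.1
    have hwrap : cc x v < cc x u := (posOri_wrap_iff hxu hxv huv).mp hxoi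
    have hgux : g u ≠ x := g_ne_x hgx hxu
    have hgvx : g v ≠ x := g_ne_x hgx hxv
    have hEu : Hc x g (cc x u) = cc x (g u) := Hc_cc hgx
    have hEv : Hc x g (cc x v) = cc x (g v) := Hc_cc hgx
    have hgwrap : cc x (g v) < cc x (g u) := by
      rw [← hEu, ← hEv]
      exact Hc_mono hg hgx (cc_mem hxv) (cc_mem hxu) hwrap
    have hguv : g u ≠ g v := fun h => huv (g.injective h)
    have hgim : ⇑g '' I₁ = oInt (g u) (g v) := by rw [hI₁e]; exact image_oInt hg u v
    rw [hEu, hEv]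
    rcases hli with hsub | hdsub
    · -- good case: g I₁ ⊆ J, and x ∈ g I₁ forces J = I₁
      have hxgI : x ∈ ⇑g '' I₁ := ⟨x, hxin, hgx⟩
      have hJI : J = I₁ := sides_eq_of_inter hP hJ h₁ ⟨x, hsub hxgI, hxin⟩
      have hsub' : oInt (g u) (g v) ⊆ oInt u v := by
        have hs2 : ⇑g '' I₁ ⊆ I₁ := hJI ▸ hsub
        rwa [hgim, hI₁e] at hs2
      constructor
      · by_contra hc
        push_neg at hc
        set t := (max (cc x (g u)) (cc x v) + cc x u) / 2 with htdef
        have hmax : max (cc x (g u)) (cc x v) < cc x u := max_lt hc hwrap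
        have htT : t ∈ Set.Ioo 0 (2 * π) :=
          ⟨by rw [htdef]; linarith [(cc_mem hgux).1, le_max_left (cc x (g u)) (cc x v)],
           by rw [htdef]; linarith [(cc_mem hxu).2]⟩
        have hq1 : x * Circle.exp t ∈ oInt (g u) (g v) := by
          refine (mem_wrap hgux hgvx hgwrap).mpr (Or.inr ⟨mul_exp_ne htT, Or.inl ?_⟩)
          rw [cc_exp htT]
          exact lt_of_le_of_lt (le_max_left _ _) (by rw [htdef]; linarith)
        have hq2 := (mem_wrap hxu hxv hwrap).mp (hsub' hq1)
        rcases hq2 with hq2 | ⟨-, hq2 | hq2⟩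
        · exact mul_exp_ne htT hq2
        · rw [cc_exp htT] at hq2
          rw [htdef] at hq2
          linarith
        · rw [cc_exp htT] at hq2
          have : cc x v < t := lt_of_le_of_lt (le_max_right _ _) (by rw [htdef]; linarith)
          linarith
      · by_contra hc
        push_neg at hc
        set t := (cc x v + min (cc x (g v)) (cc x u)) / 2 with htdef
        have hmin : cc x v < min (cc x (g v)) (cc x u) := lt_min hc hwrap
        have htT : t ∈ Set.Ioo 0 (2 * π) :=
          ⟨by rw [htdef]; linarith [(cc_mem hxv).1],
           by rw [htdef]; linarith [(cc_mem hgvx).2, (cc_mem hxu).2,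
             min_le_left (cc x (g v)) (cc x u)]⟩
        have hq1 : x * Circle.exp t ∈ oInt (g u) (g v) := by
          refine (mem_wrap hgux hgvx hgwrap).mpr (Or.inr ⟨mul_exp_ne htT, Or.inr ?_⟩)
          rw [cc_exp htT]
          exact lt_of_lt_of_le (by rw [htdef]; linarith) (min_le_left _ _)
        have hq2 := (mem_wrap hxu hxv hwrap).mp (hsub' hq1)
        rcases hq2 with hq2 | ⟨-, hq2 | hq2⟩
        · exact mul_exp_ne htT hq2
        · rw [cc_exp htT] at hq2
          have : t < cc x u := lt_of_lt_of_le (by rw [htdef]; linarith) (min_le_right _ _)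
          linarith
        · rw [cc_exp htT] at hq2
          rw [htdef] at hq2
          linarith
    · -- bad case
      exfalso
      have hdual : dual (⇑g '' I₁) = oInt (g v) (g u) := by
        rw [hgim]; exact dual_oInt hguv
      obtain ⟨W, hW, hWne1, hWneJ, y, hyc, hyf⟩ := pickW
      by_cases hJ1 : J = I₁
      · have hsubJ : oInt (g v) (g u) ⊆ oInt u v := by
          have hs2 := hdsub
          rw [hJ1] at hs2
          rwa [hdual, hI₁e] at hs2
        refine wcrunch_a hL hP hg hgx h₁ hW hWne1 hyc hyf hxu hxv hwrap hI₁e hxcl ?_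
        intro a b hax hbx hm hWe
        have hdisj : W ∩ I₁ = ∅ := hP.2.1 W hW I₁ h₁ hWne1
        have hsubd : oInt a b ∩ oInt (g v) (g u) ⊆ W ∩ I₁ := by
          rintro p ⟨hp1, hp2⟩
          exact ⟨by rw [hWe]; exact hp1, by rw [hI₁e]; exact hsubJ hp2⟩
        have hd : oInt a b ∩ oInt (g v) (g u) = ∅ :=
          Set.subset_empty_iff.mp (hdisj ▸ hsubd)
        rcases sep_mid_mid hax hbx hgvx hgux hm hgwrap hd with hs | hs
        · left; rw [hEv]; exact hs
        · right; rw [hEu]; exact hs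
      · have hxJ : x ∉ J := fun hxJ =>
          hJ1 (side_eq_of_mem_closure hL hP h₁ hJ hxcl hxJ).symm
        obtain ⟨aJ, bJ, habJ, hJe⟩ := side_nd hL hP hJ
        have hxJ' : x ∉ oInt aJ bJ := by rw [← hJe]; exact hxJ
        rcases arc_form habJ hxJ' with ⟨haxJ, hbxJ⟩ | ⟨hbxJ, haxJ⟩ | ⟨haxJ, hbxJ, hJm⟩
        · have hne : (J ∩ I₁).Nonempty := by
            rw [hJe, hI₁e, haxJ]
            exact inter_low_wrap hbxJ hxu hxv hwrap
          exact hJ1 (sides_eq_of_inter hP hJ h₁ hne)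
        · have hne : (J ∩ I₁).Nonempty := by
            rw [hJe, hI₁e, hbxJ]
            exact inter_high_wrap haxJ hxu hxv hwrap
          exact hJ1 (sides_eq_of_inter hP hJ h₁ hne)
        · have hsubJ : oInt (g v) (g u) ⊆ oInt aJ bJ := by
            rw [← hdual, ← hJe]; exact hdsub
          obtain ⟨hαJ, hβJ⟩ := sub_mid_mid hgvx hgux haxJ hbxJ hgwrap hJm hsubJ
          refine wcrunch_a hL hP hg hgx h₁ hW hWne1 hyc hyf hxu hxv hwrap hI₁e hxcl ?_
          intro a b hax hbx hm hWe
          have hd : oInt a b ∩ oInt aJ bJ = ∅ := by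
            rw [← hWe, ← hJe]
            exact hP.2.1 W hW J hJ hWneJ
          rcases sep_mid_mid hax hbx haxJ hbxJ hm hJm hd with hs | hs
          · left; rw [hEv]; exact le_trans hs hαJ
          · right; rw [hEu]; exact le_trans hβJ hs
  -- Config (b): x = u
  · intro hxu
    have hI₁e' : I₁ = oInt x v := by rw [hI₁e, ← hxu]
    have hv : v ≠ x := fun h => huv (hxu.symm.trans h.symm)
    have hgvx : g v ≠ x := g_ne_x hgx hv
    have hEv : Hc x g (cc x v) = cc x (g v) := Hc_cc hgx
    have hgim : ⇑g '' I₁ = oInt x (g v) := by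
      rw [hI₁e', image_oInt hg, hgx]
    rw [hEv]
    rcases hli with hsub | hdsub
    · set t := min (cc x v) (cc x (g v)) / 2 with htdef
      have hmin : 0 < min (cc x v) (cc x (g v)) := lt_min (cc_mem hv).1 (cc_mem hgvx).1
      have hq1 : x * Circle.exp t ∈ oInt x (g v) :=
        mem_exp_low hgvx (by rw [htdef]; linarith)
          (lt_of_lt_of_le (by rw [htdef]; linarith) (min_le_right _ _))
      have hq2 : x * Circle.exp t ∈ I₁ := by
        rw [hI₁e']
        exact mem_exp_low hv (by rw [htdef]; linarith)
          (lt_of_lt_of_le (by rw [htdef]; linarith) (min_le_left _ _))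
      have hqJ : x * Circle.exp t ∈ J := hsub (by rw [hgim]; exact hq1)
      have hJI : J = I₁ := sides_eq_of_inter hP hJ h₁ ⟨_, hqJ, hq2⟩
      have hsub' : oInt x (g v) ⊆ oInt x v := by
        have hs2 : ⇑g '' I₁ ⊆ I₁ := hJI ▸ hsub
        rwa [hgim, hI₁e'] at hs2
      exact sub_low_low hgvx hv hsub'
    · exfalso
      have hdual : dual (⇑g '' I₁) = oInt (g v) x := by
        rw [hgim]; exact dual_oInt (Ne.symm hgvx)
      have hxcl' : x ∈ closure I₁ := hxcl
      have hxJ : x ∉ J := by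
        intro hxJ
        have hJI : I₁ = J := side_eq_of_mem_closure hL hP h₁ hJ hxcl hxJ
        rw [← hJI, hI₁e'] at hxJ
        exact not_mem_left _ _ hxJ
      obtain ⟨aJ, bJ, habJ, hJe⟩ := side_nd hL hP hJ
      have hxJ' : x ∉ oInt aJ bJ := by rw [← hJe]; exact hxJ
      have hdsub' : oInt (g v) x ⊆ oInt aJ bJ := by
        rw [← hdual, ← hJe]; exact hdsub
      rcases arc_form habJ hxJ' with ⟨haxJ, hbxJ⟩ | ⟨hbxJ, haxJ⟩ | ⟨haxJ, hbxJ, hJm⟩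
      · rw [haxJ] at hdsub'
        exact not_sub_high_low hgvx hbxJ hdsub'
      · rw [hbxJ] at hdsub'
        have hαJ : cc x aJ ≤ cc x (g v) := sub_high_high hgvx haxJ hdsub'
        obtain ⟨W, hW, hWne1, hWneJ, y, hyc, hyf⟩ := pickW
        have hJe' : J = oInt aJ x := by rw [hJe, hbxJ]
        exact wcrunch_b hL hP hg hgx h₁ hJ hW hWne1 hWneJ hyc hyf hv haxJ hI₁e' hJe'
          hxcl (by rw [hEv]; exact hαJ)
      · exact not_sub_high_mid hgvx haxJ hbxJ hJm hdsub'
  -- Config (c): x = v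
  · intro hxv
    have hI₁e' : I₁ = oInt u x := by rw [hI₁e, ← hxv]
    have hu : u ≠ x := fun h => huv (h.trans hxv)
    have hgux : g u ≠ x := g_ne_x hgx hu
    have hEu : Hc x g (cc x u) = cc x (g u) := Hc_cc hgx
    have hgim : ⇑g '' I₁ = oInt (g u) x := by
      rw [hI₁e', image_oInt hg, hgx]
    rw [hEu]
    rcases hli with hsub | hdsub
    · set t := (max (cc x u) (cc x (g u)) + 2 * π) / 2 with htdef
      have hmax : max (cc x u) (cc x (g u)) < 2 * π := max_lt (cc_mem hu).2 (cc_mem hgux).2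
      have hq1 : x * Circle.exp t ∈ oInt (g u) x :=
        mem_exp_high hgux (lt_of_le_of_lt (le_max_right _ _) (by rw [htdef]; linarith))
          (by rw [htdef]; linarith)
      have hq2 : x * Circle.exp t ∈ I₁ := by
        rw [hI₁e']
        exact mem_exp_high hu (lt_of_le_of_lt (le_max_left _ _) (by rw [htdef]; linarith))
          (by rw [htdef]; linarith)
      have hqJ : x * Circle.exp t ∈ J := hsub (by rw [hgim]; exact hq1)
      have hJI : J = I₁ := sides_eq_of_inter hP hJ h₁ ⟨_, hqJ, hq2⟩
      have hsub' : oInt (g u) x ⊆ oInt u x := by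
        have hs2 : ⇑g '' I₁ ⊆ I₁ := hJI ▸ hsub
        rwa [hgim, hI₁e'] at hs2
      exact sub_high_high hgux hu hsub'
    · exfalso
      have hdual : dual (⇑g '' I₁) = oInt x (g u) := by
        rw [hgim]; exact dual_oInt hgux
      have hxJ : x ∉ J := by
        intro hxJ
        have hJI : I₁ = J := side_eq_of_mem_closure hL hP h₁ hJ hxcl hxJ
        rw [← hJI, hI₁e'] at hxJ
        exact not_mem_right _ _ hxJ
      obtain ⟨aJ, bJ, habJ, hJe⟩ := side_nd hL hP hJ
      have hxJ' : x ∉ oInt aJ bJ := by rw [← hJe]; exact hxJ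
      have hdsub' : oInt x (g u) ⊆ oInt aJ bJ := by
        rw [← hdual, ← hJe]; exact hdsub
      rcases arc_form habJ hxJ' with ⟨haxJ, hbxJ⟩ | ⟨hbxJ, haxJ⟩ | ⟨haxJ, hbxJ, hJm⟩
      · rw [haxJ] at hdsub'
        have hβJ : cc x (g u) ≤ cc x bJ := sub_low_low hgux hbxJ hdsub'
        obtain ⟨W, hW, hWne1, hWneJ, y, hyc, hyf⟩ := pickW
        have hJe' : J = oInt x bJ := by rw [hJe, haxJ]
        exact wcrunch_c hL hP hg hgx h₁ hJ hW hWne1 hWneJ hyc hyf hu hbxJ hI₁e' hJe'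
          hxcl (by rw [hEu]; exact hβJ)
      · rw [hbxJ] at hdsub'
        exact not_sub_low_high hgux haxJ hdsub'
      · exact not_sub_low_mid hgux haxJ hbxJ hJm hdsub'


lemma fix_inv {g : Circle ≃ₜ Circle} {p : Circle} (h : g p = p) : g⁻¹ p = p := by
  have h2 : g⁻¹ (g p) = p := inv_apply_apply g p
  rwa [h] at h2

lemma side_fix {L P : Set (Set Circle)} (hL : LamSys L) (hP : IsGap L P)
    {g : Circle ≃ₜ Circle} (hg : OrientPres g) (hg' : OrientPres g⁻¹)
    {I₁ I₂ I₃ : Set Circle} (h₁ : I₁ ∈ P) (h₂ : I₂ ∈ P) (h₃ : I₃ ∈ P)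
    (h12 : I₁ ≠ I₂) (h13 : I₁ ≠ I₃) (h23 : I₂ ≠ I₃)
    (hgI₁L : ⇑g '' I₁ ∈ L) (hgI₁L' : ⇑g⁻¹ '' I₁ ∈ L)
    {x₁ x₂ x₃ : Circle} (hx₁c : x₁ ∈ closure I₁) (hx₁f : g x₁ = x₁)
    (hx₂c : x₂ ∈ closure I₂) (hx₂f : g x₂ = x₂)
    (hx₃c : x₃ ∈ closure I₃) (hx₃f : g x₃ = x₃) :
    ⇑g '' I₁ = I₁ := by
  obtain ⟨u, v, huv, hI₁e⟩ := side_nd hL hP h₁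
  set x := x₁ with hxdef
  have hgx : g x = x := hx₁f
  have hgx' : g⁻¹ x = x := fix_inv hx₁f
  have Hmain := side_fix_ineq hL hP hg h₁ h₂ h₃ h12 h13 h23 hgI₁L huv hI₁e hgx hx₁c
    hx₂c hx₂f hx₃c hx₃f
  have Hinv := side_fix_ineq hL hP hg' h₁ h₂ h₃ h12 h13 h23 hgI₁L' huv hI₁e hgx' hx₁c
    hx₂c (fix_inv hx₂f) hx₃c (fix_inv hx₃f)
  have hxm : x ∈ oInt u v ∪ {u, v} := by
    rw [← closure_oInt huv, ← hI₁e]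
    exact hx₁c
  have himg : ⇑g '' I₁ = oInt (g u) (g v) := by rw [hI₁e]; exact image_oInt hg u v
  rcases hxm with hxin | hxuv
  · -- x interior
    have hxu : u ≠ x := hxin.1
    have hxv : v ≠ x := Ne.symm hxin.2.1
    have hxI : x ∈ I₁ := by rw [hI₁e]; exact hxin
    obtain ⟨hA1, hA2⟩ := Hmain.1 hxI
    obtain ⟨hB1, hB2⟩ := Hinv.1 hxI
    have hequ : Hc x g (cc x u) = cc x u := by
      rcases eq_or_lt_of_le hA1 with he | hlt
      · exact he.symm
      · exfalso
        have hmem := cc_mem hxu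
        have h2 := Hc_mono hg' hgx' hmem (Hc_mem hgx hmem) hlt
        rw [Hc_inv_left hgx hmem] at h2
        linarith
    have heqv : Hc x g (cc x v) = cc x v := by
      rcases eq_or_lt_of_le hA2 with he | hlt
      · exact he
      · exfalso
        have hmem := cc_mem hxv
        have h2 := Hc_mono hg' hgx' (Hc_mem hgx hmem) hmem hlt
        rw [Hc_inv_left hgx hmem] at h2
        linarith
    have hgu : g u = u := by
      have : cc x (g u) = cc x u := by rw [← Hc_cc hgx, hequ]
      exact cc_inj this
    have hgv : g v = v := by
      have : cc x (g v) = cc x v := by rw [← Hc_cc hgx, heqv]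
      exact cc_inj this
    rw [himg, hgu, hgv, hI₁e]
  · rcases hxuv with hxu | hxv
    · -- x = u
      have hxu : x = u := hxu
      have hv : v ≠ x := fun h => huv (hxu.symm.trans h.symm)
      have hA := Hmain.2.1 hxu
      have hB := Hinv.2.1 hxu
      have heqv : Hc x g (cc x v) = cc x v := by
        rcases eq_or_lt_of_le hA with he | hlt
        · exact he
        · exfalso
          have hmem := cc_mem hv
          have h2 := Hc_mono hg' hgx' (Hc_mem hgx hmem) hmem hlt
          rw [Hc_inv_left hgx hmem] at h2
          linarith
      have hgv : g v = v := by
        have : cc x (g v) = cc x v := by rw [← Hc_cc hgx, heqv]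
        exact cc_inj this
      have hgu : g u = u := by rw [← hxu, hgx, hxu]
      rw [himg, hgu, hgv, hI₁e]
    · -- x = v
      rw [Set.mem_singleton_iff] at hxv
      have hu : u ≠ x := fun h => huv (h.trans hxv)
      have hA := Hmain.2.2 hxv
      have hB := Hinv.2.2 hxv
      have hequ : Hc x g (cc x u) = cc x u := by
        rcases eq_or_lt_of_le hA with he | hlt
        · exact he.symm
        · exfalso
          have hmem := cc_mem hu
          have h2 := Hc_mono hg' hgx' hmem (Hc_mem hgx hmem) hlt
          rw [Hc_inv_left hgx hmem] at h2
          linarith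
      have hgu : g u = u := by
        have : cc x (g u) = cc x u := by rw [← Hc_cc hgx, hequ]
        exact cc_inj this
      have hgv : g v = v := by rw [← hxv, hgx, hxv]
      rw [himg, hgu, hgv, hI₁e]


/-! ### Phase 2: sides permute -/

lemma open_disjoint_closure {S K : Set Circle} (hS : IsOpen S) (hd : S ∩ K = ∅) :
    S ∩ closure K = ∅ := by
  rw [Set.eq_empty_iff_forall_notMem]
  rintro p ⟨hpS, hpcl⟩
  have := _root_.mem_closure_iff.mp hpcl S hS hpS
  rw [hd] at this
  exact Set.not_nonempty_empty this

lemma image_inv_image (g : Circle ≃ₜ Circle) (s : Set Circle) : ⇑g⁻¹ '' (⇑g '' s) = s := by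
  rw [← Set.image_comp]
  have h : (⇑g⁻¹ ∘ ⇑g) = id := funext (inv_apply_apply g)
  rw [h, Set.image_id]

lemma image_image_inv (g : Circle ≃ₜ Circle) (s : Set Circle) : ⇑g '' (⇑g⁻¹ '' s) = s := by
  rw [← Set.image_comp]
  have h : (⇑g ∘ ⇑g⁻¹) = id := funext (apply_inv_apply g)
  rw [h, Set.image_id]

lemma gside_sub {L P : Set (Set Circle)} (hL : LamSys L) (hP : IsGap L P)
    {g : Circle ≃ₜ Circle}
    {I₁ I₂ : Set Circle} (h₁ : I₁ ∈ P) (h₂ : I₂ ∈ P)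
    (h12 : I₁ ≠ I₂)
    (hf₁ : ⇑g '' I₁ = I₁) (hf₂ : ⇑g '' I₂ = I₂)
    {K : Set Circle} (hK : K ∈ P) (hK1 : K ≠ I₁) (hK2 : K ≠ I₂)
    (hgKL : ⇑g '' K ∈ L) : ∃ J ∈ P, ⇑g '' K ⊆ J := by
  obtain ⟨J, hJ, hli⟩ := hP.2.2 (⇑g '' K) hgKL
  rcases hli with hsub | hdsub
  · exact ⟨J, hJ, hsub⟩
  · exfalso
    have key : ∀ Ij, Ij ∈ P → ⇑g '' Ij = Ij → K ≠ Ij → Ij ⊆ J := by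
      intro Ij hIj hfj hKj
      have hdis : Ij ∩ K = ∅ := hP.2.1 Ij hIj K hK (fun h => hKj h.symm)
      have hdiscl : Ij ∩ closure K = ∅ :=
        open_disjoint_closure (side_open hL hP hIj) hdis
      have h2 : Ij ∩ closure (⇑g '' K) = ∅ := by
        rw [← g.image_closure]
        conv_lhs => rw [← hfj]
        rw [← Set.image_inter g.injective, hdiscl, Set.image_empty]
      have h3 : Ij ⊆ dual (⇑g '' K) := by
        rw [dual, interior_compl]
        intro p hp hpcl
        have : p ∈ Ij ∩ closure (⇑g '' K) := ⟨hp, hpcl⟩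
        rw [h2] at this
        exact this
      exact h3.trans hdsub
    have e1 : I₁ = J := side_eq_of_subset hL hP h₁ hJ (key I₁ h₁ hf₁ hK1)
    have e2 : I₂ = J := side_eq_of_subset hL hP h₂ hJ (key I₂ h₂ hf₂ hK2)
    exact h12 (e1.trans e2.symm)

lemma side_perm {L P : Set (Set Circle)} (hL : LamSys L) (hP : IsGap L P)
    {g : Circle ≃ₜ Circle}
    (hgL : ∀ I ∈ L, ⇑g '' I ∈ L) (hgL' : ∀ I ∈ L, ⇑g⁻¹ '' I ∈ L)
    {I₁ I₂ I₃ : Set Circle} (h₁ : I₁ ∈ P) (h₂ : I₂ ∈ P) (h₃ : I₃ ∈ P)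
    (h12 : I₁ ≠ I₂) (h13 : I₁ ≠ I₃) (h23 : I₂ ≠ I₃)
    (hf₁ : ⇑g '' I₁ = I₁) (hf₂ : ⇑g '' I₂ = I₂) (hf₃ : ⇑g '' I₃ = I₃)
    {K : Set Circle} (hK : K ∈ P) : ⇑g '' K ∈ P := by
  by_cases hK1 : K = I₁
  · rw [hK1, hf₁]; exact h₁
  by_cases hK2 : K = I₂
  · rw [hK2, hf₂]; exact h₂
  by_cases hK3 : K = I₃
  · rw [hK3, hf₃]; exact h₃
  have hf₁' : ⇑g⁻¹ '' I₁ = I₁ := by rw [← hf₁, image_inv_image]; exact hf₁.symm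
  have hf₂' : ⇑g⁻¹ '' I₂ = I₂ := by rw [← hf₂, image_inv_image]; exact hf₂.symm
  obtain ⟨J, hJ, hsub⟩ := gside_sub hL hP h₁ h₂ h12 hf₁ hf₂ hK hK1 hK2
    (hgL K (hP.1 hK))
  have hJne : ∀ Ij, Ij ∈ P → ⇑g '' Ij = Ij → K ≠ Ij → J ≠ Ij := by
    intro Ij hIj hfj hKj hJj
    rw [hJj] at hsub
    have hsub2 : K ⊆ Ij := by
      rw [← hfj] at hsub
      exact (Set.image_subset_image_iff g.injective).mp hsub
    exact hKj (side_eq_of_subset hL hP hK hIj hsub2)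
  obtain ⟨J₀, hJ₀, hsub'⟩ := gside_sub hL hP h₁ h₂ h12 hf₁' hf₂' hJ
    (hJne I₁ h₁ hf₁ hK1) (hJne I₂ h₂ hf₂ hK2) (hgL' J (hP.1 hJ))
  have hKJ₀ : K ⊆ J₀ := by
    have h5 : ⇑g⁻¹ '' (⇑g '' K) ⊆ ⇑g⁻¹ '' J := Set.image_mono hsub
    rw [image_inv_image] at h5
    exact h5.trans hsub'
  have hKeq : K = J₀ := side_eq_of_subset hL hP hK hJ₀ hKJ₀
  have h5 : ⇑g⁻¹ '' J ⊆ K := by rw [hKeq]; exact hsub'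
  have h6 : J ⊆ ⇑g '' K := by
    have h7 := Set.image_mono (f := ⇑g) h5
    rw [image_image_inv] at h7
    exact h7
  have h8 : ⇑g '' K = J := Set.Subset.antisymm hsub h6
  rw [h8]
  exact hJ

end S14
end Aux
/-- If three distinct sides of a non-leaf ideal polygon of a `G`-invariant lamination system
each have closure containing a fixed point of `g ∈ G`, then the polygon is `g`-fixed. -/
theorem stmt14 (G : Subgroup (Circle ≃ₜ Circle)) (hor : ∀ g ∈ G, OrientPres g)
    (L : Set (Set Circle)) (hL : LamSys L) (hinv : GInv G L)
    (P : Set (Set Circle)) (hP : IsGap L P) (hfin : (vset P).Finite) (hnl : ¬ IsLeafGap P)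
    (g : Circle ≃ₜ Circle) (hg : g ∈ G)
    (I₁ I₂ I₃ : Set Circle) (h₁ : I₁ ∈ P) (h₂ : I₂ ∈ P) (h₃ : I₃ ∈ P)
    (h12 : I₁ ≠ I₂) (h13 : I₁ ≠ I₃) (h23 : I₂ ≠ I₃)
    (hf₁ : (closure I₁ ∩ {x | g x = x}).Nonempty)
    (hf₂ : (closure I₂ ∩ {x | g x = x}).Nonempty)
    (hf₃ : (closure I₃ ∩ {x | g x = x}).Nonempty) :
    vset P ⊆ {x | g x = x} := by
  intro z hz
  obtain ⟨x₁, hx₁c, hx₁f'⟩ := hf₁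
  obtain ⟨x₂, hx₂c, hx₂f'⟩ := hf₂
  obtain ⟨x₃, hx₃c, hx₃f'⟩ := hf₃
  have hx₁f : g x₁ = x₁ := hx₁f'
  have hx₂f : g x₂ = x₂ := hx₂f'
  have hx₃f : g x₃ = x₃ := hx₃f'
  have hg' : g⁻¹ ∈ G := inv_mem hg
  have horg := hor g hg
  have horg' := hor g⁻¹ hg'
  have hgL : ∀ I ∈ L, ⇑g '' I ∈ L := fun I hI => hinv g hg I hI
  have hgL' : ∀ I ∈ L, ⇑g⁻¹ '' I ∈ L := fun I hI => hinv g⁻¹ hg' I hI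
  have hfix₁ : ⇑g '' I₁ = I₁ :=
    S14.side_fix hL hP horg horg' h₁ h₂ h₃ h12 h13 h23 (hgL I₁ (hP.1 h₁))
      (hgL' I₁ (hP.1 h₁)) hx₁c hx₁f hx₂c hx₂f hx₃c hx₃f
  have hfix₂ : ⇑g '' I₂ = I₂ :=
    S14.side_fix hL hP horg horg' h₂ h₁ h₃ (Ne.symm h12) h23 h13 (hgL I₂ (hP.1 h₂))
      (hgL' I₂ (hP.1 h₂)) hx₂c hx₂f hx₁c hx₁f hx₃c hx₃f
  have hfix₃ : ⇑g '' I₃ = I₃ :=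
    S14.side_fix hL hP horg horg' h₃ h₁ h₂ (Ne.symm h13) (Ne.symm h23) h12
      (hgL I₃ (hP.1 h₃)) (hgL' I₃ (hP.1 h₃)) hx₃c hx₃f hx₁c hx₁f hx₂c hx₂f
  obtain ⟨K, hK, hzcl⟩ := S14.vertex_mem_closure_side hL hP hfin hz
  obtain ⟨a, b, hab, hKe⟩ := S14.side_nd hL hP hK
  have hzK : z ∉ K := fun hzK => hz ⟨K, hK, hzK⟩
  have hzab : z = a ∨ z = b := by
    rw [hKe, S14.closure_oInt hab] at hzcl
    simp only [Set.mem_union, Set.mem_insert_iff, Set.mem_singleton_iff] at hzcl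
    rcases hzcl with h | h | h
    · exact absurd h (by rw [hKe] at hzK; exact hzK)
    · exact Or.inl h
    · exact Or.inr h
  have hperm : ∀ n : ℕ, ⇑(g ^ n) '' K ∈ P := by
    intro n
    induction n with
    | zero =>
      have e : ⇑((g : Circle ≃ₜ Circle) ^ 0) = id := by rw [pow_zero]; rfl
      rw [e, Set.image_id]
      exact hK
    | succ n ih =>
      have e : ⇑(g ^ (n + 1)) = ⇑g ∘ ⇑(g ^ n) := by rw [pow_succ']; rfl
      rw [e, Set.image_comp]
      exact S14.side_perm hL hP hgL hgL' h₁ h₂ h₃ h12 h13 h23 hfix₁ hfix₂ hfix₃ ih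
  haveI := (S14.gap_finite hL hP hfin).to_subtype
  obtain ⟨m, n, hmn, hcol⟩ := Finite.exists_ne_map_eq_of_infinite
    (fun n : ℕ => (⟨⇑(g ^ n) '' K, hperm n⟩ : ↥P))
  have hcol' : ⇑(g ^ m) '' K = ⇑(g ^ n) '' K := congrArg Subtype.val hcol
  have key : ∀ m n : ℕ, m < n → ⇑(g ^ m) '' K = ⇑(g ^ n) '' K →
      ∃ d : ℕ, 0 < d ∧ ⇑(g ^ d) '' K = K := by
    intro m n hlt he
    refine ⟨n - m, by omega, ?_⟩
    have hdecomp : g ^ n = g ^ m * g ^ (n - m) := by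
      rw [← pow_add]
      congr 1
      omega
    have e2 : ⇑(g ^ n) = ⇑(g ^ m) ∘ ⇑(g ^ (n - m)) := by rw [hdecomp]; rfl
    rw [e2, Set.image_comp] at he
    exact ((Set.image_injective.mpr (g ^ m).injective) he).symm
  obtain ⟨d, hd0, hdK⟩ : ∃ d, 0 < d ∧ ⇑(g ^ d) '' K = K := by
    rcases lt_or_gt_of_ne hmn with h | h
    · exact key m n h hcol'
    · exact key n m h hcol'.symm
  have horpow := S14.orientPres_pow horg d
  have himg : oInt ((g ^ d) a) ((g ^ d) b) = oInt a b := by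
    rw [← S14.image_oInt horpow, ← hKe, hdK, hKe]
  have hne2 : (g ^ d) a ≠ (g ^ d) b := fun h => hab ((g ^ d).injective h)
  obtain ⟨hea, heb⟩ := S14.oInt_eq_endpoints hne2 hab himg
  show g z = z
  rcases eq_or_ne z x₁ with rfl | hne
  · exact hx₁f
  · have hzfix : (g ^ d) z = z := by
      rcases hzab with rfl | rfl
      · exact hea
      · exact heb
    exact S14.fix_of_pow_fix horg hx₁f hd0 hne hzfix
end

section
/- Let G ≤ Homeo+(S^1) and L a G-invariant lamination system containing a non-leaf ideal polygon P such that the G-orbit of the vertex set of P, v_G(P) = ∪_{g∈G} v(g(P)), is dense in S^1. Then G contains a nontrivial element with nonempty fixed-point set. -/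
open Set Topology

open Real in
lemma bk_sproj_exp (θ : ℝ) : sproj (Circle.exp θ) = Real.sin θ / (Real.cos θ - 1) := by
  simp [sproj, Circle.coe_exp, Complex.exp_ofReal_mul_I_re, Complex.exp_ofReal_mul_I_im]

open Real in
lemma bk_mono : StrictMonoOn (fun θ : ℝ => Real.sin θ / (Real.cos θ - 1))
    (Set.Ioo 0 (2 * π)) := by
  intro a ha b hb hab
  obtain ⟨ha0, ha2⟩ := ha
  obtain ⟨hb0, hb2⟩ := hb
  have hsa : 0 < Real.sin (a / 2) := Real.sin_pos_of_pos_of_lt_pi (by linarith) (by linarith)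
  have hsb : 0 < Real.sin (b / 2) := Real.sin_pos_of_pos_of_lt_pi (by linarith) (by linarith)
  have hsub : 0 < Real.sin (b / 2 - a / 2) :=
    Real.sin_pos_of_pos_of_lt_pi (by linarith) (by linarith)
  have ea : Real.sin a = 2 * Real.sin (a / 2) * Real.cos (a / 2) := by
    conv_lhs => rw [show a = 2 * (a / 2) by ring, Real.sin_two_mul]
  have eb : Real.sin b = 2 * Real.sin (b / 2) * Real.cos (b / 2) := by
    conv_lhs => rw [show b = 2 * (b / 2) by ring, Real.sin_two_mul]
  have ca : Real.cos a = 1 - 2 * Real.sin (a / 2) ^ 2 := by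
    conv_lhs => rw [show a = 2 * (a / 2) by ring, Real.cos_two_mul]
    nlinarith [Real.sin_sq_add_cos_sq (a / 2)]
  have cb : Real.cos b = 1 - 2 * Real.sin (b / 2) ^ 2 := by
    conv_lhs => rw [show b = 2 * (b / 2) by ring, Real.cos_two_mul]
    nlinarith [Real.sin_sq_add_cos_sq (b / 2)]
  have esub : Real.sin (b / 2 - a / 2)
      = Real.sin (b / 2) * Real.cos (a / 2) - Real.cos (b / 2) * Real.sin (a / 2) :=
    Real.sin_sub _ _
  have hda : 0 < 1 - Real.cos a := by nlinarith
  have hdb : 0 < 1 - Real.cos b := by nlinarith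
  have key : Real.sin b * (1 - Real.cos a) < Real.sin a * (1 - Real.cos b) := by
    rw [ea, eb, ca, cb]
    nlinarith [mul_pos (mul_pos hsa hsb) hsub]
  have e1 : Real.sin a / (Real.cos a - 1) = -(Real.sin a / (1 - Real.cos a)) := by
    rw [show Real.cos a - 1 = -(1 - Real.cos a) by ring, div_neg]
  have e2 : Real.sin b / (Real.cos b - 1) = -(Real.sin b / (1 - Real.cos b)) := by
    rw [show Real.cos b - 1 = -(1 - Real.cos b) by ring, div_neg]
  simp only [e1, e2, neg_lt_neg_iff]
  rw [div_lt_div_iff₀ hdb hda]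
  exact key

open Real in
lemma bk_exp_ne_one {s : ℝ} (hs : s ∈ Set.Ioo 0 (2 * π)) : Circle.exp s ≠ 1 := by
  intro h
  obtain ⟨n, hn⟩ := Circle.exp_eq_one.mp h
  have hpi := Real.pi_pos
  have h1 : (0 : ℝ) < n * (2 * π) := hn ▸ hs.1
  have h2 : (n : ℝ) * (2 * π) < 2 * π := hn ▸ hs.2
  have h3 : (0 : ℝ) < n := by nlinarith
  have h4 : (n : ℝ) < 1 := by nlinarith
  have h5 : (0 : ℤ) < n := by exact_mod_cast h3
  have h6 : n < 1 := by exact_mod_cast h4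
  omega

open Real in
lemma bk_exp_injOn {s t : ℝ} (hs : s ∈ Set.Ioo 0 (2 * π)) (ht : t ∈ Set.Ioo 0 (2 * π))
    (h : Circle.exp s = Circle.exp t) : s = t := by
  obtain ⟨m, hm⟩ := Circle.exp_eq_exp.mp h
  have hpi := Real.pi_pos
  have h1 : (m : ℝ) * (2 * π) = s - t := by linarith
  have h2 : s - t < 2 * π := by have := hs.2; have := ht.1; linarith
  have h3 : -(2 * π) < s - t := by have := hs.1; have := ht.2; linarith
  have h4 : (m : ℝ) < 1 := by nlinarith
  have h5 : (-1 : ℝ) < m := by nlinarith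
  have h6 : m < 1 := by exact_mod_cast h4
  have h7 : (-1 : ℤ) < m := by exact_mod_cast h5
  have hm0 : m = 0 := by omega
  rw [hm0] at hm; push_cast at hm; linarith

open Real in
lemma bk_exists_exp (w : Circle) (hw : w ≠ 1) :
    ∃ s ∈ Set.Ioo (0 : ℝ) (2 * π), Circle.exp s = w := by
  have hpi := Real.pi_pos
  have harg := Circle.exp_arg w
  have h1 := Complex.neg_pi_lt_arg (w : ℂ)
  have h2 := Complex.arg_le_pi (w : ℂ)
  rcases lt_trichotomy (Complex.arg (w : ℂ)) 0 with h | h | h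
  · exact ⟨Complex.arg (w : ℂ) + 2 * π, ⟨by linarith, by linarith⟩,
      by rw [Circle.exp_add_two_pi]; exact harg⟩
  · exact absurd (by rw [← harg, h, Circle.exp_zero]) hw
  · exact ⟨Complex.arg (w : ℂ), ⟨h, by linarith⟩, harg⟩

open Real in
lemma bk_oInt_eq (u : Circle) {t : ℝ} (ht : t ∈ Set.Ioo 0 (2 * π)) :
    oInt u (u * Circle.exp t) = (fun s => u * Circle.exp s) '' Set.Ioo 0 t := by
  ext p
  simp only [Set.mem_image, oInt, posOri, Set.mem_setOf_eq]
  constructor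
  · rintro ⟨hup, hpv, hvu, hlt⟩
    have hne : u⁻¹ * p ≠ 1 := fun h => hup (inv_mul_eq_one.mp h)
    obtain ⟨s, hs, hsp⟩ := bk_exists_exp _ hne
    have hp : p = u * Circle.exp s := by rw [hsp, mul_inv_cancel_left]
    have h1 : sproj (u⁻¹ * p) = Real.sin s / (Real.cos s - 1) := by
      rw [← hsp, bk_sproj_exp]
    have h2 : sproj (u⁻¹ * (u * Circle.exp t)) = Real.sin t / (Real.cos t - 1) := by
      rw [inv_mul_cancel_left, bk_sproj_exp]
    rw [h1, h2] at hlt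
    have hst : s ≠ t := fun h => hpv (by rw [hp, h])
    rcases lt_or_gt_of_ne hst with h | h
    · exact ⟨s, ⟨hs.1, h⟩, hp.symm⟩
    · exact absurd (bk_mono ht hs h) (not_lt.mpr hlt.le)
  · rintro ⟨s, ⟨hs0, hst⟩, rfl⟩
    have hs : s ∈ Set.Ioo 0 (2 * π) := ⟨hs0, hst.trans ht.2⟩
    refine ⟨fun h => bk_exp_ne_one hs (left_eq_mul.mp h),
      fun h => absurd (bk_exp_injOn hs ht (mul_left_cancel h)) hst.ne, 
      fun h => bk_exp_ne_one ht (left_eq_mul.mp h.symm), ?_⟩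
    have h1 : sproj (u⁻¹ * (u * Circle.exp s)) = Real.sin s / (Real.cos s - 1) := by
      rw [inv_mul_cancel_left, bk_sproj_exp]
    have h2 : sproj (u⁻¹ * (u * Circle.exp t)) = Real.sin t / (Real.cos t - 1) := by
      rw [inv_mul_cancel_left, bk_sproj_exp]
    rw [h1, h2]
    exact bk_mono hs ht hst

open Real in
lemma bk_oInt_rev (u : Circle) {t : ℝ} (ht : t ∈ Set.Ioo 0 (2 * π)) :
    oInt (u * Circle.exp t) u = (fun s => u * Circle.exp s) '' Set.Ioo t (2 * π) := by
  have hpi := Real.pi_pos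
  have ht' : 2 * π - t ∈ Set.Ioo 0 (2 * π) := ⟨by linarith [ht.2], by linarith [ht.1]⟩
  have hu : u = (u * Circle.exp t) * Circle.exp (2 * π - t) := by
    rw [mul_assoc, ← Circle.exp_add, show t + (2 * π - t) = 2 * π by ring,
      Circle.exp_two_pi, mul_one]
  calc oInt (u * Circle.exp t) u
      = oInt (u * Circle.exp t) ((u * Circle.exp t) * Circle.exp (2 * π - t)) := by rw [← hu]
    _ = (fun s => (u * Circle.exp t) * Circle.exp s) '' Set.Ioo 0 (2 * π - t) :=
        bk_oInt_eq _ ht'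
    _ = (fun s => u * Circle.exp s) '' Set.Ioo t (2 * π) := by
        ext p
        simp only [Set.mem_image, Set.mem_Ioo]
        constructor
        · rintro ⟨s, ⟨hs0, hs1⟩, rfl⟩
          exact ⟨t + s, ⟨by linarith, by linarith⟩,
            by rw [mul_assoc, ← Circle.exp_add]⟩
        · rintro ⟨s, ⟨hs0, hs1⟩, rfl⟩
          exact ⟨s - t, ⟨by linarith, by linarith⟩,
            by rw [mul_assoc, ← Circle.exp_add, add_sub_cancel]⟩

lemma bk_self_not_mem (u v : Circle) : u ∉ oInt u v := fun h => h.1 rfl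
lemma bk_right_not_mem (u v : Circle) : v ∉ oInt u v := fun h => h.2.1 rfl

open Real in
lemma bk_exists_t {u v : Circle} (huv : u ≠ v) :
    ∃ t ∈ Set.Ioo (0 : ℝ) (2 * π), v = u * Circle.exp t := by
  obtain ⟨t, ht, hte⟩ := bk_exists_exp (u⁻¹ * v) (fun h => huv (inv_mul_eq_one.mp h))
  exact ⟨t, ht, by rw [hte, mul_inv_cancel_left]⟩

open Real in
lemma bk_compl {u v : Circle} (huv : u ≠ v) : (oInt u v)ᶜ = oInt v u ∪ {u, v} := by
  obtain ⟨t, ht, rfl⟩ := bk_exists_t huv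
  rw [bk_oInt_eq u ht, bk_oInt_rev u ht]
  ext p
  simp only [Set.mem_compl_iff, Set.mem_image, Set.mem_union, Set.mem_insert_iff,
    Set.mem_singleton_iff, Set.mem_Ioo]
  constructor
  · intro hp
    by_cases hpu : p = u
    · exact Or.inr (Or.inl hpu)
    · obtain ⟨s, hs, hsp⟩ := bk_exists_exp (u⁻¹ * p) (fun h => hpu (inv_mul_eq_one.mp h).symm)
      have hps : p = u * Circle.exp s := by rw [hsp, mul_inv_cancel_left]
      rcases lt_trichotomy s t with h | h | h
      · exact absurd ⟨s, ⟨hs.1, h⟩, hps.symm⟩ hp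
      · exact Or.inr (Or.inr (by rw [hps, h]))
      · exact Or.inl ⟨s, ⟨h, hs.2⟩, hps.symm⟩
  · rintro (⟨s, ⟨hs0, hs1⟩, rfl⟩ | h | h) ⟨s', ⟨hs0', hs1'⟩, he⟩
    · have := bk_exp_injOn ⟨hs0', hs1'.trans ht.2⟩ ⟨ht.1.trans hs0, hs1⟩
        (mul_left_cancel he)
      linarith
    · rw [h] at he
      exact bk_exp_ne_one ⟨hs0', hs1'.trans ht.2⟩ (left_eq_mul.mp he.symm)
    · rw [h] at he
      have := bk_exp_injOn ⟨hs0', hs1'.trans ht.2⟩ ht (mul_left_cancel he)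
      linarith

lemma bk_sproj_contOn : ContinuousOn sproj {z : Circle | z ≠ 1} := by
  apply ContinuousOn.div
  · exact (Complex.continuous_im.comp continuous_subtype_val).continuousOn
  · exact ((Complex.continuous_re.comp continuous_subtype_val).sub
      continuous_const).continuousOn
  · intro z hz
    intro h
    apply hz
    have h1 : (z : ℂ).re = 1 := by linarith [sub_eq_zero.mp h]
    have h2 := Circle.normSq_coe z
    rw [Complex.normSq_apply, h1] at h2
    have h3 : (z : ℂ).im = 0 := by nlinarith
    have : (z : ℂ) = 1 := Complex.ext (by simp [h1]) (by simp [h3])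
    exact Circle.coe_eq_one.mp this

lemma bk_oInt_eq_setOf {u v : Circle} (huv : u ≠ v) :
    oInt u v = {p | p ≠ u} ∩ (fun p => sproj (u⁻¹ * p)) ⁻¹' Set.Iio (sproj (u⁻¹ * v)) := by
  ext p
  simp only [oInt, posOri, Set.mem_setOf_eq, Set.mem_inter_iff, Set.mem_preimage,
    Set.mem_Iio]
  constructor
  · rintro ⟨h1, _, _, h4⟩
    exact ⟨fun h => h1 h.symm, h4⟩
  · rintro ⟨h1, h2⟩
    refine ⟨fun h => h1 h.symm, fun h => ?_, huv.symm, h2⟩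
    rw [h] at h2; exact lt_irrefl _ h2

lemma bk_open {u v : Circle} (huv : u ≠ v) : IsOpen (oInt u v) := by
  rw [bk_oInt_eq_setOf huv]
  apply ContinuousOn.isOpen_inter_preimage (s := {p : Circle | p ≠ u})
  · apply bk_sproj_contOn.comp (Continuous.continuousOn (by continuity))
    intro p hp h
    exact hp (inv_mul_eq_one.mp h).symm
  · exact isOpen_ne
  · exact isOpen_Iio

open Real in
lemma bk_mem_closure {u v : Circle} (huv : u ≠ v) :
    u ∈ closure (oInt u v) ∧ v ∈ closure (oInt u v) := by
  obtain ⟨t, ht, rfl⟩ := bk_exists_t huv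
  rw [bk_oInt_eq u ht]
  have hcont : Continuous (fun s : ℝ => u * Circle.exp s) :=
    continuous_const.mul Circle.exp.continuous
  have hsub := image_closure_subset_closure_image (s := Set.Ioo (0:ℝ) t) hcont
  rw [closure_Ioo (ne_of_lt ht.1)] at hsub
  constructor
  · have : u = (fun s : ℝ => u * Circle.exp s) 0 := by simp
    exact hsub ⟨0, Set.left_mem_Icc.mpr ht.1.le, by simp⟩
  · exact hsub ⟨t, Set.right_mem_Icc.mpr ht.1.le, rfl⟩

open Real in
lemma bk_closure {u v : Circle} (huv : u ≠ v) :
    closure (oInt u v) = oInt u v ∪ {u, v} := by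
  apply Set.Subset.antisymm
  · have h1 : oInt u v ⊆ (oInt v u)ᶜ := by
      intro p hp hp'
      have := bk_compl huv ▸ (Set.subset_union_left (t := ({u, v} : Set Circle)))
      exact (this hp') hp
    have h2 : closure (oInt u v) ⊆ (oInt v u)ᶜ :=
      closure_minimal h1 (isClosed_compl_iff.mpr (bk_open huv.symm))
    rw [bk_compl huv.symm] at h2
    intro p hp
    rcases h2 hp with h | h
    · exact Or.inl h
    · rcases h with h | h
      · exact Or.inr (Or.inr h)
      · exact Or.inr (Or.inl h)
  · rintro p (hp | hp)
    · exact subset_closure hp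
    · rcases hp with rfl | rfl
      · exact (bk_mem_closure huv).1
      · exact (bk_mem_closure huv).2

lemma bk_dual {u v : Circle} (huv : u ≠ v) : dual (oInt u v) = oInt v u := by
  unfold dual
  rw [bk_compl huv]
  apply Set.Subset.antisymm
  · intro p hp
    have hmem : p ∈ oInt v u ∪ {u, v} := interior_subset hp
    rcases hmem with h | h
    · exact h
    · exfalso
      obtain ⟨U, hUsub, hUo, hpU⟩ := mem_interior.mp hp
      have hcl : p ∈ closure (oInt u v) := by
        rw [bk_closure huv]
        rcases h with rfl | rfl
        · exact Or.inr (Or.inl rfl)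
        · exact Or.inr (Or.inr rfl)
      obtain ⟨q, hq1, hq2⟩ := mem_closure_iff.mp hcl U hUo hpU
      rcases hUsub hq1 with h' | h'
      · have : q ∈ (oInt u v)ᶜ := by
          rw [bk_compl huv]; exact Or.inl h'
        exact this hq2
      · have : q ∈ (oInt u v)ᶜ := by
          rw [bk_compl huv]; exact Or.inr h'
        exact this hq2
  · exact interior_maximal Set.subset_union_left (bk_open huv.symm)

open Real in
lemma bk_nonempty {u v : Circle} (huv : u ≠ v) : (oInt u v).Nonempty := by
  obtain ⟨t, ht, rfl⟩ := bk_exists_t huv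
  rw [bk_oInt_eq u ht]
  exact ⟨_, ⟨t / 2, ⟨by linarith [ht.1], by linarith [ht.1]⟩, rfl⟩⟩

open Real in
lemma bk_preconn {u v : Circle} (huv : u ≠ v) : IsPreconnected (oInt u v) := by
  obtain ⟨t, ht, rfl⟩ := bk_exists_t huv
  rw [bk_oInt_eq u ht]
  exact (isPreconnected_Ioo).image _
    ((continuous_const.mul Circle.exp.continuous).continuousOn)

instance : PreconnectedSpace Circle := by
  have : (Set.univ : Set Circle) = Set.range Circle.exp := by
    ext z
    simp only [Set.mem_univ, Set.mem_range, true_iff]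
    exact ⟨Complex.arg (z : ℂ), Circle.exp_arg z⟩
  refine ⟨?_⟩
  rw [this]
  exact isPreconnected_range Circle.exp.continuous

lemma bk_circle_nontrivial : ∃ z : Circle, z ≠ 1 := by
  refine ⟨Circle.exp Real.pi, bk_exp_ne_one ⟨Real.pi_pos, by linarith [Real.pi_pos]⟩⟩

lemma bk_open_infinite {U : Set Circle} (hU : IsOpen U) (hne : U.Nonempty) : U.Infinite := by
  intro hfin
  obtain ⟨x, hx⟩ := hne
  have h1 : IsClosed (U \ {x}) := ((hfin.subset Set.diff_subset).isClosed)
  have h2 : IsOpen ({x} : Set Circle) := by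
    have : ({x} : Set Circle) = U ∩ (U \ {x})ᶜ := by
      ext z
      simp only [Set.mem_singleton_iff, Set.mem_inter_iff, Set.mem_compl_iff,
        Set.mem_diff, not_and, not_not]
      constructor
      · rintro rfl; exact ⟨hx, fun _ => rfl⟩
      · rintro ⟨hz, h⟩; exact h hz
    rw [this]
    exact hU.inter h1.isOpen_compl
  have h3 : IsClopen ({x} : Set Circle) := ⟨isClosed_singleton, h2⟩
  rcases isClopen_iff.mp h3 with h | h
  · exact (Set.singleton_nonempty x).ne_empty h
  · obtain ⟨z, hz⟩ := bk_circle_nontrivial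
    have hz1 : z = x := by rw [← Set.mem_singleton_iff, h]; trivial
    have h11 : (1 : Circle) = x := by rw [← Set.mem_singleton_iff, h]; trivial
    exact hz (hz1.trans h11.symm)

lemma bk_fixed (g : Circle ≃ₜ Circle) (A : Set Circle) (hA : IsClosed A)
    (hne : A.Nonempty) (hconn : IsPreconnected A) (c : Circle) (hc : c ∉ A)
    (hg : ⇑g '' A ⊆ A) : ∃ x : Circle, g x = x := by
  set w : Circle → ℂ := fun z => -((z * c⁻¹ : Circle) : ℂ) with hw
  set φ : Circle → ℝ := fun z => Complex.arg (w z) with hφ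
  have hwabs : ∀ z : Circle, ‖w z‖ = 1 := by
    intro z; simp [hw, Circle.norm_coe]
  have hwne : ∀ z : Circle, z ≠ c → w z ∈ Complex.slitPlane := by
    intro z hz
    rw [Complex.mem_slitPlane_iff]
    by_contra h
    push_neg at h
    obtain ⟨h1, h2⟩ := h
    have h3 := hwabs z
    have h4 : Complex.normSq (w z) = 1 := by
      rw [← Complex.sq_norm, h3]; norm_num
    rw [Complex.normSq_apply, h2] at h4
    have h5 : (w z).re = -1 := by nlinarith
    have h6 : w z = -1 := Complex.ext (by simp [h5]) (by simp [h2])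
    have h7 : ((z * c⁻¹ : Circle) : ℂ) = 1 := by
      have := neg_eq_iff_eq_neg.mp h6
      rw [this]; norm_num
    have h8 : z * c⁻¹ = 1 := Circle.coe_eq_one.mp h7
    exact hz (by rwa [mul_inv_eq_one] at h8)
  have hwcont : Continuous w :=
    (continuous_subtype_val.comp (continuous_id.mul continuous_const)).neg
  have hφcont : ContinuousOn φ {z : Circle | z ≠ c} := by
    intro z hz
    exact ((Complex.continuousAt_arg (hwne z hz)).comp hwcont.continuousAt).continuousWithinAt
  have hφinj : ∀ z₁ z₂ : Circle, φ z₁ = φ z₂ → z₁ = z₂ := by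
    intro z₁ z₂ h
    have : w z₁ = w z₂ :=
      Complex.ext_norm_arg ((hwabs z₁).trans (hwabs z₂).symm) h
    have h2 : ((z₁ * c⁻¹ : Circle) : ℂ) = ((z₂ * c⁻¹ : Circle) : ℂ) := by
      have := neg_injective this
      exact this
    have h3 : z₁ * c⁻¹ = z₂ * c⁻¹ := Circle.coe_injective h2
    exact mul_right_cancel h3
  have hAsub : A ⊆ {z : Circle | z ≠ c} := fun x hx h => hc (h ▸ hx)
  have hgA : ∀ x ∈ A, g x ∈ A := fun x hx => hg ⟨x, hx, rfl⟩
  have hφA : ContinuousOn φ A := hφcont.mono hAsub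
  have hφgA : ContinuousOn (fun x => φ (g x)) A := by
    apply hφcont.comp g.continuous.continuousOn
    intro x hx
    exact hAsub (hgA x hx)
  by_contra hfix
  push_neg at hfix
  set f : Circle → ℝ := fun x => φ (g x) - φ x with hf
  have hfcont : ContinuousOn f A := hφgA.sub hφA
  have hfne : ∀ x ∈ A, f x ≠ 0 := by
    intro x hx h
    have : φ (g x) = φ x := by simpa [hf, sub_eq_zero] using h
    exact hfix x (hφinj _ _ this)
  have himg : IsPreconnected (f '' A) := hconn.image f hfcont
  have hord := himg.ordConnected
  have hAcomp : IsCompact A := hA.isCompact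
  obtain ⟨x₀, hx₀⟩ := hne
  rcases lt_or_gt_of_ne (hfne x₀ hx₀) with hneg | hpos
  · -- all f < 0 : use min of φ
    have hall : ∀ x ∈ A, f x < 0 := by
      intro x hx
      rcases lt_or_gt_of_ne (hfne x hx) with h | h
      · exact h
      · exfalso
        have h0 : (0 : ℝ) ∈ Set.Icc (f x₀) (f x) := ⟨hneg.le, h.le⟩
        have := hord.out ⟨x₀, hx₀, rfl⟩ ⟨x, hx, rfl⟩ h0
        obtain ⟨y, hy, hy0⟩ := this
        exact hfne y hy hy0
    obtain ⟨x₁, hx₁A, hx₁⟩ := hAcomp.exists_isMinOn ⟨x₀, hx₀⟩ hφA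
    have h1 : φ x₁ ≤ φ (g x₁) := hx₁ (hgA x₁ hx₁A)
    have h2 : f x₁ < 0 := hall x₁ hx₁A
    simp only [hf] at h2
    linarith
  · have hall : ∀ x ∈ A, 0 < f x := by
      intro x hx
      rcases lt_or_gt_of_ne (hfne x hx) with h | h
      · exfalso
        have h0 : (0 : ℝ) ∈ Set.Icc (f x) (f x₀) := ⟨h.le, hpos.le⟩
        have := hord.out ⟨x, hx, rfl⟩ ⟨x₀, hx₀, rfl⟩ h0
        obtain ⟨y, hy, hy0⟩ := this
        exact hfne y hy hy0
      · exact h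
    obtain ⟨x₁, hx₁A, hx₁⟩ := hAcomp.exists_isMaxOn ⟨x₀, hx₀⟩ hφA
    have h1 : φ (g x₁) ≤ φ x₁ := hx₁ (hgA x₁ hx₁A)
    have h2 : 0 < f x₁ := hall x₁ hx₁A
    simp only [hf] at h2
    linarith


/-- If a `G`-invariant lamination system has a non-leaf ideal polygon `P` with `v_G(P)`
dense in `S¹`, then `G` has a nontrivial element with a fixed point. -/
theorem stmt16 (G : Subgroup (Circle ≃ₜ Circle)) (hor : ∀ g ∈ G, OrientPres g)
    (L : Set (Set Circle)) (hL : LamSys L) (hinv : GInv G L)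
    (P : Set (Set Circle)) (hP : IsGap L P) (hfin : (vset P).Finite) (hnl : ¬ IsLeafGap P)
    (hdense : Dense (vOrb G P)) :
    ∃ g ∈ G, g ≠ 1 ∧ ∃ x : Circle, g x = x := by
  obtain ⟨hPL, hPdisj, hPcov⟩ := hP
  have hND : ∀ K ∈ P, ∃ u v : Circle, u ≠ v ∧ K = oInt u v := fun K hK => hL.nd K (hPL hK)
  have hopenP : ∀ K ∈ P, IsOpen K := by
    intro K hK; obtain ⟨u, v, huv, rfl⟩ := hND K hK; exact bk_open huv
  have hPne : P.Nonempty := by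
    obtain ⟨I₀, hI₀⟩ := hL.nonempty
    obtain ⟨J, hJ, _⟩ := hPcov I₀ hI₀
    exact ⟨J, hJ⟩
  have hfrontier : ∀ K ∈ P, frontier K ⊆ vset P := by
    intro K hK y hy
    intro hyU
    obtain ⟨M, hM, hyM⟩ := Set.mem_sUnion.mp hyU
    rcases eq_or_ne M K with rfl | hMK
    · exact hy.2 (by rw [(hopenP M hM).interior_eq]; exact hyM)
    · have hop := hopenP M hM
      obtain ⟨z, hz⟩ := mem_closure_iff.mp (frontier_subset_closure hy) M hop hyM
      exact Set.eq_empty_iff_forall_notMem.mp (hPdisj M hM K hK hMK) z hz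
  have hPfin : P.Finite := by
    have hchoice : ∀ K ∈ P, ∃ uv : Circle × Circle, uv.1 ≠ uv.2 ∧ K = oInt uv.1 uv.2 := by
      intro K hK; obtain ⟨u, v, h1, h2⟩ := hND K hK; exact ⟨(u, v), h1, h2⟩
    choose! F hF1 hF2 using hchoice
    have hinjOn : Set.InjOn F P := by
      intro K hK K' hK' h
      rw [hF2 K hK, hF2 K' hK', h]
    have hmaps : ∀ K ∈ P, F K ∈ (vset P) ×ˢ (vset P) := by
      intro K hK
      have h2 := hF2 K hK
      have h1 := hF1 K hK
      constructor
      · apply hfrontier K hK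
        have hmem : (F K).1 ∈ frontier (oInt (F K).1 (F K).2) :=
          ⟨(bk_mem_closure h1).1,
            by rw [(bk_open h1).interior_eq]; exact bk_self_not_mem _ _⟩
        rwa [← h2] at hmem
      · apply hfrontier K hK
        have hmem : (F K).2 ∈ frontier (oInt (F K).1 (F K).2) :=
          ⟨(bk_mem_closure h1).2,
            by rw [(bk_open h1).interior_eq]; exact bk_right_not_mem _ _⟩
        rwa [← h2] at hmem
    apply Set.Finite.of_finite_image ?_ hinjOn
    apply Set.Finite.subset (hfin.prod hfin)
    rintro _ ⟨Q, hQ, rfl⟩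
    exact hmaps Q hQ
  have hvim : ∀ g : Circle ≃ₜ Circle, vset (gapIm g P) = ⇑g '' vset P := by
    intro g
    unfold vset gapIm
    rw [← Set.image_sUnion, Set.image_compl_eq g.bijective]
  have hEndpt : ∀ x ∈ vset P, ∃ K ∈ P, x ∈ closure K := by
    intro x hx
    have hcl : x ∈ closure (⋃₀ P) := by
      by_contra hcon
      rw [mem_closure_iff] at hcon
      push_neg at hcon
      obtain ⟨U, hUo, hxU, hUdisj⟩ := hcon
      have hUsub : U ⊆ vset P := by
        intro z hz hz2
        exact Set.eq_empty_iff_forall_notMem.mp hUdisj z ⟨hz, hz2⟩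
      exact absurd (hfin.subset hUsub) (bk_open_infinite hUo ⟨x, hxU⟩)
    rw [Set.sUnion_eq_biUnion, hPfin.closure_biUnion] at hcl
    simpa using hcl
  have hclJ : ∀ I ∈ P, ∀ J ∈ P, ∀ y, y ∈ closure J → y ∈ I → J = I := by
    intro I hI J hJ y hyJ hyI
    by_contra hne
    have hmem : y ∈ J ∪ frontier J := by
      rcases em (y ∈ J) with hc | hc
      · exact Or.inl hc
      · exact Or.inr ⟨hyJ, fun h2 => hc (interior_subset h2)⟩
    rcases hmem with hc | hc
    · exact Set.eq_empty_iff_forall_notMem.mp (hPdisj J hJ I hI hne) y ⟨hc, hyI⟩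
    · exact (hfrontier J hJ hc) (Set.mem_sUnion.mpr ⟨I, hI, hyI⟩)
  have htwo : ∀ K ∈ P, ∃ M ∈ P, M ≠ K := by
    intro K hK
    by_contra hcon
    push_neg at hcon
    obtain ⟨u, v, huv, hKuv⟩ := hND K hK
    have hsub : oInt v u ⊆ vset P := by
      intro z hz hz2
      obtain ⟨M, hM, hzM⟩ := Set.mem_sUnion.mp hz2
      rw [hcon M hM, hKuv] at hzM
      have hzc : z ∈ (oInt u v)ᶜ := by rw [bk_compl huv]; exact Or.inl hz
      exact hzc hzM
    exact ((bk_open_infinite (bk_open huv.symm) (bk_nonempty huv.symm)).mono hsub) hfin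
  have hD : ∀ I ∈ P, ∃ K ∈ P, ∃ g : Circle ≃ₜ Circle, g ∈ G ∧ ⇑g '' K ⊂ I := by
    intro I hI
    obtain ⟨u, v, huv, hIuv⟩ := hND I hI
    have hIopen : IsOpen I := hIuv ▸ bk_open huv
    have hIne : I.Nonempty := hIuv ▸ bk_nonempty huv
    obtain ⟨y, hyI, hyOrb⟩ := hdense.inter_open_nonempty I hIopen hIne
    simp only [vOrb, Set.mem_iUnion] at hyOrb
    obtain ⟨g, hgG, hyV⟩ := hyOrb
    have hyV' : y ∈ ⇑g '' vset P := by rw [← hvim g]; exact hyV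
    obtain ⟨x, hxv, hgx⟩ := hyV'
    have hyNotIm : ∀ M ∈ P, y ∉ ⇑g '' M := by
      intro M hM hc
      exact hyV (Set.mem_sUnion.mpr ⟨⇑g '' M, ⟨M, hM, rfl⟩, hc⟩)
    obtain ⟨K₀, hK₀, hxcl⟩ := hEndpt x hxv
    obtain ⟨a, b, hab, hKab⟩ := hND K₀ hK₀
    have hgK₀L : ⇑g '' K₀ ∈ L := hinv g hgG K₀ (hPL hK₀)
    obtain ⟨J, hJ, hlies⟩ := hPcov _ hgK₀L
    rcases hlies with hsub | hsub
    · have hycl : y ∈ closure (⇑g '' K₀) := by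
        rw [← Homeomorph.image_closure]
        exact ⟨x, hxcl, hgx⟩
      have hJI : J = I := hclJ I hI J hJ y (closure_mono hsub hycl) hyI
      refine ⟨K₀, hK₀, g, hgG, ?_⟩
      exact Set.ssubset_iff_subset_ne.mpr
        ⟨hJI ▸ hsub, fun hc => hyNotIm K₀ hK₀ (hc ▸ hyI)⟩
    · have hdualim : dual (⇑g '' K₀) = ⇑g '' dual K₀ := by
        unfold dual
        rw [← Set.image_compl_eq g.bijective, ← Homeomorph.image_interior]
      have hxK : x ∉ K₀ := fun hc => hxv (Set.mem_sUnion.mpr ⟨K₀, hK₀, hc⟩)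
      have hxcld : x ∈ closure (dual K₀) := by
        rw [hKab, bk_dual hab, bk_closure hab.symm]
        have hxc : x ∈ (oInt a b)ᶜ := by rw [← hKab]; exact hxK
        rw [bk_compl hab] at hxc
        rcases hxc with hc | hc
        · exact Or.inl hc
        · rcases hc with hc | hc
          · exact Or.inr (Or.inr hc)
          · exact Or.inr (Or.inl hc)
      have hycl : y ∈ closure (dual (⇑g '' K₀)) := by
        rw [hdualim, ← Homeomorph.image_closure]
        exact ⟨x, hxcld, hgx⟩
      have hJI : J = I := hclJ I hI J hJ y (closure_mono hsub hycl) hyI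
      obtain ⟨M, hM, hMK₀⟩ := htwo K₀ hK₀
      have hMdual : M ⊆ dual K₀ := by
        apply interior_maximal ?_ (hopenP M hM)
        intro z hz hz2
        exact Set.eq_empty_iff_forall_notMem.mp (hPdisj M hM K₀ hK₀ hMK₀) z ⟨hz, hz2⟩
      refine ⟨M, hM, g, hgG, ?_⟩
      have hsub2 : ⇑g '' M ⊆ I := by
        rw [← hJI]
        exact (Set.image_mono hMdual).trans (hdualim ▸ hsub)
      exact Set.ssubset_iff_subset_ne.mpr
        ⟨hsub2, fun hc => hyNotIm M hM (hc ▸ hyI)⟩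
  choose! K hKP g hgG hgsub using hD
  obtain ⟨I₀, hI₀⟩ := hPne
  set seq : ℕ → Set Circle := fun n => K^[n] I₀ with hseq
  have hseqP : ∀ n, seq n ∈ P := by
    intro n
    induction n with
    | zero => exact hI₀
    | succ m ih =>
      have : seq (m + 1) = K (seq m) := by
        rw [hseq]; simp [Function.iterate_succ_apply']
      rw [this]
      exact hKP _ ih
  have hstep : ∀ n, ⇑(g (seq n)) '' (seq (n + 1)) ⊂ seq n := by
    intro n
    have hs : seq (n + 1) = K (seq n) := by
      rw [hseq]; simp [Function.iterate_succ_apply']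
    rw [hs]
    exact hgsub (seq n) (hseqP n)
  have hcomp : ∀ k n, ∃ h : Circle ≃ₜ Circle, h ∈ G ∧ ⇑h '' (seq (n + k)) ⊆ seq n ∧
      (0 < k → ⇑h '' (seq (n + k)) ⊂ seq n) := by
    intro k
    induction k with
    | zero =>
      intro n
      have hid : ⇑(1 : Circle ≃ₜ Circle) = id := rfl
      refine ⟨1, G.one_mem, ?_, fun h0 => absurd h0 (lt_irrefl 0)⟩
      rw [hid, Set.image_id]
      exact subset_rfl
    | succ m ih =>
      intro n
      obtain ⟨h, hhG, hhsub, _⟩ := ih (n + 1)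
      have hco : ⇑(g (seq n) * h) '' (seq (n + (m + 1))) =
          ⇑(g (seq n)) '' (⇑h '' (seq ((n + 1) + m))) := by
        rw [show n + (m + 1) = (n + 1) + m by omega, ← Set.image_comp]
        rfl
      have hstrict : ⇑(g (seq n) * h) '' (seq (n + (m + 1))) ⊂ seq n := by
        rw [hco]
        exact ssubset_of_subset_of_ssubset (Set.image_mono hhsub) (hstep n)
      exact ⟨g (seq n) * h, G.mul_mem (hgG (seq n) (hseqP n)) hhG, hstrict.subset,
        fun _ => hstrict⟩
  have hnotinj : ¬ Function.Injective seq := by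
    intro hinj
    exact (Set.infinite_of_injective_forall_mem hinj hseqP) hPfin
  rw [Function.not_injective_iff] at hnotinj
  obtain ⟨a, b, heq, hne⟩ := hnotinj
  have hmain : ∃ (A : Set Circle) (h : Circle ≃ₜ Circle), A ∈ P ∧ h ∈ G ∧ ⇑h '' A ⊂ A := by
    rcases hne.lt_or_gt with hab | hab
    · obtain ⟨h, hhG, _, hstrict⟩ := hcomp (b - a) a
      refine ⟨seq a, h, hseqP a, hhG, ?_⟩
      have h2 := hstrict (by omega)
      rwa [show a + (b - a) = b by omega, ← heq] at h2
    · obtain ⟨h, hhG, _, hstrict⟩ := hcomp (a - b) b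
      refine ⟨seq b, h, hseqP b, hhG, ?_⟩
      have h2 := hstrict (by omega)
      rwa [show b + (a - b) = a by omega, heq] at h2
  obtain ⟨A, h, hAP, hhG, hstrict⟩ := hmain
  obtain ⟨u, v, huv, hAuv⟩ := hND A hAP
  have hne1 : h ≠ 1 := by
    rintro rfl
    have hid : ⇑(1 : Circle ≃ₜ Circle) = id := rfl
    rw [hid, Set.image_id] at hstrict
    exact (ssubset_irrefl A) hstrict
  have hmap : ⇑h '' closure A ⊆ closure A := by
    rw [Homeomorph.image_closure]
    exact closure_mono hstrict.subset
  obtain ⟨c, hc⟩ := bk_nonempty huv.symm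
  have hcA : c ∉ closure A := by
    rw [hAuv, bk_closure huv]
    intro hmem
    have hcc : c ∈ (oInt v u)ᶜ := by
      rw [bk_compl huv.symm]
      rcases hmem with h' | h'
      · exact Or.inl h'
      · rcases h' with h' | h'
        · exact Or.inr (Or.inr h')
        · exact Or.inr (Or.inl h')
    exact hcc hc
  have hconn : IsPreconnected (closure A) := by
    rw [hAuv]; exact (bk_preconn huv).closure
  have hAne : (closure A).Nonempty := by
    rw [hAuv]; exact (bk_nonempty huv).mono subset_closure
  obtain ⟨x, hx⟩ := bk_fixed h (closure A) isClosed_closure hAne hconn c hcA hmap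
  exact ⟨h, hhG, hne1, x, hx⟩
end

section
/- Let G ≤ Homeo+(S^1) and L a G-invariant lamination system containing a non-leaf ideal polygon P with v_G(P) = ∪_{g∈G} v(g(P)) dense in S^1. Then G is not abelian. -/
open Set Topology

noncomputable section

noncomputable section
open Filter

namespace CircArc

lemma denom_ne (t : ℝ) : t^2+1 ≠ 0 := by positivity

def stInv (t : ℝ) : Circle :=
  ⟨⟨(t^2-1)/(t^2+1), -(2*t)/(t^2+1)⟩, by
    show _ ∈ Metric.sphere (0:ℂ) 1
    rw [Metric.mem_sphere, dist_zero_right, Complex.norm_def,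
      Complex.normSq_mk]
    have h : t^2+1 ≠ 0 := denom_ne t
    rw [show ((t^2-1)/(t^2+1)) * ((t^2-1)/(t^2+1)) + (-(2*t)/(t^2+1)) * (-(2*t)/(t^2+1))
        = 1 by field_simp; ring]
    exact Real.sqrt_one⟩

@[simp] lemma stInv_re (t : ℝ) : (stInv t : ℂ).re = (t^2-1)/(t^2+1) := rfl
@[simp] lemma stInv_im (t : ℝ) : (stInv t : ℂ).im = -(2*t)/(t^2+1) := rfl

lemma stInv_ne_one (t : ℝ) : stInv t ≠ 1 := by
  intro h
  have h1 : (stInv t : ℂ).re = 1 := by rw [h]; rfl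
  rw [stInv_re] at h1
  have h2 : t^2+1 ≠ 0 := denom_ne t
  field_simp at h1
  linarith

@[simp] lemma sproj_stInv (t : ℝ) : sproj (stInv t) = t := by
  have h2 : (t:ℝ)^2+1 ≠ 0 := denom_ne t
  unfold sproj
  rw [stInv_re, stInv_im]
  rw [div_eq_iff]
  · field_simp; ring
  · intro h
    rw [div_sub' h2] at h
    have := (div_eq_zero_iff.1 h).resolve_right h2
    linarith

lemma stInv_injective : Function.Injective stInv := by
  intro a b h
  have := congrArg sproj h
  simpa using this

lemma re_ne_one {z : Circle} (h : z ≠ 1) : (z : ℂ).re ≠ 1 := by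
  intro hre
  apply h
  have hn : (z:ℂ).re * (z:ℂ).re + (z:ℂ).im * (z:ℂ).im = 1 := by
    have := Circle.normSq_coe z
    rwa [Complex.normSq_apply] at this
  have him : (z:ℂ).im = 0 := by nlinarith
  apply Circle.ext; apply Complex.ext
  · simpa using hre
  · simpa using him

lemma circle_sq (z : Circle) : (z:ℂ).re ^2 + (z:ℂ).im ^2 = 1 := by
  have := Circle.normSq_coe z
  rw [Complex.normSq_apply] at this; nlinarith [this]

lemma stInv_sproj {z : Circle} (h : z ≠ 1) : stInv (sproj z) = z := by
  have hre : (z:ℂ).re ≠ 1 := re_ne_one h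
  have hre' : (z:ℂ).re - 1 ≠ 0 := sub_ne_zero.2 hre
  have hn : (z:ℂ).re ^2 + (z:ℂ).im ^2 = 1 := circle_sq z
  set x := (z:ℂ).re with hx; set y := (z:ℂ).im with hy
  have ht : sproj z = y / (x - 1) := rfl
  have hden : sproj z ^ 2 + 1 = (2 * (1 - x)) / (x-1)^2 := by
    rw [ht]; field_simp; nlinarith [hn]
  have hx1 : (1 : ℝ) - x ≠ 0 := fun hc => hre' (by linarith [sub_eq_zero.1 hc])
  apply Circle.ext
  apply Complex.ext
  · rw [stInv_re, hden, ht]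
    show _ = x
    field_simp
    nlinarith [hn]
  · rw [stInv_im, hden, ht]
    show _ = y
    field_simp
    nlinarith [hn]

lemma sproj_inj {z w : Circle} (hz : z ≠ 1) (hw : w ≠ 1) (h : sproj z = sproj w) : z = w := by
  rw [← stInv_sproj hz, ← stInv_sproj hw, h]

lemma stInv_neg (t : ℝ) : stInv (-t) = (stInv t)⁻¹ := by
  apply Circle.ext
  rw [Circle.coe_inv_eq_conj]
  apply Complex.ext
  · rw [Complex.conj_re, stInv_re, stInv_re]; ring_nf
  · rw [Complex.conj_im, stInv_im, stInv_im]; ring_nf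

lemma continuous_stInv : Continuous stInv := by
  apply continuous_induced_rng.2
  show Continuous (fun t => (stInv t : ℂ))
  have h : (fun t => (stInv t : ℂ))
      = fun t => Complex.equivRealProdCLM.symm ((t^2-1)/(t^2+1), -(2*t)/(t^2+1)) := by
    funext t
    apply Complex.ext
    · simpa using stInv_re t
    · simpa using stInv_im t
  rw [h]
  apply Complex.equivRealProdCLM.symm.continuous.comp
  exact Continuous.prodMk (Continuous.div (by continuity) (by continuity) denom_ne)
    (Continuous.div (by continuity) (by continuity) denom_ne)

lemma continuousOn_sproj : ContinuousOn sproj {z : Circle | z ≠ 1} := by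
  apply ContinuousOn.div
  · exact (Complex.continuous_im.comp continuous_subtype_val).continuousOn
  · exact ((Complex.continuous_re.comp continuous_subtype_val).sub continuous_const).continuousOn
  · intro z hz
    exact sub_ne_zero.2 (re_ne_one hz)

lemma tendsto_coe_stInv_atTop : Tendsto (fun t => (stInv t : ℂ)) atTop (𝓝 1) := by
  have hre : Tendsto (fun t : ℝ => (t^2-1)/(t^2+1)) atTop (𝓝 1) := by
    have h : ∀ᶠ t : ℝ in atTop, (t^2-1)/(t^2+1) = 1 - 2/(t^2+1) := by
      filter_upwards [eventually_ge_atTop (1:ℝ)] with t _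
      have := denom_ne t
      field_simp
      ring
    rw [tendsto_congr' h]
    have h2 : Tendsto (fun t : ℝ => 2/(t^2+1)) atTop (𝓝 0) := by
      apply Tendsto.div_atTop tendsto_const_nhds
      exact tendsto_atTop_add_const_right _ 1 (tendsto_pow_atTop two_ne_zero)
    simpa using tendsto_const_nhds.sub h2
  have him : Tendsto (fun t : ℝ => -(2*t)/(t^2+1)) atTop (𝓝 0) := by
    have h : ∀ᶠ t : ℝ in atTop, -(2*t)/(t^2+1) = -2 * (t + 1/t)⁻¹ := by
      filter_upwards [eventually_ge_atTop (1:ℝ)] with t ht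
      have : t ≠ 0 := by linarith
      field_simp
    rw [tendsto_congr' h]
    have h2 : Tendsto (fun t : ℝ => (t + 1/t)⁻¹) atTop (𝓝 0) := by
      apply tendsto_inv_atTop_zero.comp
      apply Filter.Tendsto.atTop_add_zero_eventuallyLE tendsto_id
      filter_upwards [eventually_ge_atTop (1:ℝ)] with t ht
      positivity
    have := (tendsto_const_nhds (x := (-2:ℝ))).mul h2
    simpa using this
  have hp : Tendsto (fun t => ((((t:ℝ)^2-1)/(t^2+1) : ℝ), (-(2*t)/(t^2+1) : ℝ))) atTop
      (𝓝 (1, 0)) := hre.prodMk_nhds him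
  have h : (fun t => (stInv t : ℂ)) = fun t =>
      Complex.equivRealProdCLM.symm ((t^2-1)/(t^2+1), -(2*t)/(t^2+1)) := by
    funext t
    apply Complex.ext
    · simpa using stInv_re t
    · simpa using stInv_im t
  rw [h]
  have := (Complex.equivRealProdCLM.symm.continuous.tendsto (1,0)).comp hp
  convert this using 2
  · rfl
  · apply Complex.ext <;> simp

lemma tendsto_stInv_atTop : Tendsto stInv atTop (𝓝 1) := by
  refine tendsto_subtype_rng.2 ?_
  simpa using tendsto_coe_stInv_atTop

lemma tendsto_stInv_atBot : Tendsto stInv atBot (𝓝 1) := by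
  have h : stInv = fun t => (stInv (-t))⁻¹ := by
    funext t
    rw [← stInv_neg, neg_neg]
  rw [h]
  have h1 : Tendsto (fun t : ℝ => stInv (-t)) atBot (𝓝 1) :=
    tendsto_stInv_atTop.comp tendsto_neg_atBot_atTop
  have := (continuous_inv.tendsto (1 : Circle)).comp h1
  simpa [Function.comp_def] using this

end CircArc
end

noncomputable section
namespace CircArc
open Filter

variable {u v : Circle}

/-- parametrization of the circle minus `u`. -/
def karc (u : Circle) (t : ℝ) : Circle := u * stInv t

lemma karc_ne (u : Circle) (t : ℝ) : karc u t ≠ u := by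
  intro h
  apply stInv_ne_one t
  have := congrArg (fun z => u⁻¹ * z) h
  simp only [karc, inv_mul_cancel_left, inv_mul_cancel] at this
  exact this

lemma sproj_karc (u : Circle) (t : ℝ) : sproj (u⁻¹ * karc u t) = t := by
  rw [karc, inv_mul_cancel_left, sproj_stInv]

lemma continuous_karc (u : Circle) : Continuous (karc u) :=
  continuous_const.mul continuous_stInv

lemma karc_inj (u : Circle) : Function.Injective (karc u) := fun a b h =>
  stInv_injective (mul_left_cancel h)

lemma inv_mul_ne_one {p : Circle} (hp : p ≠ u) : u⁻¹ * p ≠ 1 := by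
  intro h
  exact hp (by rw [inv_mul_eq_one] at h; exact h.symm)

lemma karc_sproj {p : Circle} (hp : p ≠ u) : karc u (sproj (u⁻¹ * p)) = p := by
  rw [karc, stInv_sproj (inv_mul_ne_one hp), mul_inv_cancel_left]

/-- The "other side" arc. -/
def Wd (u v : Circle) : Set Circle := {p | p ≠ u ∧ sproj (u⁻¹*v) < sproj (u⁻¹*p)}

lemma oInt_eq (huv : u ≠ v) :
    oInt u v = {p | p ≠ u ∧ sproj (u⁻¹*p) < sproj (u⁻¹*v)} := by
  ext p
  simp only [oInt, posOri, Set.mem_setOf_eq]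
  constructor
  · rintro ⟨h1, _, _, h4⟩
    exact ⟨h1.symm, h4⟩
  · rintro ⟨h1, h4⟩
    refine ⟨h1.symm, ?_, huv.symm, h4⟩
    rintro rfl
    exact lt_irrefl _ h4

lemma oInt_image (huv : u ≠ v) :
    oInt u v = karc u '' Set.Iio (sproj (u⁻¹*v)) := by
  rw [oInt_eq huv]
  ext p
  constructor
  · rintro ⟨h1, h4⟩
    exact ⟨sproj (u⁻¹*p), h4, karc_sproj h1⟩
  · rintro ⟨t, ht, rfl⟩
    exact ⟨karc_ne u t, by rwa [sproj_karc]⟩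

lemma Wd_image : Wd u v = karc u '' Set.Ioi (sproj (u⁻¹*v)) := by
  ext p
  constructor
  · rintro ⟨h1, h4⟩
    exact ⟨sproj (u⁻¹*p), h4, karc_sproj h1⟩
  · rintro ⟨t, ht, rfl⟩
    exact ⟨karc_ne u t, by rwa [sproj_karc]⟩

lemma isOpen_slice (u : Circle) {s : Set ℝ} (hs : IsOpen s) :
    IsOpen {p : Circle | p ≠ u ∧ sproj (u⁻¹*p) ∈ s} := by
  have hA : IsOpen ({z : Circle | z ≠ 1} ∩ sproj⁻¹' s) :=
    continuousOn_sproj.isOpen_inter_preimage (isOpen_ne) hs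
  have he : {p : Circle | p ≠ u ∧ sproj (u⁻¹*p) ∈ s}
      = (fun p => u⁻¹ * p)⁻¹' ({z : Circle | z ≠ 1} ∩ sproj⁻¹' s) := by
    ext p
    simp only [Set.mem_setOf_eq, Set.mem_preimage, Set.mem_inter_iff]
    constructor
    · rintro ⟨h1, h2⟩
      exact ⟨inv_mul_ne_one h1, h2⟩
    · rintro ⟨h1, h2⟩
      refine ⟨fun h => h1 ?_, h2⟩
      rw [h, inv_mul_cancel]
  rw [he]
  exact hA.preimage (continuous_const.mul continuous_id)

lemma isOpen_oInt (huv : u ≠ v) : IsOpen (oInt u v) := by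
  rw [oInt_eq huv]
  exact isOpen_slice u isOpen_Iio

lemma isOpen_Wd : IsOpen (Wd u v) :=
  isOpen_slice u isOpen_Ioi

lemma u_not_mem_oInt (huv : u ≠ v) : u ∉ oInt u v := by
  rw [oInt_eq huv]; rintro ⟨h, _⟩; exact h rfl

lemma v_not_mem_oInt (huv : u ≠ v) : v ∉ oInt u v := by
  rw [oInt_eq huv]; rintro ⟨_, h⟩; exact lt_irrefl _ h

lemma u_not_mem_Wd : u ∉ Wd u v := by rintro ⟨h, _⟩; exact h rfl

lemma v_not_mem_Wd : v ∉ Wd u v := by rintro ⟨_, h⟩; exact lt_irrefl _ h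

lemma compl_oInt (huv : u ≠ v) : (oInt u v)ᶜ = Wd u v ∪ {u, v} := by
  rw [oInt_eq huv]
  ext p
  simp only [Set.mem_compl_iff, Set.mem_setOf_eq, Set.mem_union, Set.mem_insert_iff,
    Set.mem_singleton_iff, not_and, not_lt, Wd]
  constructor
  · intro h
    by_cases hpu : p = u
    · exact Or.inr (Or.inl hpu)
    rcases lt_trichotomy (sproj (u⁻¹*p)) (sproj (u⁻¹*v)) with hlt | heq | hgt
    · exact absurd hlt (by simpa using (h hpu).not_gt)
    · refine Or.inr (Or.inr ?_)
      exact mul_left_cancel (sproj_inj (inv_mul_ne_one hpu) (inv_mul_ne_one huv.symm) heq)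
    · exact Or.inl ⟨hpu, hgt⟩
  · rintro (⟨h1, h2⟩ | h | h)
    · intro _; exact le_of_lt h2
    · intro hc; exact absurd h hc
    · subst h; intro _; exact le_refl _

lemma compl_Wd (huv : u ≠ v) : (Wd u v)ᶜ = oInt u v ∪ {u, v} := by
  have h := compl_oInt huv
  rw [oInt_eq huv]
  ext p
  simp only [Set.mem_compl_iff, Set.mem_setOf_eq, Set.mem_union, Set.mem_insert_iff,
    Set.mem_singleton_iff, not_and, not_lt, Wd]
  constructor
  · intro h
    by_cases hpu : p = u
    · exact Or.inr (Or.inl hpu)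
    rcases lt_trichotomy (sproj (u⁻¹*p)) (sproj (u⁻¹*v)) with hlt | heq | hgt
    · exact Or.inl ⟨hpu, hlt⟩
    · refine Or.inr (Or.inr ?_)
      exact mul_left_cancel (sproj_inj (inv_mul_ne_one hpu) (inv_mul_ne_one huv.symm) heq)
    · exact absurd hgt (by simpa using (h hpu).not_gt)
  · rintro (⟨h1, h2⟩ | h | h)
    · intro _; exact le_of_lt h2
    · intro hc; exact absurd h hc
    · subst h; intro _; exact le_refl _

lemma karc_eq_v (huv : u ≠ v) : karc u (sproj (u⁻¹ * v)) = v :=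
  karc_sproj huv.symm

lemma tendsto_karc_atBot (u : Circle) : Tendsto (karc u) atBot (𝓝 u) := by
  have := ((continuous_mul_left u).tendsto 1).comp tendsto_stInv_atBot
  exact (by simpa [Function.comp_def] using this : Tendsto (fun t => u * stInv t) atBot (𝓝 u))

lemma tendsto_karc_atTop (u : Circle) : Tendsto (karc u) atTop (𝓝 u) := by
  have := ((continuous_mul_left u).tendsto 1).comp tendsto_stInv_atTop
  exact (by simpa [Function.comp_def] using this : Tendsto (fun t => u * stInv t) atTop (𝓝 u))

lemma closure_oInt (huv : u ≠ v) : closure (oInt u v) = oInt u v ∪ {u, v} := by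
  apply subset_antisymm
  · have hcl : IsClosed (oInt u v ∪ {u, v}) := by
      rw [← compl_Wd huv]
      exact isOpen_Wd.isClosed_compl
    exact closure_minimal Set.subset_union_left hcl
  · apply Set.union_subset subset_closure
    rintro p (rfl | rfl)
    · apply mem_closure_of_tendsto (tendsto_karc_atBot p)
      filter_upwards [eventually_lt_atBot (sproj (p⁻¹*v))] with t ht
      rw [oInt_image huv]
      exact ⟨t, ht, rfl⟩
    · have h1 : karc u '' closure (Set.Iio (sproj (u⁻¹*p)))
          ⊆ closure (karc u '' Set.Iio (sproj (u⁻¹*p))) :=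
        image_closure_subset_closure_image (continuous_karc u)
      have h2 : p ∈ karc u '' closure (Set.Iio (sproj (u⁻¹*p))) := by
        rw [closure_Iio]
        exact ⟨_, Set.self_mem_Iic, karc_eq_v huv⟩
      rw [oInt_image huv]
      exact h1 h2

lemma closure_Wd (huv : u ≠ v) : closure (Wd u v) = Wd u v ∪ {u, v} := by
  apply subset_antisymm
  · have hcl : IsClosed (Wd u v ∪ {u, v}) := by
      rw [← compl_oInt huv]
      exact (isOpen_oInt huv).isClosed_compl
    exact closure_minimal Set.subset_union_left hcl
  · apply Set.union_subset subset_closure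
    rintro p (rfl | rfl)
    · apply mem_closure_of_tendsto (tendsto_karc_atTop p)
      filter_upwards [eventually_gt_atTop (sproj (p⁻¹*v))] with t ht
      rw [Wd_image]
      exact ⟨t, ht, rfl⟩
    · have h1 : karc u '' closure (Set.Ioi (sproj (u⁻¹*p)))
          ⊆ closure (karc u '' Set.Ioi (sproj (u⁻¹*p))) :=
        image_closure_subset_closure_image (continuous_karc u)
      have h2 : p ∈ karc u '' closure (Set.Ioi (sproj (u⁻¹*p))) := by
        rw [closure_Ioi]
        exact ⟨_, Set.self_mem_Ici, karc_eq_v huv⟩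
      rw [Wd_image]
      exact h1 h2

lemma dual_oInt (huv : u ≠ v) : dual (oInt u v) = Wd u v := by
  unfold dual
  rw [interior_compl, closure_oInt huv]
  rw [Set.compl_union, compl_oInt huv]
  ext p
  simp only [Set.mem_inter_iff, Set.mem_union, Set.mem_compl_iff, Set.mem_insert_iff,
    Set.mem_singleton_iff]
  constructor
  · rintro ⟨hw | hw, hne⟩
    · exact hw
    · exact absurd hw hne
  · intro hw
    refine ⟨Or.inl hw, ?_⟩
    rintro (rfl | rfl)
    · exact u_not_mem_Wd hw
    · exact v_not_mem_Wd hw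

lemma compl_oInt_eq_closure_dual (huv : u ≠ v) :
    (oInt u v)ᶜ = closure (dual (oInt u v)) := by
  rw [dual_oInt huv, closure_Wd huv, compl_oInt huv]

lemma frontier_oInt (huv : u ≠ v) : frontier (oInt u v) = {u, v} := by
  rw [frontier, (isOpen_oInt huv).interior_eq, closure_oInt huv]
  ext p
  simp only [Set.mem_diff, Set.mem_union, Set.mem_insert_iff, Set.mem_singleton_iff]
  constructor
  · rintro ⟨h1 | h1, h2⟩
    · exact absurd h1 h2
    · exact h1
  · rintro (rfl | rfl)
    · exact ⟨Or.inr (Or.inl rfl), u_not_mem_oInt huv⟩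
    · exact ⟨Or.inr (Or.inr rfl), v_not_mem_oInt huv⟩

lemma nonempty_oInt (huv : u ≠ v) : (oInt u v).Nonempty := by
  rw [oInt_image huv]
  exact (Set.nonempty_Iio).image _

lemma infinite_oInt (huv : u ≠ v) : (oInt u v).Infinite := by
  rw [oInt_image huv]
  exact Set.Infinite.image (Set.injOn_of_injective (karc_inj u)) (Set.Iio_infinite _)

lemma infinite_Wd : (Wd u v : Set Circle).Infinite := by
  rw [Wd_image]
  exact Set.Infinite.image (Set.injOn_of_injective (karc_inj u)) (Set.Ioi_infinite _)

lemma preconnected_oInt (huv : u ≠ v) : IsPreconnected (oInt u v) := by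
  rw [oInt_image huv]
  exact (isPreconnected_Iio).image _ (continuous_karc u).continuousOn

end CircArc
end

noncomputable section
open CircArc

/-! ### basic facts about nondegenerate intervals -/

lemma IsND.isOpen {I : Set Circle} (h : IsND I) : IsOpen I := by
  obtain ⟨u, v, huv, rfl⟩ := h; exact isOpen_oInt huv

lemma IsND.nonempty {I : Set Circle} (h : IsND I) : I.Nonempty := by
  obtain ⟨u, v, huv, rfl⟩ := h; exact nonempty_oInt huv

lemma IsND.infinite {I : Set Circle} (h : IsND I) : I.Infinite := by
  obtain ⟨u, v, huv, rfl⟩ := h; exact infinite_oInt huv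

lemma IsND.preconnected {I : Set Circle} (h : IsND I) : IsPreconnected I := by
  obtain ⟨u, v, huv, rfl⟩ := h; exact preconnected_oInt huv

lemma IsND.compl_eq_closure_dual {I : Set Circle} (h : IsND I) :
    Iᶜ = closure (dual I) := by
  obtain ⟨u, v, huv, rfl⟩ := h; exact compl_oInt_eq_closure_dual huv

lemma IsND.frontier_pair {I : Set Circle} (h : IsND I) :
    ∃ a b : Circle, a ≠ b ∧ frontier I = {a, b} := by
  obtain ⟨u, v, huv, rfl⟩ := h; exact ⟨u, v, huv, frontier_oInt huv⟩

lemma IsND.closure_eq {I : Set Circle} (h : IsND I) :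
    closure I = I ∪ frontier I := by
  rw [h.isOpen.frontier_eq, Set.union_diff_self]
  exact (Set.union_eq_self_of_subset_left subset_closure).symm

lemma compl_dual_eq_closure {I : Set Circle} : (dual I)ᶜ = closure I := by
  rw [dual, interior_compl, compl_compl]

/-- an open set disjoint from `B` is disjoint from `closure B`. -/
lemma open_disj_closure {A B : Set Circle} (hA : IsOpen A) (h : A ∩ B = ∅) :
    A ∩ closure B = ∅ := by
  ext p
  simp only [Set.mem_inter_iff, Set.mem_empty_iff_false, iff_false, not_and]
  intro hpA hpB
  obtain ⟨q, hq1, hq2⟩ := mem_closure_iff.1 hpB A hA hpA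
  have hq : q ∈ A ∩ B := ⟨hq1, hq2⟩
  rw [h] at hq
  exact hq

/-- no three distinct points fit in a pair. -/
lemma not_three_in_pair {a b p q r : Circle} {S : Set Circle} (hS : S ⊆ {a, b})
    (hp : p ∈ S) (hq : q ∈ S) (hr : r ∈ S)
    (hpq : p ≠ q) (hpr : p ≠ r) (hqr : q ≠ r) : False := by
  rcases hS hp with rfl | rfl <;> rcases hS hq with h2 | h2 <;> rcases hS hr with h3 | h3 <;>
    first
      | exact hpq (by simp_all)
      | exact hpr (by simp_all)
      | exact hqr (by simp_all)

/-! ### facts about gaps -/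

section Gap

variable {L P : Set (Set Circle)}

lemma nd_of_mem_gap (hL : LamSys L) (hP : IsGap L P) {I : Set Circle} (hI : I ∈ P) : IsND I :=
  hL.nd I (hP.1 hI)

lemma vset_disj {I : Set Circle} (hI : I ∈ P) : vset P ∩ I = ∅ := by
  ext p
  simp only [Set.mem_inter_iff, Set.mem_empty_iff_false, iff_false, not_and, vset,
    Set.mem_compl_iff]
  intro h hpI
  exact h ⟨I, hI, hpI⟩

lemma frontier_subset_vset (hL : LamSys L) (hP : IsGap L P) {I : Set Circle} (hI : I ∈ P) :
    frontier I ⊆ vset P := by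
  intro x hx
  simp only [vset, Set.mem_compl_iff]
  rintro ⟨J, hJ, hxJ⟩
  by_cases hIJ : J = I
  · subst hIJ
    rw [(nd_of_mem_gap hL hP hI).isOpen.frontier_eq] at hx
    exact hx.2 hxJ
  · have hdisj : J ∩ I = ∅ := hP.2.1 J hJ I hI hIJ
    have hd := open_disj_closure (nd_of_mem_gap hL hP hJ).isOpen hdisj
    have hxcl : x ∈ closure I := frontier_subset_closure hx
    have hq : x ∈ J ∩ closure I := ⟨hxJ, hxcl⟩
    rw [hd] at hq
    exact hq

lemma sep_closure (hL : LamSys L) (hP : IsGap L P) {I J : Set Circle}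
    (hI : I ∈ P) (hJ : J ∈ P) (hIJ : I ≠ J) : I ∩ closure J = ∅ :=
  open_disj_closure (nd_of_mem_gap hL hP hI).isOpen (hP.2.1 I hI J hJ hIJ)

lemma closure_inter_closure (hL : LamSys L) (hP : IsGap L P) {I J : Set Circle}
    (hI : I ∈ P) (hJ : J ∈ P) (hIJ : I ≠ J) :
    closure I ∩ closure J ⊆ frontier I := by
  intro x hx
  have h1 : closure I = I ∪ frontier I := (nd_of_mem_gap hL hP hI).closure_eq
  rcases (h1 ▸ hx.1) with hxI | hxf
  · have hd := sep_closure hL hP hI hJ hIJ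
    have hq : x ∈ I ∩ closure J := ⟨hxI, hx.2⟩
    rw [hd] at hq
    exact hq.elim
  · exact hxf

end Gap

/-! ### homeomorphism image facts -/

section Homeo

lemma mul_apply' (g h : Circle ≃ₜ Circle) (p : Circle) : (g * h) p = g (h p) := rfl

lemma coe_mul' (g h : Circle ≃ₜ Circle) : ⇑(g * h) = ⇑g ∘ ⇑h := rfl

lemma image_mul_homeo (g h : Circle ≃ₜ Circle) (S : Set Circle) :
    ⇑(g * h) '' S = ⇑g '' (⇑h '' S) := by
  rw [coe_mul', Set.image_comp]

lemma image_inv_image (g : Circle ≃ₜ Circle) (S : Set Circle) :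
    ⇑g '' (⇑g⁻¹ '' S) = S := by
  rw [← Set.image_comp]
  have h : ⇑g ∘ ⇑g⁻¹ = id := funext fun p => g.apply_symm_apply p
  rw [h, Set.image_id]

lemma image_inv_image' (g : Circle ≃ₜ Circle) (S : Set Circle) :
    ⇑g⁻¹ '' (⇑g '' S) = S := by
  rw [← Set.image_comp]
  have h : ⇑g⁻¹ ∘ ⇑g = id := funext fun p => g.symm_apply_apply p
  rw [h, Set.image_id]

lemma dual_image (g : Circle ≃ₜ Circle) (S : Set Circle) :
    ⇑g '' dual S = dual (⇑g '' S) := by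
  unfold dual
  rw [g.image_interior, Set.image_compl_eq g.bijective]

lemma gapIm_comp (g h : Circle ≃ₜ Circle) (P : Set (Set Circle)) :
    gapIm g (gapIm h P) = gapIm (g * h) P := by
  unfold gapIm
  rw [Set.image_image]
  have h2 : (fun x => ⇑g '' (⇑h '' x)) = (fun I => ⇑(g * h) '' I) :=
    funext fun I => (image_mul_homeo g h I).symm
  rw [h2]

lemma gapIm_one (P : Set (Set Circle)) : gapIm 1 P = P := by
  unfold gapIm
  have h : (fun I => ⇑(1 : Circle ≃ₜ Circle) '' I) = id := by
    funext I
    simp only [id]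
    have : ⇑(1 : Circle ≃ₜ Circle) = id := rfl
    rw [this, Set.image_id]
  rw [h, Set.image_id]

lemma gapIm_inv_ne {g : Circle ≃ₜ Circle} {P : Set (Set Circle)}
    (h : gapIm g P ≠ P) : gapIm g⁻¹ P ≠ P := by
  intro hc
  apply h
  calc gapIm g P = gapIm g (gapIm g⁻¹ P) := by rw [hc]
    _ = gapIm (g * g⁻¹) P := gapIm_comp _ _ _
    _ = P := by rw [mul_inv_cancel]; exact gapIm_one P

lemma vset_gapIm (g : Circle ≃ₜ Circle) (P : Set (Set Circle)) :
    vset (gapIm g P) = ⇑g '' vset P := by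
  unfold vset gapIm
  have h1 : ⋃₀ ((fun I => ⇑g '' I) '' P) = ⇑g '' ⋃₀ P := by
    rw [Set.image_sUnion]
  rw [h1, Set.image_compl_eq g.bijective]

end Homeo

/-! ### image of a gap is a gap -/

lemma isGap_gapIm {G : Subgroup (Circle ≃ₜ Circle)} {L P : Set (Set Circle)}
    (hL : LamSys L) (hinv : GInv G L) (hP : IsGap L P)
    {x : Circle ≃ₜ Circle} (hx : x ∈ G) : IsGap L (gapIm x P) := by
  refine ⟨?_, ?_, ?_⟩
  · rintro J ⟨I, hI, rfl⟩
    exact hinv x hx I (hP.1 hI)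
  · rintro J ⟨I, hI, rfl⟩ J' ⟨I', hI', rfl⟩ hne
    have hII' : I ≠ I' := fun h => hne (by rw [h])
    rw [← Set.image_inter x.injective, hP.2.1 I hI I' hI' hII', Set.image_empty]
  · intro K hK
    obtain ⟨J, hJ, hlies⟩ := hP.2.2 (⇑x⁻¹ '' K) (hinv x⁻¹ (inv_mem hx) K hK)
    refine ⟨⇑x '' J, ⟨J, hJ, rfl⟩, ?_⟩
    rcases hlies with hsub | hsub
    · left
      have := Set.image_mono (f := ⇑x) hsub
      rwa [image_inv_image] at this
    · right
      have := Set.image_mono (f := ⇑x) hsub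
      rwa [dual_image, image_inv_image] at this

end

noncomputable section
open CircArc

section Structural

variable {G : Subgroup (Circle ≃ₜ Circle)} {L P : Set (Set Circle)}

/-- Key unlinking lemma: if `gapIm x P ≠ P`, some interval of `gapIm x P` has complement
inside the closure of an interval of `P`. -/
lemma exists_side (hL : LamSys L) (hinv : GInv G L) (hP : IsGap L P)
    {x : Circle ≃ₜ Circle} (hx : x ∈ G) (hne : gapIm x P ≠ P) :
    ∃ I ∈ P, ∃ B ∈ P, (⇑x '' B)ᶜ ⊆ closure I := by
  have hQ : IsGap L (gapIm x P) := isGap_gapIm hL hinv hP hx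
  by_cases hcase1 : ∃ I ∈ P, ∃ J ∈ gapIm x P, dual I ⊆ J
  · obtain ⟨I, hI, J, hJ, hsub⟩ := hcase1
    obtain ⟨B, hB, rfl⟩ := hJ
    refine ⟨I, hI, B, hB, ?_⟩
    calc (⇑x '' B)ᶜ ⊆ (dual I)ᶜ := Set.compl_subset_compl.2 hsub
      _ = closure I := compl_dual_eq_closure
  by_cases hcase2 : ∃ J ∈ gapIm x P, ∃ I ∈ P, dual J ⊆ I
  · obtain ⟨J, hJ, I, hI, hsub⟩ := hcase2
    obtain ⟨B, hB, rfl⟩ := hJ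
    refine ⟨I, hI, B, hB, ?_⟩
    have hndJ : IsND (⇑x '' B) := nd_of_mem_gap hL hQ ⟨B, hB, rfl⟩
    rw [hndJ.compl_eq_closure_dual]
    exact closure_mono hsub
  -- remaining case: mutual containment, hence P = gapIm x P, contradiction
  exfalso
  apply hne
  have h1 : ∀ I ∈ P, ∃ J ∈ gapIm x P, I ⊆ J := by
    intro I hI
    obtain ⟨J, hJ, hlies⟩ := hQ.2.2 I (hP.1 hI)
    rcases hlies with hs | hs
    · exact ⟨J, hJ, hs⟩
    · exact absurd ⟨I, hI, J, hJ, hs⟩ hcase1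
  have h2 : ∀ J ∈ gapIm x P, ∃ I ∈ P, J ⊆ I := by
    intro J hJ
    obtain ⟨I, hI, hlies⟩ := hP.2.2 J (hQ.1 hJ)
    rcases hlies with hs | hs
    · exact ⟨I, hI, hs⟩
    · exact absurd ⟨J, hJ, I, hI, hs⟩ hcase2
  have key : ∀ (A B : Set (Set Circle)), IsGap L A → IsGap L B →
      (∀ I ∈ A, ∃ J ∈ B, I ⊆ J) → (∀ J ∈ B, ∃ I ∈ A, J ⊆ I) → A ⊆ B := by
    intro A B hA hB hAB hBA I hI
    obtain ⟨J, hJ, hIJ⟩ := hAB I hI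
    obtain ⟨I', hI', hJI'⟩ := hBA J hJ
    have hII' : I = I' := by
      by_contra hne'
      have hd := hA.2.1 I hI I' hI' hne'
      obtain ⟨p, hp⟩ := (nd_of_mem_gap hL hA hI).nonempty
      have : p ∈ I ∩ I' := ⟨hp, hJI' (hIJ hp)⟩
      rw [hd] at this
      exact this
    have : I = J := le_antisymm hIJ (hII' ▸ hJI')
    exact this ▸ hJ
  exact le_antisymm (key _ _ hQ hP h2 h1) (key _ _ hP hQ h1 h2)

/-- If a gap with finite vertex set consists of exactly two intervals, it is a leaf. -/
lemma two_case (hL : LamSys L) (hP : IsGap L P) (hfin : (vset P).Finite)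
    {I J : Set Circle} (hIJ : I ≠ J) (hPeq : P = {I, J}) : P = leafOf I := by
  have hIP : I ∈ P := by rw [hPeq]; exact Or.inl rfl
  have hJP : J ∈ P := by rw [hPeq]; exact Or.inr rfl
  obtain ⟨u, v, huv, hIeq⟩ := nd_of_mem_gap hL hP hIP
  have hndJ := nd_of_mem_gap hL hP hJP
  have hdisj : J ∩ I = ∅ := hP.2.1 J hJP I hIP (Ne.symm hIJ)
  -- J ⊆ Wd u v
  have hJW : J ⊆ Wd u v := by
    intro p hp
    have hpcl : p ∉ closure I := by
      intro hc
      have hq : p ∈ J ∩ closure I := ⟨hp, hc⟩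
      rw [open_disj_closure hndJ.isOpen hdisj] at hq
      exact hq
    rw [hIeq, closure_oInt huv] at hpcl
    have hp1 : p ∉ oInt u v := fun h => hpcl (Or.inl h)
    have hp2 : p ∉ ({u, v} : Set Circle) := fun h => hpcl (Or.inr h)
    have : p ∈ (oInt u v)ᶜ := hp1
    rw [compl_oInt huv] at this
    rcases this with h | h
    · exact h
    · exact absurd h hp2
  -- vset P = (I ∪ J)ᶜ
  have hvset : vset P = (I ∪ J)ᶜ := by
    unfold vset
    rw [hPeq, Set.sUnion_pair]
  set c := sproj (u⁻¹ * v) with hc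
  set O := {t : ℝ | karc u t ∈ J} with hO
  have hOopen : IsOpen O := hndJ.isOpen.preimage (continuous_karc u)
  have hOsub : O ⊆ Set.Ioi c := by
    intro t ht
    have h := (hJW ht).2
    rw [sproj_karc] at h
    exact h
  have hfin2 : (Set.Ioi c \ O).Finite := by
    have hsub : Set.Ioi c \ O ⊆ karc u ⁻¹' (Wd u v \ J) := by
      intro t ⟨ht1, ht2⟩
      refine ⟨?_, ht2⟩
      rw [Wd_image]
      exact ⟨t, ht1, rfl⟩
    apply Set.Finite.subset _ hsub
    apply Set.Finite.preimage (Set.injOn_of_injective (karc_inj u))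
    apply hfin.subset
    rw [hvset]
    intro p ⟨hp1, hp2⟩
    simp only [Set.mem_compl_iff, Set.mem_union]
    push_neg
    refine ⟨?_, hp2⟩
    intro hpI
    rw [hIeq] at hpI
    rw [hIeq, oInt_eq huv] at *
    exact absurd hpI.2 (by simpa using (le_of_lt hp1.2).not_gt)
  have hOconn : IsPreconnected O := by
    have hOim : O = (fun p => sproj (u⁻¹ * p)) '' J := by
      ext t
      constructor
      · intro ht
        exact ⟨karc u t, ht, sproj_karc u t⟩
      · rintro ⟨p, hp, rfl⟩
        show karc u (sproj (u⁻¹ * p)) ∈ J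
        rwa [karc_sproj (hJW hp).1]
    rw [hOim]
    apply hndJ.preconnected.image
    apply ContinuousOn.comp (t := {z : Circle | z ≠ 1}) continuousOn_sproj
    · exact (continuous_const.mul continuous_id).continuousOn
    · intro p hp
      exact inv_mul_ne_one (hJW hp).1
  have hOne : O.Nonempty := by
    obtain ⟨p, hp⟩ := hndJ.nonempty
    exact ⟨sproj (u⁻¹ * p), by
      show karc u (sproj (u⁻¹ * p)) ∈ J
      rwa [karc_sproj (hJW hp).1]⟩
  have hOeq : O = Set.Ioi c := by
    by_contra hne
    obtain ⟨s, hs1, hs2⟩ : ∃ s, s ∈ Set.Ioi c ∧ s ∉ O := by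
      by_contra hc2
      push_neg at hc2
      exact hne (le_antisymm hOsub hc2)
    have hord : O.OrdConnected := hOconn.ordConnected
    by_cases h1 : ∃ o ∈ O, s < o
    · by_cases h2 : ∃ o ∈ O, o < s
      · obtain ⟨o1, ho1, hso1⟩ := h1
        obtain ⟨o2, ho2, ho2s⟩ := h2
        exact hs2 (hord.out ho2 ho1 ⟨le_of_lt ho2s, le_of_lt hso1⟩)
      · push_neg at h2
        have : Set.Ioo c s ⊆ Set.Ioi c \ O := by
          intro q ⟨hq1, hq2⟩
          exact ⟨hq1, fun hqO => absurd hq2 (h2 q hqO).not_gt⟩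
        exact (Set.Ioo_infinite hs1) (hfin2.subset this)
    · push_neg at h1
      have : Set.Ioi s ⊆ Set.Ioi c \ O := by
        intro q hq
        refine ⟨Set.mem_Ioi.2 (lt_trans hs1 hq), fun hqO => absurd hq (h1 q hqO).not_gt⟩
      exact (Set.Ioi_infinite s) (hfin2.subset this)
  have hJeq : J = dual I := by
    rw [hIeq, dual_oInt huv, Wd_image, ← hc, ← hOeq]
    ext p
    constructor
    · intro hp
      exact ⟨sproj (u⁻¹ * p), by
        show karc u (sproj (u⁻¹ * p)) ∈ J
        rwa [karc_sproj (hJW hp).1], karc_sproj (hJW hp).1⟩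
    · rintro ⟨t, ht, rfl⟩
      exact ht
  rw [hPeq, hJeq, leafOf]

/-- A non-leaf ideal polygon has three distinct intervals. -/
lemma three_intervals (hL : LamSys L) (hP : IsGap L P) (hfin : (vset P).Finite)
    (hnl : ¬ IsLeafGap P) :
    ∃ I₁ I₂ I₃, I₁ ∈ P ∧ I₂ ∈ P ∧ I₃ ∈ P ∧ I₁ ≠ I₂ ∧ I₁ ≠ I₃ ∧ I₂ ≠ I₃ := by
  obtain ⟨K, hK⟩ := hL.nonempty
  obtain ⟨I₁, hI₁, -⟩ := hP.2.2 K hK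
  have h2 : ∃ I₂ ∈ P, I₂ ≠ I₁ := by
    by_contra hc
    push_neg at hc
    have hPeq : P = {I₁} := le_antisymm hc (by rintro I rfl; exact hI₁)
    obtain ⟨u, v, huv, hIeq⟩ := nd_of_mem_gap hL hP hI₁
    have : vset P = I₁ᶜ := by
      unfold vset
      rw [hPeq, Set.sUnion_singleton]
    have hinf : (vset P).Infinite := by
      rw [this, hIeq, compl_oInt huv]
      exact fun hf => (infinite_Wd (v := v)) (hf.subset Set.subset_union_left)
    exact hinf hfin
  obtain ⟨I₂, hI₂, hI₂ne⟩ := h2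
  have h3 : ∃ I₃ ∈ P, I₃ ≠ I₁ ∧ I₃ ≠ I₂ := by
    by_contra hc
    push_neg at hc
    have hPeq : P = {I₁, I₂} := by
      apply le_antisymm
      · intro I hI
        rcases eq_or_ne I I₁ with h | h
        · exact Or.inl h
        · exact Or.inr (hc I hI h)
      · rintro I (rfl | rfl)
        · exact hI₁
        · exact hI₂
    exact hnl ⟨I₁, two_case hL hP hfin hI₂ne.symm hPeq⟩
  obtain ⟨I₃, hI₃, hI₃1, hI₃2⟩ := h3
  exact ⟨I₁, I₂, I₃, hI₁, hI₂, hI₃, hI₂ne.symm, hI₃1.symm, hI₃2.symm⟩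

/-- A non-leaf ideal polygon has three distinct vertices. -/
lemma three_vertices (hL : LamSys L) (hP : IsGap L P) (hfin : (vset P).Finite)
    (hnl : ¬ IsLeafGap P) :
    ∃ p₁ p₂ p₃, p₁ ∈ vset P ∧ p₂ ∈ vset P ∧ p₃ ∈ vset P ∧ p₁ ≠ p₂ ∧ p₁ ≠ p₃ ∧ p₂ ≠ p₃ := by
  obtain ⟨I₁, I₂, I₃, hI₁, hI₂, hI₃, h12, h13, h23⟩ := three_intervals hL hP hfin hnl
  obtain ⟨u₁, v₁, huv₁, hf₁⟩ := (nd_of_mem_gap hL hP hI₁).frontier_pair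
  have hfr : ∀ I ∈ P, frontier I ⊆ vset P := fun I hI => frontier_subset_vset hL hP hI
  by_cases hw : ∃ I ∈ P, ∃ w ∈ frontier I, w ∉ ({u₁, v₁} : Set Circle)
  · obtain ⟨I, hI, w, hwI, hw2⟩ := hw
    refine ⟨u₁, v₁, w, hfr I₁ hI₁ (hf₁ ▸ Or.inl rfl), hfr I₁ hI₁ (hf₁ ▸ Or.inr rfl),
      hfr I hI hwI, huv₁, ?_, ?_⟩
    · intro h; exact hw2 (Or.inl h.symm)
    · intro h; exact hw2 (Or.inr h.symm)
  · push_neg at hw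
    exfalso
    -- every interval among I₁ I₂ I₃ equals oInt u₁ v₁ or oInt v₁ u₁
    have hkey : ∀ I ∈ P, I = oInt u₁ v₁ ∨ I = oInt v₁ u₁ := by
      intro I hI
      obtain ⟨a, b, hab, hIeq⟩ := nd_of_mem_gap hL hP hI
      have hfrI : frontier I = {a, b} := by rw [hIeq]; exact frontier_oInt hab
      have ha : a ∈ ({u₁, v₁} : Set Circle) := hw I hI a (hfrI ▸ Or.inl rfl)
      have hb : b ∈ ({u₁, v₁} : Set Circle) := hw I hI b (hfrI ▸ Or.inr rfl)
      rcases ha with rfl | rfl <;> rcases hb with rfl | rfl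
      · exact absurd rfl hab
      · exact Or.inl hIeq
      · exact Or.inr hIeq
      · exact absurd rfl hab
    rcases hkey I₁ hI₁ with h1 | h1 <;> rcases hkey I₂ hI₂ with h2 | h2 <;>
      rcases hkey I₃ hI₃ with h3 | h3 <;>
      first
        | exact h12 (h1.trans h2.symm)
        | exact h13 (h1.trans h3.symm)
        | exact h23 (h2.trans h3.symm)

end Structural
end
/-- If a `G`-invariant lamination system has a non-leaf ideal polygon `P` with `v_G(P)`
dense in `S¹`, then `G` is not abelian. -/
theorem stmt17 (G : Subgroup (Circle ≃ₜ Circle)) (hor : ∀ g ∈ G, OrientPres g)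
    (L : Set (Set Circle)) (hL : LamSys L) (hinv : GInv G L)
    (P : Set (Set Circle)) (hP : IsGap L P) (hfin : (vset P).Finite) (hnl : ¬ IsLeafGap P)
    (hdense : Dense (vOrb G P)) :
    ¬ ∀ a ∈ G, ∀ b ∈ G, a * b = b * a := by
  intro habel
  obtain ⟨p₁, p₂, p₃, hp₁, hp₂, hp₃, h12, h13, h23⟩ := three_vertices hL hP hfin hnl
  obtain ⟨I₁, I₂, I₃, hI₁, hI₂, hI₃, hI12, hI13, hI23⟩ := three_intervals hL hP hfin hnl
  set V := vset P with hV
  -- no three distinct points lie in the closures of two distinct intervals of `P`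
  have hno3 : ∀ I J : Set Circle, I ∈ P → J ∈ P → I ≠ J →
      ∀ S : Set Circle, S ⊆ closure I → S ⊆ closure J →
      ∀ q₁ q₂ q₃, q₁ ∈ S → q₂ ∈ S → q₃ ∈ S → q₁ ≠ q₂ → q₁ ≠ q₃ → q₂ ≠ q₃ → False := by
    intro I J hI hJ hIJ S hSI hSJ q₁ q₂ q₃ hq₁ hq₂ hq₃ h₁₂ h₁₃ h₂₃
    obtain ⟨a, b, hab, hfr⟩ := (nd_of_mem_gap hL hP hI).frontier_pair
    have hsub : S ⊆ {a, b} := fun z hz =>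
      hfr ▸ (closure_inter_closure hL hP hI hJ hIJ ⟨hSI hz, hSJ hz⟩)
    exact not_three_in_pair hsub hq₁ hq₂ hq₃ h₁₂ h₁₃ h₂₃
  have himg3 : ∀ f : Circle → Circle, Function.Injective f →
      ∀ I J : Set Circle, I ∈ P → J ∈ P → I ≠ J →
      f '' V ⊆ closure I → f '' V ⊆ closure J → False := by
    intro f hf I J hI hJ hIJ hfI hfJ
    exact hno3 I J hI hJ hIJ (f '' V) hfI hfJ (f p₁) (f p₂) (f p₃)
      ⟨p₁, hp₁, rfl⟩ ⟨p₂, hp₂, rfl⟩ ⟨p₃, hp₃, rfl⟩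
      (fun h => h12 (hf h)) (fun h => h13 (hf h)) (fun h => h23 (hf h))
  -- choice of side data
  have hkey : ∀ x : Circle ≃ₜ Circle, x ∈ G → gapIm x P ≠ P →
      ∃ I, I ∈ P ∧ ∃ B, B ∈ P ∧ (⇑x '' B)ᶜ ⊆ closure I := by
    intro x hx hne
    obtain ⟨I, hI, B, hB, h⟩ := exists_side hL hinv hP hx hne
    exact ⟨I, hI, B, hB, h⟩
  choose iOf hiOfP bOf hbOfP hside using hkey
  have hD1 : ∀ (x : Circle ≃ₜ Circle) (hx : x ∈ G) (hne : gapIm x P ≠ P), ⇑x '' V ⊆ closure (iOf x hx hne) := by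
    intro x hx hne
    have h1 : V ⊆ (bOf x hx hne)ᶜ := by
      intro p hp hc
      have hd := vset_disj (hbOfP x hx hne)
      rw [Set.eq_empty_iff_forall_notMem] at hd
      exact hd p ⟨hp, hc⟩
    calc ⇑x '' V ⊆ ⇑x '' (bOf x hx hne)ᶜ := Set.image_mono h1
      _ = (⇑x '' bOf x hx hne)ᶜ := Set.image_compl_eq x.bijective
      _ ⊆ closure (iOf x hx hne) := hside x hx hne
  have hD2 : ∀ (x : Circle ≃ₜ Circle) (hx : x ∈ G) (hne : gapIm x P ≠ P), ∀ K, K ∈ P → K ≠ bOf x hx hne →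
      ⇑x '' closure K ⊆ closure (iOf x hx hne) := by
    intro x hx hne K hK hKb
    have hdisjKB : K ∩ bOf x hx hne = ∅ := hP.2.1 K hK _ (hbOfP x hx hne) hKb
    have h1 : ⇑x '' K ⊆ (⇑x '' bOf x hx hne)ᶜ := by
      rintro p ⟨q, hq, rfl⟩ ⟨q', hq', hqq⟩
      have hqe : q' = q := x.injective hqq
      rw [Set.eq_empty_iff_forall_notMem] at hdisjKB
      exact hdisjKB q ⟨hq, hqe ▸ hq'⟩
    have h2 : IsOpen (⇑x '' bOf x hx hne) :=
      x.isOpen_image.2 (nd_of_mem_gap hL hP (hbOfP x hx hne)).isOpen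
    calc ⇑x '' closure K = closure (⇑x '' K) := x.image_closure K
      _ ⊆ closure ((⇑x '' bOf x hx hne)ᶜ) := closure_mono h1
      _ = (⇑x '' bOf x hx hne)ᶜ := h2.isClosed_compl.closure_eq
      _ ⊆ closure (iOf x hx hne) := hside x hx hne
  have hD3 : ∀ (x : Circle ≃ₜ Circle) (hx : x ∈ G) (hne : gapIm x P ≠ P), ∀ I, I ∈ P → ⇑x '' V ⊆ closure I → iOf x hx hne = I := by
    intro x hx hne I hI hsub
    by_contra hne'
    exact himg3 (⇑x) x.injective _ I (hiOfP x hx hne) hI hne' (hD1 x hx hne) hsub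
  have hVout : ∀ I ∈ P, ∃ p ∈ V, p ∉ closure I := by
    intro I hI
    by_contra hc
    push_neg at hc
    obtain ⟨a, b, hab, hfr⟩ := (nd_of_mem_gap hL hP hI).frontier_pair
    have hsub : ∀ p ∈ V, p ∈ ({a, b} : Set Circle) := by
      intro p hp
      have hcl := hc p hp
      rw [(nd_of_mem_gap hL hP hI).closure_eq] at hcl
      rcases hcl with h | h
      · exfalso
        have hd := vset_disj hI
        rw [Set.eq_empty_iff_forall_notMem] at hd
        exact hd p ⟨hp, h⟩
      · exact hfr ▸ h
    exact not_three_in_pair (fun z hz => hsub z hz) hp₁ hp₂ hp₃ h12 h13 h23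
  have hnotstab : ∀ w : Circle ≃ₜ Circle, ∀ I ∈ P, ⇑w '' V ⊆ closure I → gapIm w P ≠ P := by
    intro w I hI hsub hc
    have hVeq : ⇑w '' V = V := by rw [hV, ← vset_gapIm, hc]
    rw [hVeq] at hsub
    obtain ⟨p, hp, hpn⟩ := hVout I hI
    exact hpn (hsub hp)
  have hS : ∀ I ∈ P, ∃ x : Circle ≃ₜ Circle, ∃ hx : x ∈ G, ∃ hne : gapIm x P ≠ P,
      iOf x hx hne = I := by
    intro I hI
    have hIop := (nd_of_mem_gap hL hP hI).isOpen
    have hIne := (nd_of_mem_gap hL hP hI).nonempty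
    obtain ⟨p, hpv, hpI⟩ := hdense.exists_mem_open hIop hIne
    simp only [vOrb, Set.mem_iUnion] at hpv
    obtain ⟨x, hx, hpx⟩ := hpv
    rw [vset_gapIm] at hpx
    have hne : gapIm x P ≠ P := by
      intro hc
      have hVeq : (⇑x '' V) = V := by rw [hV, ← vset_gapIm, hc]
      rw [hVeq] at hpx
      have hd := vset_disj hI
      rw [Set.eq_empty_iff_forall_notMem] at hd
      exact hd p ⟨hpx, hpI⟩
    refine ⟨x, hx, hne, ?_⟩
    by_contra hne'
    have h1 : p ∈ closure (iOf x hx hne) := hD1 x hx hne hpx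
    have hd := sep_closure hL hP hI (hiOfP x hx hne) (Ne.symm hne')
    rw [Set.eq_empty_iff_forall_notMem] at hd
    exact hd p ⟨hpI, h1⟩
  have hinD : ∀ x : Circle ≃ₜ Circle, gapIm x P ≠ P → gapIm x⁻¹ P ≠ P :=
    fun x hne => gapIm_inv_ne hne
  have hLinv : ∀ (x : Circle ≃ₜ Circle) (hx : x ∈ G) (hne : gapIm x P ≠ P),
      iOf x⁻¹ (inv_mem hx) (hinD x hne) = bOf x hx hne := by
    intro x hx hne
    obtain ⟨p, hpV, hpout⟩ := hVout (iOf x hx hne) (hiOfP x hx hne)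
    have hpB : p ∈ ⇑x '' bOf x hx hne := by
      by_contra hc
      exact hpout (hside x hx hne hc)
    obtain ⟨q, hqB, rfl⟩ := hpB
    have hq2 : q ∈ ⇑x⁻¹ '' V := ⟨x q, hpV, x.symm_apply_apply q⟩
    have hq3 : q ∈ closure (iOf x⁻¹ (inv_mem hx) (hinD x hne)) :=
      hD1 x⁻¹ (inv_mem hx) (hinD x hne) hq2
    by_contra hne'
    have hd := sep_closure hL hP (hbOfP x hx hne)
      (hiOfP x⁻¹ (inv_mem hx) (hinD x hne)) (fun h => hne' h.symm)
    rw [Set.eq_empty_iff_forall_notMem] at hd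
    exact hd q ⟨hqB, hq3⟩
  have hC : ∀ (x : Circle ≃ₜ Circle) (hx : x ∈ G) (hnex : gapIm x P ≠ P) (y : Circle ≃ₜ Circle) (hy : y ∈ G) (hney : gapIm y P ≠ P), iOf x hx hnex ≠ iOf y hy hney →
      bOf x hx hnex = iOf y hy hney ∨ bOf y hy hney = iOf x hx hnex := by
    intro x hx hnex y hy hney hii
    by_contra hc
    push_neg at hc
    obtain ⟨hbx, hby⟩ := hc
    have h1 : ⇑(x*y) '' V ⊆ closure (iOf x hx hnex) := by
      rw [image_mul_homeo]
      calc ⇑x '' (⇑y '' V) ⊆ ⇑x '' closure (iOf y hy hney) :=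
            Set.image_mono (hD1 y hy hney)
        _ ⊆ closure (iOf x hx hnex) :=
            hD2 x hx hnex _ (hiOfP y hy hney) (fun h => hbx h.symm)
    have h2 : ⇑(x*y) '' V ⊆ closure (iOf y hy hney) := by
      rw [habel x hx y hy, image_mul_homeo]
      calc ⇑y '' (⇑x '' V) ⊆ ⇑y '' closure (iOf x hx hnex) :=
            Set.image_mono (hD1 x hx hnex)
        _ ⊆ closure (iOf y hy hney) :=
            hD2 y hy hney _ (hiOfP x hx hnex) (fun h => hby h.symm)
    exact himg3 (⇑(x*y)) (x*y).injective _ _ (hiOfP x hx hnex) (hiOfP y hy hney) hii h1 h2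
  -- the core lemma for the exactly-three-intervals case
  have coreB : ∀ A B C : Set Circle, A ∈ P → B ∈ P → C ∈ P → A ≠ B → A ≠ C → B ≠ C →
      ∀ x hx hnex, iOf x hx hnex = A → bOf x hx hnex = B → False := by
    intro A B C hA hB hC' hAB hAC hBC x hx hnex hiA hbB
    obtain ⟨y₀, hy₀, hney₀, hiy₀⟩ := hS C hC'
    have hby₀ : bOf y₀ hy₀ hney₀ = A := by
      rcases hC x hx hnex y₀ hy₀ hney₀ (by rw [hiA, hiy₀]; exact hAC) with h | h
      · rw [hbB, hiy₀] at h; exact (hBC h).elim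
      · rw [hiA] at h; exact h
    obtain ⟨z₀, hz₀, hnez₀, hiz₀⟩ := hS B hB
    have hbz₀ : bOf z₀ hz₀ hnez₀ = C := by
      rcases hC y₀ hy₀ hney₀ z₀ hz₀ hnez₀ (by rw [hiy₀, hiz₀]; exact hBC.symm) with h | h
      · rw [hby₀, hiz₀] at h; exact (hAB h).elim
      · rw [hiy₀] at h; exact h
    have hx2 : ∀ (x' : Circle ≃ₜ Circle) (hx' : x' ∈ G) (hnex' : gapIm x' P ≠ P), iOf x' hx' hnex' = A → bOf x' hx' hnex' = B := by
      intro x' hx' hnex' hiA'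
      rcases hC x' hx' hnex' z₀ hz₀ hnez₀ (by rw [hiA', hiz₀]; exact hAB) with h | h
      · rw [hiz₀] at h; exact h
      · rw [hbz₀, hiA'] at h; exact (hAC h.symm).elim
    -- w := x * y₀
    have hwG : x * y₀ ∈ G := mul_mem hx hy₀
    have hwV : ⇑(x * y₀) '' V ⊆ closure A := by
      rw [image_mul_homeo]
      calc ⇑x '' (⇑y₀ '' V) ⊆ ⇑x '' closure C :=
            Set.image_mono (hiy₀ ▸ hD1 y₀ hy₀ hney₀)
        _ ⊆ closure A := hiA ▸ hD2 x hx hnex C hC' (by rw [hbB]; exact hBC.symm)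
    have hnew : gapIm (x * y₀) P ≠ P := hnotstab (x * y₀) A hA hwV
    have hiw : iOf (x * y₀) hwG hnew = A := hD3 (x * y₀) hwG hnew A hA hwV
    have hbw : bOf (x * y₀) hwG hnew = B := hx2 (x * y₀) hwG hnew hiw
    -- first estimate for (x*y₀)⁻¹
    have hinvw : ⇑(x * y₀)⁻¹ '' V ⊆ closure B := by
      have h := hD1 (x * y₀)⁻¹ (inv_mem hwG) (hinD (x * y₀) hnew)
      rw [hLinv (x * y₀) hwG hnew, hbw] at h
      exact h
    -- second estimate
    have hbyinv : bOf y₀⁻¹ (inv_mem hy₀) (hinD y₀ hney₀) ≠ B := by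
      intro hBeq
      have h4 := hLinv y₀⁻¹ (inv_mem hy₀) (hinD y₀ hney₀)
      have h5 := hD1 (y₀⁻¹)⁻¹ (inv_mem (inv_mem hy₀)) (hinD y₀⁻¹ (hinD y₀ hney₀))
      rw [h4, hBeq] at h5
      have hcoe : ⇑((y₀⁻¹)⁻¹ : Circle ≃ₜ Circle) = ⇑y₀ := by rw [inv_inv]
      rw [hcoe] at h5
      have h6 : ⇑y₀ '' V ⊆ closure C := hiy₀ ▸ hD1 y₀ hy₀ hney₀
      exact himg3 (⇑y₀) y₀.injective B C hB hC' hBC h5 h6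
    have hxinv : ⇑x⁻¹ '' V ⊆ closure B := by
      have h := hD1 x⁻¹ (inv_mem hx) (hinD x hnex)
      rw [hLinv x hx hnex, hbB] at h
      exact h
    have hinvw2 : ⇑(x * y₀)⁻¹ '' V ⊆ closure A := by
      have hco : ⇑(x * y₀)⁻¹ '' V = ⇑y₀⁻¹ '' (⇑x⁻¹ '' V) := by
        rw [mul_inv_rev, image_mul_homeo]
      rw [hco]
      calc ⇑y₀⁻¹ '' (⇑x⁻¹ '' V) ⊆ ⇑y₀⁻¹ '' closure B := Set.image_mono hxinv
        _ ⊆ closure (iOf y₀⁻¹ (inv_mem hy₀) (hinD y₀ hney₀)) :=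
            hD2 y₀⁻¹ (inv_mem hy₀) (hinD y₀ hney₀) B hB (Ne.symm hbyinv)
        _ = closure A := by rw [hLinv y₀ hy₀ hney₀, hby₀]
    exact himg3 (⇑(x * y₀)⁻¹) ((x * y₀)⁻¹).injective A B hA hB hAB hinvw2 hinvw
  -- main case analysis
  by_cases hex4 : ∃ I₄ ∈ P, I₄ ≠ I₁ ∧ I₄ ≠ I₂ ∧ I₄ ≠ I₃
  · obtain ⟨I₄, hI₄, h41, h42, h43⟩ := hex4
    obtain ⟨x, hx, hnex, hix⟩ := hS I₁ hI₁
    obtain ⟨Ja, Jb, hJa, hJb, hJane1, hJbne1, hJaJb, hJam, hJbm⟩ :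
        ∃ Ja Jb : Set Circle, Ja ∈ P ∧ Jb ∈ P ∧ Ja ≠ I₁ ∧ Jb ≠ I₁ ∧ Ja ≠ Jb ∧
          Ja ≠ bOf x hx hnex ∧ Jb ≠ bOf x hx hnex := by
      by_cases hm2 : bOf x hx hnex = I₂
      · exact ⟨I₃, I₄, hI₃, hI₄, hI13.symm, h41, fun h => h43 h.symm,
          by rw [hm2]; exact hI23.symm, by rw [hm2]; exact h42⟩
      by_cases hm3 : bOf x hx hnex = I₃
      · exact ⟨I₂, I₄, hI₂, hI₄, hI12.symm, h41, fun h => h42 h.symm,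
          by rw [hm3]; exact hI23, by rw [hm3]; exact h43⟩
      · exact ⟨I₂, I₃, hI₂, hI₃, hI12.symm, hI13.symm, hI23,
          fun h => hm2 h.symm, fun h => hm3 h.symm⟩
    obtain ⟨y, hy, hney, hiy⟩ := hS Ja hJa
    obtain ⟨y', hy', hney', hiy'⟩ := hS Jb hJb
    have hby : bOf y hy hney = I₁ := by
      rcases hC x hx hnex y hy hney (by rw [hix, hiy]; exact fun h => hJane1 h.symm)
        with h | h
      · rw [hiy] at h; exact (hJam h.symm).elim
      · rw [hix] at h; exact h
    have hby' : bOf y' hy' hney' = I₁ := by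
      rcases hC x hx hnex y' hy' hney' (by rw [hix, hiy']; exact fun h => hJbne1 h.symm)
        with h | h
      · rw [hiy'] at h; exact (hJbm h.symm).elim
      · rw [hix] at h; exact h
    rcases hC y hy hney y' hy' hney' (by rw [hiy, hiy']; exact hJaJb) with h | h
    · rw [hby, hiy'] at h; exact hJbne1 h.symm
    · rw [hby', hiy] at h; exact hJane1 h.symm
  · push_neg at hex4
    obtain ⟨x, hx, hnex, hix⟩ := hS I₁ hI₁
    have hball : bOf x hx hnex = I₁ ∨ bOf x hx hnex = I₂ ∨ bOf x hx hnex = I₃ := by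
      by_contra hcc
      push_neg at hcc
      exact hcc.2.2 (hex4 _ (hbOfP x hx hnex) hcc.1 hcc.2.1)
    rcases hball with hb1 | hb2 | hb3
    · obtain ⟨y, hy, hney, hiy⟩ := hS I₂ hI₂
      obtain ⟨y', hy', hney', hiy'⟩ := hS I₃ hI₃
      have hby : bOf y hy hney = I₁ := by
        rcases hC x hx hnex y hy hney (by rw [hix, hiy]; exact hI12) with h | h
        · rw [hb1, hiy] at h; exact (hI12 h).elim
        · rw [hix] at h; exact h
      have hby' : bOf y' hy' hney' = I₁ := by
        rcases hC x hx hnex y' hy' hney' (by rw [hix, hiy']; exact hI13) with h | h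
        · rw [hb1, hiy'] at h; exact (hI13 h).elim
        · rw [hix] at h; exact h
      rcases hC y hy hney y' hy' hney' (by rw [hiy, hiy']; exact hI23) with h | h
      · rw [hby, hiy'] at h; exact hI13 h
      · rw [hby', hiy] at h; exact hI12 h
    · exact coreB I₁ I₂ I₃ hI₁ hI₂ hI₃ hI12 hI13 hI23 x hx hnex hix hb2
    · exact coreB I₁ I₃ I₂ hI₁ hI₃ hI₂ hI13 hI12 hI23.symm x hx hnex hix hb3
end
end
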